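/- arXiv:1407.5649 — 8 statements merged into one kernel-verified Lean document; each statement's English description precedes it below -/
import Mathlib

section
/- Let Ω be a finite nonempty set, r : Ω → ℝ, φ : Δ(Ω) → Δ(Ω) affine continuous, and δ ∈ [0,1). If V₁ and V₂ are bounded functions from Δ(Ω) to ℝ that both satisfy the dynamic programming equation, then V₁ = V₂; i.e., the value function V_δ is characterized as the unique bounded solution of the dynamic programming equation. -/
open MeasureTheory Set

open scoped ENNReal

noncomputable section

variable {Ω : Type*}

/-- The investment region `I = {p ∈ Δ(Ω) : ⟨p,r⟩ ≥ 0}`. -/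
def invest [Fintype Ω] (r : Ω → ℝ) : Set (Ω → ℝ) :=
  {p | p ∈ stdSimplex ℝ Ω ∧ 0 ≤ ∑ ω, p ω * r ω}

/-- The set `S(p)` of splittings at `p`: Borel probability measures on `ℝ^Ω` carried by the
simplex `Δ(Ω)` with barycenter `p`. -/
def Splittings [Fintype Ω] (p : Ω → ℝ) : Set (Measure (Ω → ℝ)) :=
  {μ | IsProbabilityMeasure μ ∧ μ (stdSimplex ℝ Ω) = 1 ∧ ∫ q, q ∂μ = p}

/-- The payoff `(1−δ)·μ(I) + δ·∫ V(φ(q)) dμ(q)` appearing in the dynamic programming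
equation. -/
def dppPayoff [Fintype Ω] (r : Ω → ℝ) (δ : ℝ) (φ : (Ω → ℝ) → Ω → ℝ)
    (V : (Ω → ℝ) → ℝ) (μ : Measure (Ω → ℝ)) : ℝ :=
  (1 - δ) * (μ (invest r)).toReal + δ * ∫ q in stdSimplex ℝ Ω, V (φ q) ∂μ

/-- `V` satisfies the dynamic programming equation
`V(p) = sup_{μ ∈ S(p)} [(1−δ)·μ(I) + δ·∫ V(φ(q)) dμ(q)]` on the simplex. -/
def SatisfiesDPP [Fintype Ω] (r : Ω → ℝ) (δ : ℝ) (φ : (Ω → ℝ) → Ω → ℝ)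
    (V : (Ω → ℝ) → ℝ) : Prop :=
  ∀ p ∈ stdSimplex ℝ Ω, V p = sSup (dppPayoff r δ φ V '' Splittings p)

section Aux

variable [Fintype Ω]

lemma measurableSet_stdSimplex' : MeasurableSet (stdSimplex ℝ Ω) :=
  (isClosed_stdSimplex ℝ Ω).measurableSet

lemma measurableSet_invest (r : Ω → ℝ) : MeasurableSet (invest r) := by
  have h : invest r = stdSimplex ℝ Ω ∩ {p | 0 ≤ ∑ ω, p ω * r ω} := rfl
  rw [h]
  refine ((isClosed_stdSimplex ℝ Ω).measurableSet).inter ?_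
  have h2 : IsClosed {p : Ω → ℝ | 0 ≤ ∑ ω, p ω * r ω} :=
    isClosed_le continuous_const (by continuity)
  exact h2.measurableSet

lemma norm_le_one_of_mem_stdSimplex {x : Ω → ℝ} (hx : x ∈ stdSimplex ℝ Ω) : ‖x‖ ≤ 1 := by
  rw [pi_norm_le_iff_of_nonneg zero_le_one]
  intro ω
  rw [Real.norm_eq_abs, abs_le]
  constructor
  · linarith [hx.1 ω]
  · calc x ω ≤ ∑ ω', x ω' := Finset.single_le_sum (fun i _ => hx.1 i) (Finset.mem_univ ω)
    _ = 1 := hx.2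

/-- A finitely supported measure. -/
def finMeas {ι : Type} (t : Finset ι) (w : ι → ℝ) (z : ι → Ω → ℝ) : Measure (Ω → ℝ) :=
  ∑ i ∈ t, ENNReal.ofReal (w i) • Measure.dirac (z i)

variable {ι : Type} {t : Finset ι} {w : ι → ℝ} {z : ι → Ω → ℝ}

lemma finMeas_apply (s : Set (Ω → ℝ)) :
    finMeas t w z s = ∑ i ∈ t, ENNReal.ofReal (w i) * s.indicator 1 (z i) := by
  rw [finMeas, Measure.finset_sum_apply]
  congr 1
  ext i
  rw [Measure.smul_apply, Measure.dirac_apply, smul_eq_mul]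

lemma finMeas_integrable {E : Type*} [NormedAddCommGroup E] (f : (Ω → ℝ) → E) :
    Integrable f (finMeas t w z) := by
  rw [finMeas]
  rw [integrable_finset_sum_measure]
  intro i hi
  refine Integrable.smul_measure ?_ ENNReal.ofReal_ne_top
  have : f =ᵐ[Measure.dirac (z i)] (fun _ => f (z i)) := by
    rw [Filter.EventuallyEq, MeasureTheory.ae_dirac_eq]
    exact Filter.eventually_pure.mpr rfl
  exact (integrable_const (f (z i))).congr this.symm

lemma finMeas_integral {E : Type*} [NormedAddCommGroup E] [NormedSpace ℝ E] [CompleteSpace E]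
    (hw : ∀ i ∈ t, 0 ≤ w i) (f : (Ω → ℝ) → E) :
    ∫ x, f x ∂(finMeas t w z) = ∑ i ∈ t, w i • f (z i) := by
  rw [finMeas, integral_finset_sum_measure]
  · refine Finset.sum_congr rfl fun i hi => ?_
    rw [integral_smul_measure, integral_dirac, ENNReal.toReal_ofReal (hw i hi)]
  · intro i hi
    have h := @finMeas_integrable Ω _ ι {i} w z E _ f
    rwa [finMeas, Finset.sum_singleton] at h

lemma finMeas_restrict {s : Set (Ω → ℝ)} (hs : MeasurableSet s) (hz : ∀ i ∈ t, z i ∈ s) :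
    (finMeas t w z).restrict s = finMeas t w z := by
  refine Measure.ext fun u hu => ?_
  rw [Measure.restrict_apply hu, finMeas_apply, finMeas_apply]
  refine Finset.sum_congr rfl fun i hi => ?_
  congr 1
  by_cases h : z i ∈ u
  · rw [indicator_of_mem (mem_inter h (hz i hi)), indicator_of_mem h]
  · rw [indicator_of_notMem (fun hc => h hc.1), indicator_of_notMem h]

lemma finMeas_univ (hw : ∀ i ∈ t, 0 ≤ w i) (hw1 : ∑ i ∈ t, w i = 1) :
    finMeas t w z Set.univ = 1 := by
  rw [finMeas_apply]
  have h1 : ∀ i ∈ t, ENNReal.ofReal (w i) * Set.univ.indicator 1 (z i) = ENNReal.ofReal (w i) := by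
    intro i hi; simp
  rw [Finset.sum_congr rfl h1, ← ENNReal.ofReal_sum_of_nonneg hw, hw1, ENNReal.ofReal_one]

lemma finMeas_mem_splittings {p : Ω → ℝ} (hw : ∀ i ∈ t, 0 ≤ w i) (hw1 : ∑ i ∈ t, w i = 1)
    (hz : ∀ i ∈ t, z i ∈ stdSimplex ℝ Ω) (hp : ∑ i ∈ t, w i • z i = p) :
    finMeas t w z ∈ Splittings p := by
  have hprob : IsProbabilityMeasure (finMeas t w z) := ⟨finMeas_univ hw hw1⟩
  refine ⟨hprob, ?_, ?_⟩
  · rw [finMeas_apply]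
    have h1 : ∀ i ∈ t, ENNReal.ofReal (w i) * (stdSimplex ℝ Ω).indicator 1 (z i)
        = ENNReal.ofReal (w i) := by
      intro i hi; rw [indicator_of_mem (hz i hi)]; simp
    rw [Finset.sum_congr rfl h1, ← ENNReal.ofReal_sum_of_nonneg hw, hw1, ENNReal.ofReal_one]
  · exact (finMeas_integral hw fun q => q).trans hp

lemma toReal_finMeas (hw : ∀ i ∈ t, 0 ≤ w i) (s : Set (Ω → ℝ)) :
    (finMeas t w z s).toReal = ∑ i ∈ t, w i * s.indicator 1 (z i) := by
  rw [finMeas_apply, ENNReal.toReal_sum (fun i hi => (ENNReal.mul_lt_top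
    ENNReal.ofReal_lt_top (lt_of_le_of_lt (by by_cases h : z i ∈ s <;>
      simp [indicator, h]) (by norm_num : (1:ℝ≥0∞) < ⊤))).ne)]
  refine Finset.sum_congr rfl fun i hi => ?_
  rw [ENNReal.toReal_mul, ENNReal.toReal_ofReal (hw i hi)]
  congr 1
  by_cases h : z i ∈ s <;> simp [indicator, h]

lemma dppPayoff_finMeas (r : Ω → ℝ) (δ : ℝ) (φ : (Ω → ℝ) → Ω → ℝ) (V : (Ω → ℝ) → ℝ)
    (hw : ∀ i ∈ t, 0 ≤ w i) (hz : ∀ i ∈ t, z i ∈ stdSimplex ℝ Ω) :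
    dppPayoff r δ φ V (finMeas t w z) =
      (1 - δ) * (∑ i ∈ t, w i * (invest r).indicator 1 (z i)) +
        δ * ∑ i ∈ t, w i * V (φ (z i)) := by
  have hint : (∫ q in stdSimplex ℝ Ω, V (φ q) ∂finMeas t w z) = ∑ i ∈ t, w i * V (φ (z i)) := by
    rw [finMeas_restrict measurableSet_stdSimplex' hz, finMeas_integral hw (fun q => V (φ q))]
    simp [smul_eq_mul]
  rw [dppPayoff, toReal_finMeas hw, hint]

variable {r : Ω → ℝ} {δ : ℝ} {φ : (Ω → ℝ) → Ω → ℝ}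

lemma dirac_mem_splittings {p : Ω → ℝ} (hp : p ∈ stdSimplex ℝ Ω) :
    Measure.dirac p ∈ Splittings p := by
  refine ⟨Measure.dirac.isProbabilityMeasure, ?_, ?_⟩
  · rw [Measure.dirac_apply' _ measurableSet_stdSimplex', indicator_of_mem hp]; rfl
  · exact integral_dirac _ _

lemma restrict_dirac_simplex {p : Ω → ℝ} (hp : p ∈ stdSimplex ℝ Ω) :
    (Measure.dirac p).restrict (stdSimplex ℝ Ω) = Measure.dirac p := by
  classical
  rw [MeasureTheory.restrict_dirac]
  simp [hp]

lemma dppPayoff_dirac (V : (Ω → ℝ) → ℝ) {p : Ω → ℝ} (hp : p ∈ stdSimplex ℝ Ω) :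
    dppPayoff r δ φ V (Measure.dirac p) =
      (1 - δ) * ((Measure.dirac p) (invest r)).toReal + δ * V (φ p) := by
  rw [dppPayoff, restrict_dirac_simplex hp, integral_dirac]

lemma integral_V_le (hφmaps : MapsTo φ (stdSimplex ℝ Ω) (stdSimplex ℝ Ω))
    {V : (Ω → ℝ) → ℝ} {C : ℝ} (hC : ∀ q ∈ stdSimplex ℝ Ω, |V q| ≤ C)
    {μ : Measure (Ω → ℝ)} (hμ1 : IsProbabilityMeasure μ) (hμs : μ (stdSimplex ℝ Ω) = 1) :
    |∫ q in stdSimplex ℝ Ω, V (φ q) ∂μ| ≤ C := by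
  have hfin : IsFiniteMeasure (μ.restrict (stdSimplex ℝ Ω)) := inferInstance
  have hub : ∀ᵐ q ∂μ.restrict (stdSimplex ℝ Ω), ‖V (φ q)‖ ≤ C := by
    filter_upwards [ae_restrict_mem measurableSet_stdSimplex'] with q hq
    exact hC _ (hφmaps hq)
  have := norm_integral_le_of_norm_le_const hub
  rw [Real.norm_eq_abs] at this
  refine le_trans this ?_
  rw [measureReal_def, Measure.restrict_apply_univ, hμs, ENNReal.toReal_one, mul_one]

lemma dppPayoff_le (hδ : δ ∈ Ico (0:ℝ) 1) (hφmaps : MapsTo φ (stdSimplex ℝ Ω) (stdSimplex ℝ Ω))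
    {V : (Ω → ℝ) → ℝ} {C : ℝ} (hC : ∀ q ∈ stdSimplex ℝ Ω, |V q| ≤ C)
    {p : Ω → ℝ} {μ : Measure (Ω → ℝ)} (hμ : μ ∈ Splittings p) :
    dppPayoff r δ φ V μ ≤ (1 - δ) + δ * C := by
  obtain ⟨hμ1, hμs, -⟩ := hμ
  have h1 : (μ (invest r)).toReal ≤ 1 := by
    have := prob_le_one (μ := μ) (s := invest r)
    have h2 : (μ (invest r)).toReal ≤ (1 : ℝ≥0∞).toReal :=
      ENNReal.toReal_mono (by norm_num) this
    simpa using h2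
  have h2 := (abs_le.mp (integral_V_le hφmaps hC hμ1 hμs)).2
  have hδ0 := hδ.1
  have hδ1 := le_of_lt hδ.2
  rw [dppPayoff]
  have := mul_le_mul_of_nonneg_left h1 (by linarith : (0:ℝ) ≤ 1 - δ)
  have := mul_le_mul_of_nonneg_left h2 hδ0
  linarith

lemma bddAbove_payoff (hδ : δ ∈ Ico (0:ℝ) 1)
    (hφmaps : MapsTo φ (stdSimplex ℝ Ω) (stdSimplex ℝ Ω))
    {V : (Ω → ℝ) → ℝ} {C : ℝ} (hC : ∀ q ∈ stdSimplex ℝ Ω, |V q| ≤ C) (p : Ω → ℝ) :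
    BddAbove (dppPayoff r δ φ V '' Splittings p) := by
  refine ⟨(1 - δ) + δ * C, ?_⟩
  rintro x ⟨μ, hμ, rfl⟩
  exact dppPayoff_le hδ hφmaps hC hμ

lemma sol_ge_dirac (hδ : δ ∈ Ico (0:ℝ) 1) (hφmaps : MapsTo φ (stdSimplex ℝ Ω) (stdSimplex ℝ Ω))
    {V : (Ω → ℝ) → ℝ} {C : ℝ} (hC : ∀ q ∈ stdSimplex ℝ Ω, |V q| ≤ C)
    (hV : SatisfiesDPP r δ φ V) {p : Ω → ℝ} (hp : p ∈ stdSimplex ℝ Ω) :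
    δ * V (φ p) ≤ V p := by
  have h := hV p hp
  have hmem : dppPayoff r δ φ V (Measure.dirac p) ∈ dppPayoff r δ φ V '' Splittings p :=
    mem_image_of_mem _ (dirac_mem_splittings hp)
  have hle := le_csSup (bddAbove_payoff hδ hφmaps hC p) hmem
  rw [dppPayoff_dirac V hp] at hle
  rw [h]
  refine le_trans ?_ hle
  have h0 : (0:ℝ) ≤ (1 - δ) * ((Measure.dirac p) (invest r)).toReal := by
    apply mul_nonneg (by linarith [hδ.2.le]) ENNReal.toReal_nonneg
  linarith

lemma sol_nonneg [Nonempty Ω] (hδ : δ ∈ Ico (0:ℝ) 1)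
    (hφmaps : MapsTo φ (stdSimplex ℝ Ω) (stdSimplex ℝ Ω))
    {V : (Ω → ℝ) → ℝ} {C : ℝ} (hC : ∀ q ∈ stdSimplex ℝ Ω, |V q| ≤ C)
    (hV : SatisfiesDPP r δ φ V) : ∀ p ∈ stdSimplex ℝ Ω, 0 ≤ V p := by
  intro p hp
  have key : ∀ n : ℕ, δ ^ n * V (φ^[n] p) ≤ V p := by
    intro n
    induction n with
    | zero => simp
    | succ n ih =>
      have hpn : φ^[n] p ∈ stdSimplex ℝ Ω := by
        clear ih
        induction n with
        | zero => simpa using hp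
        | succ m ihm => rw [Function.iterate_succ_apply']; exact hφmaps ihm
      have h1 := sol_ge_dirac hδ hφmaps hC hV hpn
      calc δ ^ (n+1) * V (φ^[n+1] p) = δ ^ n * (δ * V (φ (φ^[n] p))) := by
            rw [Function.iterate_succ_apply']; ring
        _ ≤ δ ^ n * V (φ^[n] p) := by
            apply mul_le_mul_of_nonneg_left h1 (pow_nonneg hδ.1 n)
        _ ≤ V p := ih
  have hiter : ∀ n : ℕ, φ^[n] p ∈ stdSimplex ℝ Ω := by
    intro n
    induction n with
    | zero => simpa using hp
    | succ m ihm => rw [Function.iterate_succ_apply']; exact hφmaps ihm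
  have hlb : ∀ n : ℕ, -(δ ^ n * C) ≤ V p := by
    intro n
    refine le_trans ?_ (key n)
    have := (abs_le.mp (hC _ (hiter n))).1
    have hd : (0:ℝ) ≤ δ ^ n := pow_nonneg hδ.1 n
    nlinarith
  have htend : Filter.Tendsto (fun n : ℕ => -(δ ^ n * C)) Filter.atTop (nhds 0) := by
    have h1 : Filter.Tendsto (fun n : ℕ => δ ^ n) Filter.atTop (nhds 0) :=
      tendsto_pow_atTop_nhds_zero_of_lt_one hδ.1 hδ.2
    have := h1.mul_const C
    simpa using this.neg
  exact le_of_tendsto htend (Filter.Eventually.of_forall hlb)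

lemma sol_le_one [Nonempty Ω] (hδ : δ ∈ Ico (0:ℝ) 1)
    (hφmaps : MapsTo φ (stdSimplex ℝ Ω) (stdSimplex ℝ Ω))
    {V : (Ω → ℝ) → ℝ} {C : ℝ} (hC : ∀ q ∈ stdSimplex ℝ Ω, |V q| ≤ C)
    (hV : SatisfiesDPP r δ φ V) : ∀ p ∈ stdSimplex ℝ Ω, V p ≤ 1 := by
  classical
  have hne : (stdSimplex ℝ Ω).Nonempty := ⟨_, single_mem_stdSimplex ℝ (Classical.arbitrary Ω)⟩
  set U := sSup (V '' stdSimplex ℝ Ω) with hU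
  have hbdd : BddAbove (V '' stdSimplex ℝ Ω) := by
    refine ⟨C, ?_⟩
    rintro x ⟨q, hq, rfl⟩
    exact (abs_le.mp (hC q hq)).2
  have hUnn : 0 ≤ U := by
    obtain ⟨q, hq⟩ := hne
    exact le_trans (sol_nonneg hδ hφmaps hC hV q hq)
      (le_csSup hbdd (mem_image_of_mem _ hq))
  have hstep : ∀ p ∈ stdSimplex ℝ Ω, V p ≤ (1 - δ) + δ * U := by
    intro p hp
    rw [hV p hp]
    refine csSup_le ⟨_, mem_image_of_mem _ (dirac_mem_splittings hp)⟩ ?_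
    rintro x ⟨μ, hμ, rfl⟩
    obtain ⟨hμ1, hμs, -⟩ := hμ
    have h1 : (μ (invest r)).toReal ≤ 1 := by
      have h2 : (μ (invest r)).toReal ≤ (1 : ℝ≥0∞).toReal :=
        ENNReal.toReal_mono (by norm_num) prob_le_one
      simpa using h2
    have h2 : (∫ q in stdSimplex ℝ Ω, V (φ q) ∂μ) ≤ U := by
      by_cases hint : Integrable (fun q => V (φ q)) (μ.restrict (stdSimplex ℝ Ω))
      · have : IsProbabilityMeasure (μ.restrict (stdSimplex ℝ Ω)) := by
          constructor; rw [Measure.restrict_apply_univ, hμs]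
        calc (∫ q in stdSimplex ℝ Ω, V (φ q) ∂μ) ≤
            ∫ _ in stdSimplex ℝ Ω, U ∂μ := by
              refine integral_mono_ae hint (integrable_const U) ?_
              filter_upwards [ae_restrict_mem measurableSet_stdSimplex'] with q hq
              exact le_csSup hbdd (mem_image_of_mem _ (hφmaps hq))
          _ = U := by simp
      · rw [integral_undef hint]; exact hUnn
    have hδ0 := hδ.1
    have h3 := mul_le_mul_of_nonneg_left h1 (by linarith [hδ.2.le] : (0:ℝ) ≤ 1 - δ)
    have h4 := mul_le_mul_of_nonneg_left h2 hδ0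
    rw [dppPayoff]
    linarith
  have hUle : U ≤ 1 := by
    have : U ≤ (1 - δ) + δ * U := by
      refine csSup_le (hne.image V) ?_
      rintro x ⟨q, hq, rfl⟩
      exact hstep q hq
    nlinarith [hδ.2]
  intro p hp
  exact le_trans (le_csSup hbdd (mem_image_of_mem _ hp)) hUle

set_option maxHeartbeats 2000000 in
lemma exists_finMeas_payoff (hδ : δ ∈ Ico (0:ℝ) 1)
    (hφmaps : MapsTo φ (stdSimplex ℝ Ω) (stdSimplex ℝ Ω))
    {V : (Ω → ℝ) → ℝ} (hV : ∀ q ∈ stdSimplex ℝ Ω, 0 ≤ V q ∧ V q ≤ 1)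
    {p : Ω → ℝ} (hp : p ∈ stdSimplex ℝ Ω) {μ : Measure (Ω → ℝ)} (hμ : μ ∈ Splittings p)
    {ε : ℝ} (hε : 0 < ε) :
    ∃ (ι : Type) (t : Finset ι) (w : ι → ℝ) (z : ι → Ω → ℝ),
      (∀ i ∈ t, 0 ≤ w i) ∧ (∑ i ∈ t, w i = 1) ∧ (∀ i ∈ t, z i ∈ stdSimplex ℝ Ω) ∧
      (∑ i ∈ t, w i • z i = p) ∧
      dppPayoff r δ φ V μ - ε ≤ dppPayoff r δ φ V (finMeas t w z) := by
  classical
  obtain ⟨hμprob, hμs, hμbar⟩ := hμ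
  set μ' := μ.restrict (stdSimplex ℝ Ω) with hμ'def
  haveI hμ'prob : IsProbabilityMeasure μ' := ⟨by rw [hμ'def, Measure.restrict_apply_univ, hμs]⟩
  have hμc : μ (stdSimplex ℝ Ω)ᶜ = 0 := by
    have h := measure_compl (measurableSet_stdSimplex') (measure_ne_top μ _)
    rw [hμs, measure_univ] at h
    simpa using h
  have haes : ∀ᵐ x ∂μ', x ∈ stdSimplex ℝ Ω := ae_restrict_mem measurableSet_stdSimplex'
  have hid : Integrable (fun x : Ω → ℝ => x) μ' := by
    refine Integrable.mono' (integrable_const 1) measurable_id.aestronglyMeasurable ?_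
    filter_upwards [haes] with x hx
    exact norm_le_one_of_mem_stdSimplex hx
  have hrestr_eq : μ' = μ := Measure.restrict_eq_self_of_ae_mem (by
    rw [Filter.Eventually, mem_ae_iff]; exact hμc)
  have hbar' : ∫ x, x ∂μ' = p := by rw [hrestr_eq]; exact hμbar
  have hcoord : ∀ ω, p ω = 0 → ∀ᵐ x ∂μ', x ω = 0 := by
    intro ω hω
    have hie : Integrable (fun x : Ω → ℝ => x ω) μ' :=
      ((ContinuousLinearMap.proj (R := ℝ) (φ := fun _ : Ω => ℝ) ω)).integrable_comp hid
    have hnn : 0 ≤ᵐ[μ'] (fun x : Ω → ℝ => x ω) := by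
      filter_upwards [haes] with x hx
      exact hx.1 ω
    have hz : ∫ x, x ω ∂μ' = 0 := by
      have h := ((ContinuousLinearMap.proj (R := ℝ) (φ := fun _ : Ω => ℝ) ω)).integral_comp_comm hid
      simp only [ContinuousLinearMap.proj_apply] at h
      rw [h, hbar', hω]
    have h0 := (integral_eq_zero_iff_of_nonneg_ae hnn hie).mp hz
    filter_upwards [h0] with x hx
    exact hx
  -- choose a measurable integrable surrogate G for V ∘ φ
  obtain ⟨G, hGsm, hGint, hGae, hGTle⟩ :
      ∃ G : (Ω → ℝ) → ℝ, StronglyMeasurable G ∧ Integrable G μ' ∧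
        (∀ᵐ x ∂μ', 0 ≤ G x ∧ G x ≤ 1 ∧ G x ≤ V (φ x)) ∧
        (∫ q in stdSimplex ℝ Ω, V (φ q) ∂μ) ≤ ∫ x, G x ∂μ' := by
    by_cases hint : Integrable (fun x => V (φ x)) μ'
    · refine ⟨hint.1.mk _, hint.1.stronglyMeasurable_mk, hint.congr hint.1.ae_eq_mk, ?_, ?_⟩
      · filter_upwards [haes, hint.1.ae_eq_mk] with x hx hGx
        rw [← hGx]
        exact ⟨(hV _ (hφmaps hx)).1, (hV _ (hφmaps hx)).2, le_refl _⟩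
      · rw [← integral_congr_ae hint.1.ae_eq_mk]
    · refine ⟨fun _ => 0, stronglyMeasurable_const, integrable_const 0, ?_, ?_⟩
      · filter_upwards [haes] with x hx
        exact ⟨le_refl 0, zero_le_one, (hV _ (hφmaps hx)).1⟩
      · rw [integral_undef hint]
        simp
  have hTg1 : ∫ x, G x ∂μ' ≤ 1 := by
    calc ∫ x, G x ∂μ' ≤ ∫ _, (1:ℝ) ∂μ' := by
          refine integral_mono_ae hGint (integrable_const 1) ?_
          filter_upwards [hGae] with x hx
          exact hx.2.1
      _ = 1 := by simp
  -- the good set A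
  set A : Set (Ω → ℝ) :=
    {x | x ∈ stdSimplex ℝ Ω ∧ 0 ≤ G x ∧ G x ≤ V (φ x) ∧ ∀ ω, p ω = 0 → x ω = 0} with hAdef
  have hA : ∀ᵐ x ∂μ', x ∈ A := by
    have hall : ∀ᵐ x ∂μ', ∀ ω, p ω = 0 → x ω = 0 := by
      rw [MeasureTheory.ae_all_iff]
      intro ω
      by_cases hω : p ω = 0
      · filter_upwards [hcoord ω hω] with x hx
        intro
        exact hx
      · filter_upwards with x hx
        exact absurd hx hω
    filter_upwards [haes, hGae, hall] with x h1 h2 h3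
    exact ⟨h1, h2.1, h2.2.2, h3⟩
  -- the indicator of the investment region
  set ind : (Ω → ℝ) → ℝ := (invest r).indicator (fun _ => 1) with hinddef
  have hindm : Measurable ind := measurable_const.indicator (measurableSet_invest r)
  have hindint : Integrable ind μ' := by
    refine Integrable.mono' (integrable_const 1) hindm.aestronglyMeasurable ?_
    refine Filter.Eventually.of_forall fun x => ?_
    by_cases h : x ∈ invest r <;> simp [hinddef, indicator, h]
  have hind_nonneg : ∀ x, 0 ≤ ind x := by
    intro x
    by_cases h : x ∈ invest r <;> simp [hinddef, indicator, h]
  -- the vector map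
  set Φ : (Ω → ℝ) → (Ω → ℝ) × ℝ × ℝ := fun x => (x, G x, ind x) with hΦdef
  have hΦint : Integrable Φ μ' :=
    hid.prodMk (hGint.prodMk hindint)
  have hμinv : μ' (invest r) = μ (invest r) := by
    rw [hμ'def, Measure.restrict_apply (measurableSet_invest r),
      inter_eq_self_of_subset_left (fun x (hx : x ∈ invest r) => hx.1)]
  have hbint : ∫ x, Φ x ∂μ' = (p, ∫ x, G x ∂μ', (μ (invest r)).toReal) := by
    rw [hΦdef, integral_pair hid (hGint.prodMk hindint), integral_pair hGint hindint, hbar']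
    have h1 : ∫ x, ind x ∂μ' = (μ' (invest r)).toReal • (1:ℝ) := by
      rw [hinddef]
      exact integral_indicator_const (1:ℝ) (measurableSet_invest r)
    rw [h1, smul_eq_mul, mul_one, hμinv]
  have hbmem : (p, ∫ x, G x ∂μ', (μ (invest r)).toReal) ∈ closure (convexHull ℝ (Φ '' A)) := by
    rw [← hbint]
    refine Convex.integral_mem ((convex_convexHull ℝ _).closure) isClosed_closure ?_ hΦint
    filter_upwards [hA] with x hx
    exact subset_closure (subset_convexHull ℝ _ (mem_image_of_mem Φ hx))
  -- constants
  have hTne : (Finset.univ.filter (fun ω => 0 < p ω)).Nonempty := by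
    by_contra h
    rw [Finset.not_nonempty_iff_eq_empty, Finset.filter_eq_empty_iff] at h
    have : ∑ ω, p ω ≤ 0 := Finset.sum_nonpos fun ω _ => le_of_not_gt (h (Finset.mem_univ ω))
    rw [hp.2] at this
    linarith
  set m : ℝ := (Finset.univ.filter (fun ω => 0 < p ω)).inf' hTne p with hmdef
  have hm0 : 0 < m := by
    rw [hmdef, Finset.lt_inf'_iff]
    intro ω hω
    exact (Finset.mem_filter.mp hω).2
  have hmp : ∀ ω, 0 < p ω → m ≤ p ω := fun ω h =>
    Finset.inf'_le p (Finset.mem_filter.mpr ⟨Finset.mem_univ _, h⟩)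
  set θ : ℝ := min (ε/4) (1/2) with hθdef
  have hθ0 : 0 < θ := lt_min (by linarith) (by norm_num)
  have hθ1 : θ ≤ 1/2 := min_le_right _ _
  have hθε : θ ≤ ε/4 := min_le_left _ _
  set ε' : ℝ := min (ε/4) (θ*m) with hε'def
  have hε'0 : 0 < ε' := lt_min (by linarith) (mul_pos hθ0 hm0)
  have hε'ε : ε' ≤ ε/4 := min_le_left _ _
  have hε'm : ε' ≤ θ*m := min_le_right _ _
  -- pick a convex combination close to the barycenter
  obtain ⟨y, hy, hdist⟩ := Metric.mem_closure_iff.mp hbmem ε' hε'0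
  rw [convexHull_eq] at hy
  obtain ⟨ι, t, w, zS, hw0, hw1, hzS, hyc⟩ := hy
  rw [Finset.centerMass_eq_of_sum_1 _ _ hw1] at hyc
  choose! ζ hζA hζΦ using fun i (hi : i ∈ t) => hzS i hi
  -- components of y
  have hy1 : y.1 = ∑ i ∈ t, w i • ζ i := by
    rw [← hyc, Prod.fst_sum]
    refine Finset.sum_congr rfl fun i hi => ?_
    rw [Prod.smul_fst, ← hζΦ i hi]
  have hy21 : y.2.1 = ∑ i ∈ t, w i * G (ζ i) := by
    rw [← hyc, Prod.snd_sum, Prod.fst_sum]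
    refine Finset.sum_congr rfl fun i hi => ?_
    rw [Prod.smul_snd, Prod.smul_fst, ← hζΦ i hi]
    rfl
  have hy22 : y.2.2 = ∑ i ∈ t, w i * ind (ζ i) := by
    rw [← hyc, Prod.snd_sum, Prod.snd_sum]
    refine Finset.sum_congr rfl fun i hi => ?_
    rw [Prod.smul_snd, Prod.smul_snd, ← hζΦ i hi]
    rfl
  -- distance bounds
  have hdists := hdist
  rw [Prod.dist_eq] at hdists
  have hd1 : dist p y.1 ≤ ε' := le_of_lt (lt_of_le_of_lt (le_max_left _ _) hdists)
  have hd2' : dist (∫ x, G x ∂μ', (μ (invest r)).toReal) y.2 ≤ ε' :=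
    le_of_lt (lt_of_le_of_lt (le_max_right _ _) hdists)
  rw [Prod.dist_eq] at hd2'
  have hd2 : |(∫ x, G x ∂μ') - y.2.1| ≤ ε' := by
    rw [← Real.dist_eq]
    exact le_trans (le_max_left _ _) hd2'
  have hd3 : |(μ (invest r)).toReal - y.2.2| ≤ ε' := by
    rw [← Real.dist_eq]
    exact le_trans (le_max_right _ _) hd2'
  set p₀ : Ω → ℝ := ∑ i ∈ t, w i • ζ i with hp₀def
  have hζΔ : ∀ i ∈ t, ζ i ∈ stdSimplex ℝ Ω := fun i hi => (hζA i hi).1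
  have hp₀mem : p₀ ∈ stdSimplex ℝ Ω :=
    (convex_stdSimplex ℝ Ω).sum_mem hw0 hw1 hζΔ
  have hp₀0 : ∀ ω, p ω = 0 → p₀ ω = 0 := by
    intro ω hω
    rw [hp₀def]
    rw [Finset.sum_apply]
    refine Finset.sum_eq_zero fun i hi => ?_
    have := (hζA i hi).2.2.2 ω hω
    simp [this]
  have hd1' : ∀ ω, |p ω - p₀ ω| ≤ ε' := by
    intro ω
    have h := dist_le_pi_dist p y.1 ω
    rw [hy1] at h
    rw [← Real.dist_eq]
    exact le_trans h (by rwa [hy1] at hd1)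
  -- the correction point
  set p'' : Ω → ℝ := fun ω => (p ω - (1-θ) * p₀ ω) / θ with hp''def
  have hp''mem : p'' ∈ stdSimplex ℝ Ω := by
    constructor
    · intro ω
      by_cases hω : p ω = 0
      · simp [hp''def, hω, hp₀0 ω hω]
      · have hppos : 0 < p ω := lt_of_le_of_ne (hp.1 ω) (Ne.symm hω)
        have h1 : p₀ ω ≤ p ω + ε' := by
          have := (abs_le.mp (hd1' ω)).1
          linarith
        have h2 : ε' ≤ θ * p ω := le_trans hε'm (by nlinarith [hmp ω hppos])
        refine div_nonneg ?_ hθ0.le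
        nlinarith
    · have hsum : ∑ ω, p₀ ω = 1 := hp₀mem.2
      rw [hp''def]
      rw [← Finset.sum_div, Finset.sum_sub_distrib, ← Finset.mul_sum, hp.2, hsum]
      field_simp
      ring
  refine ⟨Option ι, t.insertNone, fun o => o.elim θ (fun i => (1-θ) * w i),
    fun o => o.elim p'' ζ, ?_, ?_, ?_, ?_, ?_⟩
  · rintro (_|i) hi
    · exact hθ0.le
    · rw [Finset.mem_insertNone] at hi
      exact mul_nonneg (by linarith) (hw0 i (hi i rfl))
  · rw [Finset.sum_insertNone]
    simp only [Option.elim]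
    rw [← Finset.mul_sum, hw1]
    ring
  · rintro (_|i) hi
    · exact hp''mem
    · rw [Finset.mem_insertNone] at hi
      exact hζΔ i (hi i rfl)
  · rw [Finset.sum_insertNone]
    simp only [Option.elim]
    have hsplit : (∑ i ∈ t, ((1-θ) * w i) • ζ i) = (1-θ) • p₀ := by
      rw [hp₀def, Finset.smul_sum]
      refine Finset.sum_congr rfl fun i hi => ?_
      rw [smul_smul]
    rw [hsplit]
    funext ω
    have hθne : θ ≠ 0 := ne_of_gt hθ0
    simp only [Pi.add_apply, Pi.smul_apply, smul_eq_mul, hp''def]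
    field_simp
    ring
  · -- the payoff estimate
    rw [dppPayoff_finMeas r δ φ V
      (by rintro (_|i) hi
          · exact hθ0.le
          · rw [Finset.mem_insertNone] at hi
            exact mul_nonneg (by linarith) (hw0 i (hi i rfl)))
      (by rintro (_|i) hi
          · exact hp''mem
          · rw [Finset.mem_insertNone] at hi
            exact hζΔ i (hi i rfl))]
    rw [Finset.sum_insertNone, Finset.sum_insertNone]
    simp only [Option.elim]
    rw [dppPayoff]
    set A1 := (μ (invest r)).toReal with hA1def
    set T1 := ∫ q in stdSimplex ℝ Ω, V (φ q) ∂μ with hT1def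
    set Tg := ∫ x, G x ∂μ' with hTgdef
    have e1 : ∑ i ∈ t, (1-θ) * w i * (invest r).indicator 1 (ζ i) = (1-θ) * y.2.2 := by
      rw [hy22, Finset.mul_sum]
      refine Finset.sum_congr rfl fun i hi => ?_
      show (1-θ) * w i * ind (ζ i) = (1-θ) * (w i * ind (ζ i))
      ring
    have hGV : ∑ i ∈ t, w i * G (ζ i) ≤ ∑ i ∈ t, w i * V (φ (ζ i)) :=
      Finset.sum_le_sum fun i hi => mul_le_mul_of_nonneg_left ((hζA i hi).2.2.1) (hw0 i hi)
    have e2 : (1-θ) * y.2.1 ≤ ∑ i ∈ t, (1-θ) * w i * V (φ (ζ i)) := by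
      have heq : ∑ i ∈ t, (1-θ) * w i * V (φ (ζ i))
          = (1-θ) * ∑ i ∈ t, w i * V (φ (ζ i)) := by
        rw [Finset.mul_sum]
        exact Finset.sum_congr rfl fun i hi => by ring
      rw [heq, hy21]
      exact mul_le_mul_of_nonneg_left hGV (by linarith)
    have hindp'' : 0 ≤ (invest r).indicator (1 : (Ω → ℝ) → ℝ) p'' := hind_nonneg p''
    have hVp'' : 0 ≤ V (φ p'') := (hV _ (hφmaps hp''mem)).1
    have hA1le : A1 ≤ 1 := by
      rw [hA1def]
      simpa using ENNReal.toReal_mono (by norm_num) (prob_le_one (μ := μ) (s := invest r))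
    have hA1nn : (0:ℝ) ≤ A1 := ENNReal.toReal_nonneg
    have hT1le : T1 ≤ 1 := le_trans hGTle hTg1
    have hy22ge : A1 - ε' ≤ y.2.2 := by linarith [(abs_le.mp hd3).2]
    have hy21ge : Tg - ε' ≤ y.2.1 := by linarith [(abs_le.mp hd2).2]
    have hθd : (0:ℝ) ≤ 1 - θ := by linarith
    have hδd : (0:ℝ) ≤ 1 - δ := by linarith [hδ.2.le]
    have h1 : (1-δ)*((1-θ)*(A1-ε')) ≤
        (1-δ)*(θ * (invest r).indicator 1 p'' + ∑ i ∈ t, (1-θ) * w i * (invest r).indicator 1 (ζ i)) := by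
      refine mul_le_mul_of_nonneg_left ?_ hδd
      have ha : (1-θ)*(A1-ε') ≤ (1-θ)*y.2.2 := mul_le_mul_of_nonneg_left hy22ge hθd
      have hb : 0 ≤ θ * (invest r).indicator (1 : (Ω → ℝ) → ℝ) p'' := mul_nonneg hθ0.le hindp''
      linarith [e1]
    have h2 : δ*((1-θ)*(T1-ε')) ≤ δ*(θ * V (φ p'') + ∑ i ∈ t, (1-θ) * w i * V (φ (ζ i))) := by
      refine mul_le_mul_of_nonneg_left ?_ hδ.1
      have ha : (1-θ)*(T1-ε') ≤ (1-θ)*(Tg-ε') :=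
        mul_le_mul_of_nonneg_left (by linarith [hGTle]) hθd
      have hb : (1-θ)*(Tg-ε') ≤ (1-θ)*y.2.1 := mul_le_mul_of_nonneg_left hy21ge hθd
      have hc : 0 ≤ θ * V (φ p'') := mul_nonneg hθ0.le hVp''
      linarith [e2]
    have hxle : (1-δ)*A1 + δ*T1 ≤ 1 := by
      have ha := mul_le_mul_of_nonneg_left hA1le hδd
      have hb := mul_le_mul_of_nonneg_left hT1le hδ.1
      linarith
    have haux1 : θ*((1-δ)*A1 + δ*T1) ≤ θ := by
      have := mul_le_mul_of_nonneg_left hxle hθ0.le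
      linarith
    have haux2 : (1-θ)*ε' ≤ ε' := by nlinarith [hε'0.le, hθ0.le]
    have h3 : (1-δ)*A1 + δ*T1 - ε ≤ (1-δ)*((1-θ)*(A1-ε')) + δ*((1-θ)*(T1-ε')) := by
      nlinarith [haux1, haux2, hθε, hε'ε, hε]
    linarith [h1, h2, h3]

end Aux

/-- the dynamic programming equation has at most one bounded solution. -/
theorem dpp_unique [Fintype Ω] [Nonempty Ω]
    (r : Ω → ℝ) (δ : ℝ) (hδ : δ ∈ Ico (0 : ℝ) 1)
    (φ : (Ω → ℝ) → Ω → ℝ)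
    (hφmaps : MapsTo φ (stdSimplex ℝ Ω) (stdSimplex ℝ Ω))
    (hφcont : ContinuousOn φ (stdSimplex ℝ Ω))
    (hφaff : ∀ x ∈ stdSimplex ℝ Ω, ∀ y ∈ stdSimplex ℝ Ω, ∀ t ∈ Icc (0 : ℝ) 1,
      φ (t • x + (1 - t) • y) = t • φ x + (1 - t) • φ y)
    (V₁ V₂ : (Ω → ℝ) → ℝ)
    (h₁b : ∃ C, ∀ p ∈ stdSimplex ℝ Ω, |V₁ p| ≤ C)
    (h₂b : ∃ C, ∀ p ∈ stdSimplex ℝ Ω, |V₂ p| ≤ C)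
    (h₁ : SatisfiesDPP r δ φ V₁) (h₂ : SatisfiesDPP r δ φ V₂) :
    ∀ p ∈ stdSimplex ℝ Ω, V₁ p = V₂ p := by
  classical
  have key : ∀ (W₁ W₂ : (Ω → ℝ) → ℝ),
      (∃ C, ∀ p ∈ stdSimplex ℝ Ω, |W₁ p| ≤ C) → (∃ C, ∀ p ∈ stdSimplex ℝ Ω, |W₂ p| ≤ C) →
      SatisfiesDPP r δ φ W₁ → SatisfiesDPP r δ φ W₂ →
      ∀ p ∈ stdSimplex ℝ Ω, W₁ p ≤ W₂ p := by
    intro W₁ W₂ hW₁b hW₂b hW₁ hW₂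
    obtain ⟨C₁, hC₁⟩ := hW₁b
    obtain ⟨C₂, hC₂⟩ := hW₂b
    have h1nn := sol_nonneg hδ hφmaps hC₁ hW₁
    have h1le := sol_le_one hδ hφmaps hC₁ hW₁
    have h2nn := sol_nonneg hδ hφmaps hC₂ hW₂
    have h2le := sol_le_one hδ hφmaps hC₂ hW₂
    have hne : (stdSimplex ℝ Ω).Nonempty :=
      ⟨_, ite_eq_mem_stdSimplex ℝ (Classical.arbitrary Ω)⟩
    set S : Set ℝ := (fun p => W₁ p - W₂ p) '' stdSimplex ℝ Ω with hSdef
    have hSne : S.Nonempty := hne.image _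
    have hSbdd : BddAbove S := by
      refine ⟨1, ?_⟩
      rintro x ⟨q, hq, rfl⟩
      have := h1le q hq
      have := h2nn q hq
      show W₁ q - W₂ q ≤ 1
      linarith
    set D : ℝ := sSup S with hDdef
    set M : ℝ := max D 0 with hMdef
    have hM0 : 0 ≤ M := le_max_right _ _
    have hdiffM : ∀ q ∈ stdSimplex ℝ Ω, W₁ q - W₂ q ≤ M :=
      fun q hq => le_trans (le_csSup hSbdd (mem_image_of_mem _ hq)) (le_max_left _ _)
    have main : ∀ p ∈ stdSimplex ℝ Ω, W₁ p - W₂ p ≤ δ * M := by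
      intro p hp
      refine le_of_forall_pos_le_add fun ε hε => ?_
      have hsup := hW₁ p hp
      have hlt : W₁ p - ε/2 < sSup (dppPayoff r δ φ W₁ '' Splittings p) := by
        rw [← hsup]; linarith
      obtain ⟨x, hxmem, hx⟩ := exists_lt_of_lt_csSup
        ⟨_, mem_image_of_mem _ (dirac_mem_splittings hp)⟩ hlt
      obtain ⟨μ, hμ, rfl⟩ := hxmem
      obtain ⟨ι, t, w, z, hw0, hw1, hz, hpz, hpay⟩ :=
        exists_finMeas_payoff hδ hφmaps (fun q hq => ⟨h1nn q hq, h1le q hq⟩) hp hμ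
          (half_pos hε)
      have h2ge : dppPayoff r δ φ W₂ (finMeas t w z) ≤ W₂ p := by
        rw [hW₂ p hp]
        exact le_csSup (bddAbove_payoff hδ hφmaps hC₂ p)
          (mem_image_of_mem _ (finMeas_mem_splittings hw0 hw1 hz hpz))
      have hcomp : dppPayoff r δ φ W₁ (finMeas t w z)
          - dppPayoff r δ φ W₂ (finMeas t w z) ≤ δ * M := by
        rw [dppPayoff_finMeas r δ φ W₁ hw0 hz, dppPayoff_finMeas r δ φ W₂ hw0 hz]
        have hsum : ∑ i ∈ t, w i * W₁ (φ (z i)) - ∑ i ∈ t, w i * W₂ (φ (z i)) ≤ M := by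
          rw [← Finset.sum_sub_distrib]
          calc ∑ i ∈ t, (w i * W₁ (φ (z i)) - w i * W₂ (φ (z i)))
              = ∑ i ∈ t, w i * (W₁ (φ (z i)) - W₂ (φ (z i))) := by
                refine Finset.sum_congr rfl fun i hi => by ring
            _ ≤ ∑ i ∈ t, w i * M := by
                refine Finset.sum_le_sum fun i hi => ?_
                exact mul_le_mul_of_nonneg_left (hdiffM _ (hφmaps (hz i hi))) (hw0 i hi)
            _ = M := by rw [← Finset.sum_mul, hw1, one_mul]
        have hδM := mul_le_mul_of_nonneg_left hsum hδ.1
        ring_nf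
        ring_nf at hδM
        linarith
      have hfinal : W₁ p - ε ≤ dppPayoff r δ φ W₁ (finMeas t w z) := by
        have := hpay
        linarith [hx]
      linarith
    have hDle : D ≤ δ * M := by
      refine csSup_le hSne ?_
      rintro x ⟨q, hq, rfl⟩
      exact main q hq
    have hD0 : D ≤ 0 := by
      by_contra h
      push_neg at h
      have hMD : M = D := max_eq_left h.le
      rw [hMD] at hDle
      nlinarith [hδ.2]
    intro p hp
    have := le_csSup hSbdd (mem_image_of_mem (fun p => W₁ p - W₂ p) hp)
    simp only [← hDdef] at this
    linarith
  intro p hp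
  exact le_antisymm (key V₁ V₂ h₁b h₂b h₁ h₂ p hp) (key V₂ V₁ h₂b h₁b h₂ h₁ p hp)

end
end

section
/- Every bounded function V : Δ(Ω) → ℝ that satisfies the dynamic programming equation is concave on Δ(Ω). -/
open MeasureTheory Set

noncomputable section

variable {Ω : Type*}

/-- every bounded solution of the dynamic programming equation is concave
on the simplex. -/
theorem dpp_concave [Fintype Ω] [Nonempty Ω]
    (r : Ω → ℝ) (δ : ℝ) (hδ : δ ∈ Ico (0 : ℝ) 1)
    (φ : (Ω → ℝ) → Ω → ℝ)
    (hφmaps : MapsTo φ (stdSimplex ℝ Ω) (stdSimplex ℝ Ω))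
    (hφcont : ContinuousOn φ (stdSimplex ℝ Ω))
    (hφaff : ∀ x ∈ stdSimplex ℝ Ω, ∀ y ∈ stdSimplex ℝ Ω, ∀ t ∈ Icc (0 : ℝ) 1,
      φ (t • x + (1 - t) • y) = t • φ x + (1 - t) • φ y)
    (V : (Ω → ℝ) → ℝ)
    (hVb : ∃ C, ∀ p ∈ stdSimplex ℝ Ω, |V p| ≤ C)
    (hV : SatisfiesDPP r δ φ V) :
    ConcaveOn ℝ (stdSimplex ℝ Ω) V := by
  classical
  obtain ⟨hδ0, hδ1⟩ := hδ
  obtain ⟨C₀, hC₀⟩ := hVb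
  set C : ℝ := max C₀ 0 with hCdef
  have hC0 : (0:ℝ) ≤ C := le_max_right _ _
  have hC : ∀ p ∈ stdSimplex ℝ Ω, |V p| ≤ C := fun p hp => (hC₀ p hp).trans (le_max_left _ _)
  have hsm : MeasurableSet (stdSimplex ℝ Ω) := (isClosed_stdSimplex ℝ Ω).measurableSet
  have hlin : IsLinearMap ℝ (fun p : Ω → ℝ => ∑ ω, p ω * r ω) := by
    constructor
    · intro u v; simp [add_mul, Finset.sum_add_distrib]
    · intro c u; simp [Finset.mul_sum, mul_assoc]
  have hIconv : Convex ℝ (invest r) :=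
    (convex_stdSimplex ℝ Ω).inter (convex_halfSpace_ge hlin 0)
  have hIclosed : IsClosed (invest r) := by
    have hcont : Continuous (fun p : Ω → ℝ => ∑ ω, p ω * r ω) :=
      continuous_finset_sum _ (fun ω _ => (continuous_apply ω).mul continuous_const)
    exact (isClosed_stdSimplex ℝ Ω).inter (isClosed_le continuous_const hcont)
  have hIm : MeasurableSet (invest r) := hIclosed.measurableSet
  have hIsub : invest r ⊆ stdSimplex ℝ Ω := fun p hp => hp.1
  have hnorm : ∀ q ∈ stdSimplex ℝ Ω, ‖q‖ ≤ 1 := by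
    intro q hq
    rw [pi_norm_le_iff_of_nonneg zero_le_one]
    intro ω
    rw [Real.norm_eq_abs, abs_of_nonneg (hq.1 ω)]
    calc q ω ≤ ∑ ω', q ω' := Finset.single_le_sum (fun i _ => hq.1 i) (Finset.mem_univ ω)
    _ = 1 := hq.2
  have hae_s : ∀ μ : Measure (Ω → ℝ), IsProbabilityMeasure μ → μ (stdSimplex ℝ Ω) = 1 →
      ∀ᵐ q ∂μ, q ∈ stdSimplex ℝ Ω := by
    intro μ hμ h1
    haveI := hμ
    exact mem_ae_iff.2 ((prob_compl_eq_zero_iff hsm).2 h1)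
  have hid_int : ∀ μ : Measure (Ω → ℝ), IsFiniteMeasure μ → (∀ᵐ q ∂μ, q ∈ stdSimplex ℝ Ω) →
      Integrable (fun q : Ω → ℝ => q) μ := by
    intro μ hf hmem
    haveI := hf
    exact Integrable.mono' (integrable_const 1) measurable_id.aestronglyMeasurable
      (hmem.mono fun q hq => hnorm q hq)
  have hibound : ∀ μ : Measure (Ω → ℝ), IsProbabilityMeasure μ →
      |∫ q in stdSimplex ℝ Ω, V (φ q) ∂μ| ≤ C := by
    intro μ hμ
    haveI := hμ
    have hb : ∀ᵐ q ∂μ.restrict (stdSimplex ℝ Ω), ‖V (φ q)‖ ≤ C :=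
      (ae_restrict_mem hsm).mono fun q hq => by
        simpa [Real.norm_eq_abs] using hC (φ q) (hφmaps hq)
    calc |∫ q in stdSimplex ℝ Ω, V (φ q) ∂μ| = ‖∫ q in stdSimplex ℝ Ω, V (φ q) ∂μ‖ := rfl
      _ ≤ C * ((μ.restrict (stdSimplex ℝ Ω)) univ).toReal := norm_integral_le_of_norm_le_const hb
      _ ≤ C * 1 := by
          have h2 : ((μ.restrict (stdSimplex ℝ Ω)) univ).toReal ≤ 1 := by
            rw [Measure.restrict_apply_univ]
            simpa using ENNReal.toReal_mono ENNReal.one_ne_top prob_le_one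
          exact mul_le_mul_of_nonneg_left h2 hC0
      _ = C := mul_one C
  have hple : ∀ μ : Measure (Ω → ℝ), IsProbabilityMeasure μ →
      dppPayoff r δ φ V μ ≤ (1 - δ) + δ * C := by
    intro μ hμ
    haveI := hμ
    have h2 : (μ (invest r)).toReal ≤ 1 := by
      simpa using ENNReal.toReal_mono ENNReal.one_ne_top prob_le_one
    have h3 : ∫ q in stdSimplex ℝ Ω, V (φ q) ∂μ ≤ C := (abs_le.1 (hibound μ hμ)).2
    have hδ1' : (0:ℝ) ≤ 1 - δ := by linarith
    calc dppPayoff r δ φ V μ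
        ≤ (1 - δ) * 1 + δ * C :=
          add_le_add (mul_le_mul_of_nonneg_left h2 hδ1') (mul_le_mul_of_nonneg_left h3 hδ0)
      _ = (1 - δ) + δ * C := by ring
  have hbdd : ∀ p : Ω → ℝ, BddAbove (dppPayoff r δ φ V '' Splittings p) := by
    intro p
    refine ⟨(1 - δ) + δ * C, ?_⟩
    rintro _ ⟨μ, ⟨h1, h2, h3⟩, rfl⟩
    exact hple μ h1
  have hdirac : ∀ p ∈ stdSimplex ℝ Ω, Measure.dirac p ∈ Splittings p := by
    intro p hp
    exact ⟨inferInstance, Measure.dirac_apply_of_mem hp, integral_dirac (fun q => q) p⟩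
  have hVdirac : ∀ p ∈ stdSimplex ℝ Ω, δ * V (φ p) ≤ V p := by
    intro p hp
    have h1 : dppPayoff r δ φ V (Measure.dirac p) ≤ V p := by
      rw [hV p hp]
      exact le_csSup (hbdd p) ⟨_, hdirac p hp, rfl⟩
    have h4 : dppPayoff r δ φ V (Measure.dirac p) =
        (1 - δ) * ((Measure.dirac p) (invest r)).toReal + δ * V (φ p) := by
      unfold dppPayoff
      rw [setIntegral_dirac (fun q => V (φ q)) p (stdSimplex ℝ Ω), if_pos hp]
    have h2 : 0 ≤ (1 - δ) * ((Measure.dirac p) (invest r)).toReal :=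
      mul_nonneg (by linarith) ENNReal.toReal_nonneg
    rw [h4] at h1; linarith
  have hV0 : ∀ p ∈ stdSimplex ℝ Ω, 0 ≤ V p := by
    have key : ∀ n : ℕ, ∀ p ∈ stdSimplex ℝ Ω, -(δ ^ n * C) ≤ V p := by
      intro n
      induction n with
      | zero =>
        intro p hp
        have := (abs_le.1 (hC p hp)).1
        simpa using this
      | succ n ih =>
        intro p hp
        have h1 : -(δ ^ n * C) ≤ V (φ p) := ih (φ p) (hφmaps hp)
        have h2 := hVdirac p hp
        have h3 : δ * -(δ ^ n * C) ≤ δ * V (φ p) := mul_le_mul_of_nonneg_left h1 hδ0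
        calc -(δ ^ (n + 1) * C) = δ * -(δ ^ n * C) := by ring
          _ ≤ δ * V (φ p) := h3
          _ ≤ V p := h2
    intro p hp
    have htend : Filter.Tendsto (fun n : ℕ => -(δ ^ n * C)) Filter.atTop (nhds 0) := by
      have h := ((tendsto_pow_atTop_nhds_zero_of_lt_one hδ0 hδ1).mul_const C).neg
      simpa using h
    exact le_of_tendsto' htend (fun n => key n p hp)

  have hreplace : ∀ p ∈ stdSimplex ℝ Ω, ∀ μ ∈ Splittings p, ∃ μ' ∈ Splittings p,
      Integrable (fun q => V (φ q)) (μ'.restrict (stdSimplex ℝ Ω)) ∧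
      dppPayoff r δ φ V μ ≤ dppPayoff r δ φ V μ' := by
    intro p hp μ hμ
    obtain ⟨hprob, hs1, hbar⟩ := hμ
    haveI := hprob
    by_cases hgood : Integrable (fun q => V (φ q)) (μ.restrict (stdSimplex ℝ Ω))
    · exact ⟨μ, ⟨hprob, hs1, hbar⟩, hgood, le_rfl⟩
    have haes : ∀ᵐ q ∂μ, q ∈ stdSimplex ℝ Ω := hae_s μ hprob hs1
    have hidμ : Integrable (fun q : Ω → ℝ => q) μ := hid_int μ inferInstance haes
    have hbad : dppPayoff r δ φ V μ = (1 - δ) * (μ (invest r)).toReal := by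
      unfold dppPayoff
      rw [integral_undef hgood, mul_zero, add_zero]
    set m₁ := μ (invest r) with hm₁
    set m₂ := μ (invest r)ᶜ with hm₂
    have hm₁top : m₁ ≠ ⊤ := measure_ne_top μ _
    have hm₂top : m₂ ≠ ⊤ := measure_ne_top μ _
    have hmsum : m₁ + m₂ = 1 := by
      rw [hm₁, hm₂, measure_add_measure_compl hIm, measure_univ]
    set x₁ : Ω → ℝ := if m₁ = 0 then p else m₁.toReal⁻¹ • ∫ q in invest r, q ∂μ with hx₁def
    set x₂ : Ω → ℝ := if m₂ = 0 then p else m₂.toReal⁻¹ • ∫ q in (invest r)ᶜ, q ∂μ with hx₂def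
    have hx₁I : m₁ ≠ 0 → x₁ ∈ invest r := by
      intro h0
      have hinvtop : m₁⁻¹ ≠ ⊤ := ENNReal.inv_ne_top.2 h0
      haveI hprob' : IsProbabilityMeasure (m₁⁻¹ • μ.restrict (invest r)) := by
        constructor
        rw [Measure.smul_apply, Measure.restrict_apply_univ, ← hm₁, smul_eq_mul,
          ENNReal.inv_mul_cancel h0 hm₁top]
      have hmem : ∀ᵐ q ∂(m₁⁻¹ • μ.restrict (invest r)), q ∈ invest r :=
        Measure.ae_smul_measure (ae_restrict_mem hIm) _
      have hint : Integrable (fun q : Ω → ℝ => q) (m₁⁻¹ • μ.restrict (invest r)) :=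
        (hidμ.restrict).smul_measure hinvtop
      have hmem2 := Convex.integral_mem hIconv hIclosed hmem hint
      rw [integral_smul_measure, ENNReal.toReal_inv] at hmem2
      rw [hx₁def, if_neg h0]
      exact hmem2
    have hx₁s : x₁ ∈ stdSimplex ℝ Ω := by
      by_cases h0 : m₁ = 0
      · rw [hx₁def, if_pos h0]; exact hp
      · exact hIsub (hx₁I h0)
    have hx₂s : x₂ ∈ stdSimplex ℝ Ω := by
      by_cases h0 : m₂ = 0
      · rw [hx₂def, if_pos h0]; exact hp
      · have hinvtop : m₂⁻¹ ≠ ⊤ := ENNReal.inv_ne_top.2 h0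
        haveI hprob' : IsProbabilityMeasure (m₂⁻¹ • μ.restrict (invest r)ᶜ) := by
          constructor
          rw [Measure.smul_apply, Measure.restrict_apply_univ, ← hm₂, smul_eq_mul,
            ENNReal.inv_mul_cancel h0 hm₂top]
        have hmem : ∀ᵐ q ∂(m₂⁻¹ • μ.restrict (invest r)ᶜ), q ∈ stdSimplex ℝ Ω :=
          Measure.ae_smul_measure (ae_restrict_of_ae haes) _
        have hint : Integrable (fun q : Ω → ℝ => q) (m₂⁻¹ • μ.restrict (invest r)ᶜ) :=
          (hidμ.restrict).smul_measure hinvtop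
        have hmem2 := Convex.integral_mem (convex_stdSimplex ℝ Ω) (isClosed_stdSimplex ℝ Ω) hmem hint
        rw [integral_smul_measure, ENNReal.toReal_inv] at hmem2
        rw [hx₂def, if_neg h0]
        exact hmem2
    have hkey₁ : m₁.toReal • x₁ = ∫ q in invest r, q ∂μ := by
      by_cases h0 : m₁ = 0
      · have hz : μ.restrict (invest r) = 0 := Measure.restrict_eq_zero.2 (by rw [← hm₁]; exact h0)
        rw [hx₁def, if_pos h0, hz, h0]
        simp
      · rw [hx₁def, if_neg h0]
        exact smul_inv_smul₀ (ENNReal.toReal_ne_zero.2 ⟨h0, hm₁top⟩) _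
    have hkey₂ : m₂.toReal • x₂ = ∫ q in (invest r)ᶜ, q ∂μ := by
      by_cases h0 : m₂ = 0
      · have hz : μ.restrict (invest r)ᶜ = 0 := Measure.restrict_eq_zero.2 (by rw [← hm₂]; exact h0)
        rw [hx₂def, if_pos h0, hz, h0]
        simp
      · rw [hx₂def, if_neg h0]
        exact smul_inv_smul₀ (ENNReal.toReal_ne_zero.2 ⟨h0, hm₂top⟩) _
    set μ' : Measure (Ω → ℝ) := m₁ • Measure.dirac x₁ + m₂ • Measure.dirac x₂ with hμ'def
    haveI hprob' : IsProbabilityMeasure μ' := by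
      constructor
      rw [hμ'def]
      simp [Measure.add_apply, Measure.smul_apply, smul_eq_mul, measure_univ, hmsum]
    have hμ's : μ' (stdSimplex ℝ Ω) = 1 := by
      rw [hμ'def]
      simp [Measure.add_apply, Measure.smul_apply, smul_eq_mul,
        Measure.dirac_apply_of_mem hx₁s, Measure.dirac_apply_of_mem hx₂s, hmsum]
    have hint₁ : Integrable (fun q : Ω → ℝ => q) (m₁ • Measure.dirac x₁) :=
      ((integrable_const x₁).congr (ae_eq_dirac (fun q : Ω → ℝ => q)).symm).smul_measure hm₁top
    have hint₂ : Integrable (fun q : Ω → ℝ => q) (m₂ • Measure.dirac x₂) :=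
      ((integrable_const x₂).congr (ae_eq_dirac (fun q : Ω → ℝ => q)).symm).smul_measure hm₂top
    have hbar' : ∫ q, q ∂μ' = p := by
      rw [hμ'def, integral_add_measure hint₁ hint₂, integral_smul_measure, integral_smul_measure,
        integral_dirac, integral_dirac, hkey₁, hkey₂, integral_add_compl hIm hidμ, hbar]
    have hgint₁ : Integrable (fun q => V (φ q)) (m₁ • Measure.dirac x₁) :=
      ((integrable_const (V (φ x₁))).congr (ae_eq_dirac (fun q => V (φ q))).symm).smul_measure hm₁top
    have hgint₂ : Integrable (fun q => V (φ q)) (m₂ • Measure.dirac x₂) :=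
      ((integrable_const (V (φ x₂))).congr (ae_eq_dirac (fun q => V (φ q))).symm).smul_measure hm₂top
    have hrestrict : μ'.restrict (stdSimplex ℝ Ω) = μ' := by
      rw [hμ'def, Measure.restrict_add, Measure.restrict_smul, Measure.restrict_smul,
        restrict_dirac' hsm, restrict_dirac' hsm, if_pos hx₁s, if_pos hx₂s]
    have hgood' : Integrable (fun q => V (φ q)) (μ'.restrict (stdSimplex ℝ Ω)) := by
      rw [hrestrict, hμ'def]
      exact hgint₁.add_measure hgint₂
    have hI' : m₁.toReal ≤ (μ' (invest r)).toReal := by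
      apply ENNReal.toReal_mono (measure_ne_top μ' _)
      by_cases h0 : m₁ = 0
      · simp [h0]
      · calc m₁ = m₁ * (Measure.dirac x₁) (invest r) := by
              rw [Measure.dirac_apply_of_mem (hx₁I h0), mul_one]
          _ ≤ μ' (invest r) := by
              rw [hμ'def, Measure.add_apply, Measure.smul_apply, smul_eq_mul]
              exact le_self_add
    have hsint : ∫ q in stdSimplex ℝ Ω, V (φ q) ∂μ' =
        m₁.toReal * V (φ x₁) + m₂.toReal * V (φ x₂) := by
      rw [hrestrict, hμ'def, integral_add_measure hgint₁ hgint₂,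
        integral_smul_measure, integral_smul_measure, integral_dirac, integral_dirac]
      simp [smul_eq_mul]
    have hfin : dppPayoff r δ φ V μ ≤ dppPayoff r δ φ V μ' := by
      rw [hbad]
      unfold dppPayoff
      rw [hsint]
      have h1 : 0 ≤ V (φ x₁) := hV0 _ (hφmaps hx₁s)
      have h2 : 0 ≤ V (φ x₂) := hV0 _ (hφmaps hx₂s)
      have h3 : (0:ℝ) ≤ m₁.toReal := ENNReal.toReal_nonneg
      have h4 : (0:ℝ) ≤ m₂.toReal := ENNReal.toReal_nonneg
      have h5 : (0:ℝ) ≤ 1 - δ := by linarith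
      have h6 := mul_le_mul_of_nonneg_left hI' h5
      have h7 : 0 ≤ δ * (m₁.toReal * V (φ x₁) + m₂.toReal * V (φ x₂)) :=
        mul_nonneg hδ0 (add_nonneg (mul_nonneg h3 h1) (mul_nonneg h4 h2))
      linarith
    exact ⟨μ', ⟨hprob', hμ's, hbar'⟩, hgood', hfin⟩

  have hcomb : ∀ x ∈ stdSimplex ℝ Ω, ∀ y ∈ stdSimplex ℝ Ω, ∀ a b : ℝ, 0 ≤ a → 0 ≤ b → a + b = 1 →
      ∀ μ ∈ Splittings x, ∀ ν ∈ Splittings y,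
      Integrable (fun q => V (φ q)) (μ.restrict (stdSimplex ℝ Ω)) →
      Integrable (fun q => V (φ q)) (ν.restrict (stdSimplex ℝ Ω)) →
      a * dppPayoff r δ φ V μ + b * dppPayoff r δ φ V ν ≤ V (a • x + b • y) := by
    intro x hx y hy a b ha hb hab μ hμ ν hν hgμ hgν
    obtain ⟨hμp, hμs, hμb⟩ := hμ
    obtain ⟨hνp, hνs, hνb⟩ := hν
    haveI := hμp; haveI := hνp
    set σ : Measure (Ω → ℝ) := ENNReal.ofReal a • μ + ENNReal.ofReal b • ν with hσdef
    have hA : (ENNReal.ofReal a).toReal = a := ENNReal.toReal_ofReal ha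
    have hB : (ENNReal.ofReal b).toReal = b := ENNReal.toReal_ofReal hb
    have hAt : ENNReal.ofReal a ≠ ⊤ := ENNReal.ofReal_ne_top
    have hBt : ENNReal.ofReal b ≠ ⊤ := ENNReal.ofReal_ne_top
    have hABsum : ENNReal.ofReal a + ENNReal.ofReal b = 1 := by
      rw [← ENNReal.ofReal_add ha hb, hab, ENNReal.ofReal_one]
    haveI hσprob : IsProbabilityMeasure σ := by
      constructor
      rw [hσdef]
      simp [Measure.add_apply, Measure.smul_apply, smul_eq_mul, measure_univ, hABsum]
    have hσs : σ (stdSimplex ℝ Ω) = 1 := by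
      rw [hσdef]
      simp [Measure.add_apply, Measure.smul_apply, smul_eq_mul, hμs, hνs, hABsum]
    have hidμ : Integrable (fun q : Ω → ℝ => q) μ := hid_int μ inferInstance (hae_s μ hμp hμs)
    have hidν : Integrable (fun q : Ω → ℝ => q) ν := hid_int ν inferInstance (hae_s ν hνp hνs)
    have hσbar : ∫ q, q ∂σ = a • x + b • y := by
      rw [hσdef, integral_add_measure (hidμ.smul_measure hAt) (hidν.smul_measure hBt),
        integral_smul_measure, integral_smul_measure, hμb, hνb, hA, hB]
    have hσmem : σ ∈ Splittings (a • x + b • y) := ⟨hσprob, hσs, hσbar⟩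
    have hσI : (σ (invest r)).toReal = a * (μ (invest r)).toReal + b * (ν (invest r)).toReal := by
      rw [hσdef, Measure.add_apply, Measure.smul_apply, Measure.smul_apply, smul_eq_mul,
        smul_eq_mul,
        ENNReal.toReal_add (ENNReal.mul_ne_top hAt (measure_ne_top μ _))
          (ENNReal.mul_ne_top hBt (measure_ne_top ν _)),
        ENNReal.toReal_mul, ENNReal.toReal_mul, hA, hB]
    have hσint : ∫ q in stdSimplex ℝ Ω, V (φ q) ∂σ =
        a * ∫ q in stdSimplex ℝ Ω, V (φ q) ∂μ + b * ∫ q in stdSimplex ℝ Ω, V (φ q) ∂ν := by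
      rw [hσdef, Measure.restrict_add, Measure.restrict_smul, Measure.restrict_smul,
        integral_add_measure (hgμ.smul_measure hAt) (hgν.smul_measure hBt),
        integral_smul_measure, integral_smul_measure, hA, hB]
      simp [smul_eq_mul]
    have hpay : dppPayoff r δ φ V σ = a * dppPayoff r δ φ V μ + b * dppPayoff r δ φ V ν := by
      unfold dppPayoff
      rw [hσI, hσint]
      ring
    rw [← hpay, hV _ (convex_stdSimplex ℝ Ω hx hy ha hb hab)]
    exact le_csSup (hbdd _) ⟨σ, hσmem, rfl⟩
  refine ⟨convex_stdSimplex ℝ Ω, ?_⟩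
  intro x hx y hy a b ha hb hab
  rcases eq_or_lt_of_le ha with ha0 | ha0
  · have hb1 : b = 1 := by linarith
    subst hb1
    rw [← ha0]
    simp
  rcases eq_or_lt_of_le hb with hb0 | hb0
  · have ha1 : a = 1 := by linarith
    subst ha1
    rw [← hb0]
    simp
  rw [smul_eq_mul, smul_eq_mul]
  refine le_of_forall_pos_le_add ?_
  intro ε hε
  have hnex : (dppPayoff r δ φ V '' Splittings x).Nonempty := ⟨_, ⟨_, hdirac x hx, rfl⟩⟩
  have hney : (dppPayoff r δ φ V '' Splittings y).Nonempty := ⟨_, ⟨_, hdirac y hy, rfl⟩⟩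
  have h1 : V x - ε < sSup (dppPayoff r δ φ V '' Splittings x) := by
    rw [← hV x hx]; linarith
  have h2 : V y - ε < sSup (dppPayoff r δ φ V '' Splittings y) := by
    rw [← hV y hy]; linarith
  obtain ⟨u, ⟨μ₀, hμ₀, rfl⟩, hu⟩ := exists_lt_of_lt_csSup hnex h1
  obtain ⟨v, ⟨ν₀, hν₀, rfl⟩, hv⟩ := exists_lt_of_lt_csSup hney h2
  obtain ⟨μ, hμmem, hμgood, hμge⟩ := hreplace x hx μ₀ hμ₀
  obtain ⟨ν, hνmem, hνgood, hνge⟩ := hreplace y hy ν₀ hν₀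
  have hmain := hcomb x hx y hy a b ha hb hab μ hμmem ν hνmem hμgood hνgood
  have h5 : V x - ε ≤ dppPayoff r δ φ V μ := le_trans hu.le hμge
  have h6 : V y - ε ≤ dppPayoff r δ φ V ν := le_trans hv.le hνge
  have h7 := mul_le_mul_of_nonneg_left h5 ha
  have h8 := mul_le_mul_of_nonneg_left h6 hb
  have e1 : a * (V x - ε) = a * V x - a * ε := by ring
  have e2 : b * (V y - ε) = b * V y - b * ε := by ring
  have e3 : a * ε + b * ε = ε := by rw [← add_mul, hab, one_mul]
  linarith


end
end

section
/- Let V : Δ(Ω) → ℝ be bounded, continuous and concave and satisfy the dynamic programming equation. Then for every p in the investment region I, the point mass δ_p attains the supremum in the dynamic programming equation at p, and V(p) = (1−δ) + δ·V(φ(p)). (At any belief in the investment region it is optimal for the advisor not to provide information.) -/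
open MeasureTheory Set

noncomputable section

variable {Ω : Type*}

/-- at any belief in the investment region it is optimal not to provide
information: the point mass `δ_p` attains the supremum in the dynamic programming equation,
and `V(p) = (1−δ) + δ·V(φ(p))`. -/
theorem no_disclosure_in_I [Fintype Ω] [Nonempty Ω]
    (r : Ω → ℝ) (δ : ℝ) (hδ : δ ∈ Ico (0 : ℝ) 1)
    (φ : (Ω → ℝ) → Ω → ℝ)
    (hφmaps : MapsTo φ (stdSimplex ℝ Ω) (stdSimplex ℝ Ω))
    (hφcont : ContinuousOn φ (stdSimplex ℝ Ω))
    (hφaff : ∀ x ∈ stdSimplex ℝ Ω, ∀ y ∈ stdSimplex ℝ Ω, ∀ t ∈ Icc (0 : ℝ) 1,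
      φ (t • x + (1 - t) • y) = t • φ x + (1 - t) • φ y)
    (V : (Ω → ℝ) → ℝ)
    (hVb : ∃ C, ∀ p ∈ stdSimplex ℝ Ω, |V p| ≤ C)
    (hVcont : ContinuousOn V (stdSimplex ℝ Ω))
    (hVconc : ConcaveOn ℝ (stdSimplex ℝ Ω) V)
    (hV : SatisfiesDPP r δ φ V) :
    ∀ p ∈ invest r,
      Measure.dirac p ∈ Splittings p ∧
      dppPayoff r δ φ V (Measure.dirac p) = V p ∧
      V p = (1 - δ) + δ * V (φ p) := by
  intro p hp
  obtain ⟨hps, hpr⟩ := hp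
  have hsm : MeasurableSet (stdSimplex ℝ Ω) := (isClosed_stdSimplex ℝ Ω).measurableSet
  have hinvm : MeasurableSet (invest r) := by
    have h1 : IsClosed {q : Ω → ℝ | 0 ≤ ∑ ω, q ω * r ω} :=
      isClosed_le continuous_const (by continuity)
    exact ((isClosed_stdSimplex ℝ Ω).inter h1).measurableSet
  -- the Dirac measure is a splitting
  have hdirac : Measure.dirac p ∈ Splittings p := by
    refine ⟨Measure.dirac.isProbabilityMeasure, ?_, ?_⟩
    · rw [Measure.dirac_apply' _ hsm, indicator_of_mem hps]; rfl
    · simp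
  set K := (1 - δ) + δ * V (φ p) with hKdef
  -- W = V ∘ φ is concave and continuous on the simplex
  set W := fun q => V (φ q) with hWdef
  have hWconc : ConcaveOn ℝ (stdSimplex ℝ Ω) W := by
    refine ⟨convex_stdSimplex ℝ Ω, ?_⟩
    intro x hx y hy a b ha hb hab
    have hb' : b = 1 - a := by linarith
    have haff := hφaff x hx y hy a ⟨ha, by linarith⟩
    simp only [hWdef, hb', haff]
    have := hVconc.2 (hφmaps hx) (hφmaps hy) ha (by linarith : (0:ℝ) ≤ 1 - a)
      (by ring : a + (1 - a) = 1)
    exact this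
  have hWcont : ContinuousOn W (stdSimplex ℝ Ω) := hVcont.comp hφcont hφmaps
  obtain ⟨C, hC⟩ := hVb
  -- any splitting's payoff is at most K
  have hub : ∀ x ∈ dppPayoff r δ φ V '' Splittings p, x ≤ K := by
    rintro _ ⟨μ, ⟨hμp, hμs, hμbar⟩, rfl⟩
    haveI := hμp
    have haes : ∀ᵐ q ∂μ, q ∈ stdSimplex ℝ Ω := by
      rw [ae_iff]
      have : {q : Ω → ℝ | ¬ q ∈ stdSimplex ℝ Ω} = (stdSimplex ℝ Ω)ᶜ := rfl
      rw [this, measure_compl hsm (measure_ne_top μ _), hμs, measure_univ, tsub_self]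
    have hres : μ.restrict (stdSimplex ℝ Ω) = μ := Measure.restrict_eq_self_of_ae_mem haes
    have hid : Integrable (fun q : Ω → ℝ => q) μ := by
      refine Integrable.mono' (integrable_const 1) aestronglyMeasurable_id ?_
      filter_upwards [haes] with q hq
      rw [pi_norm_le_iff_of_nonneg zero_le_one]
      intro ω
      rw [Real.norm_eq_abs, abs_of_nonneg (hq.1 ω)]
      calc q ω ≤ ∑ i, q i := Finset.single_le_sum (fun i _ => hq.1 i) (Finset.mem_univ ω)
        _ = 1 := hq.2
    have hWm : AEStronglyMeasurable W μ := by
      have := hWcont.aestronglyMeasurable hsm (μ := μ)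
      rwa [hres] at this
    have hWint : Integrable W μ := by
      refine Integrable.mono' (integrable_const C) hWm ?_
      filter_upwards [haes] with q hq
      simpa [hWdef, Real.norm_eq_abs] using hC (φ q) (hφmaps hq)
    have hjen : ∫ q, W q ∂μ ≤ V (φ p) := by
      have h := hWconc.le_map_integral hWcont (isClosed_stdSimplex ℝ Ω) haes hid
        (by exact hWint)
      rw [hμbar] at h
      simpa [hWdef] using h
    have h1 : (μ (invest r)).toReal ≤ 1 := by
      have := ENNReal.toReal_mono (by simp) (prob_le_one (μ := μ) (s := invest r))
      simpa using this
    have hδ0 := hδ.1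
    have hδ1 : (0:ℝ) ≤ 1 - δ := by linarith [hδ.2]
    simp only [dppPayoff, hKdef]
    rw [show (∫ q in stdSimplex ℝ Ω, V (φ q) ∂μ) = ∫ q, W q ∂μ by rw [hres]]
    have := add_le_add (mul_le_mul_of_nonneg_left h1 hδ1) (mul_le_mul_of_nonneg_left hjen hδ0)
    linarith
  -- value of the payoff at the Dirac measure
  have hpay : dppPayoff r δ φ V (Measure.dirac p) = K := by
    classical
    have h1 : (Measure.dirac p) (invest r) = 1 := by
      rw [Measure.dirac_apply' _ hinvm, indicator_of_mem (show p ∈ invest r from ⟨hps, hpr⟩)]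
      rfl
    simp only [dppPayoff, hKdef, h1, ENNReal.toReal_one, mul_one]
    rw [restrict_dirac' hsm, if_pos hps, integral_dirac]
  have hVp : V p = K := by
    rw [hV p hps]
    refine le_antisymm (csSup_le ⟨_, mem_image_of_mem _ hdirac⟩ hub) ?_
    rw [← hpay]
    exact le_csSup ⟨K, hub⟩ (mem_image_of_mem _ hdirac)
  exact ⟨hdirac, by rw [hpay, hVp], by rw [hVp]⟩


end
end

section
/- Let V : Δ(Ω) → ℝ be bounded, continuous and concave. Then for every p ∉ I, sup_{μ ∈ S(p)} [ (1−δ)·μ(I) + δ·∫ V(φ(q)) dμ(q) ] equals the supremum of the same expression over those μ ∈ S(p) that are carried by at most two points of Δ(Ω). (At any belief outside the investment region, splittings into at most two posterior beliefs suffice.) -/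
open MeasureTheory Set

noncomputable section

variable {Ω : Type*}

open ENNReal

/-- Auxiliary: normalized restriction of `μ` to `B ⊆ Δ(Ω)`: its barycenter lies in every
closed convex superset of `B` and Jensen's inequality holds for `W`. -/
lemma aux_restrict [Fintype Ω] (W : (Ω → ℝ) → ℝ) (C : ℝ)
    (hWc : ContinuousOn W (stdSimplex ℝ Ω))
    (hWconc : ConcaveOn ℝ (stdSimplex ℝ Ω) W)
    (hWb : ∀ q ∈ stdSimplex ℝ Ω, |W q| ≤ C)
    (μ : Measure (Ω → ℝ)) [IsProbabilityMeasure μ]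
    (B : Set (Ω → ℝ)) (hBm : MeasurableSet B) (hBs : B ⊆ stdSimplex ℝ Ω) (hB0 : μ B ≠ 0) :
    ∃ qb : Ω → ℝ,
      (∀ T : Set (Ω → ℝ), Convex ℝ T → IsClosed T → B ⊆ T → qb ∈ T) ∧
      (μ B).toReal • qb = ∫ q in B, q ∂μ ∧
      ∫ q in B, W q ∂μ ≤ (μ B).toReal * W qb := by
  have hsm : MeasurableSet (stdSimplex ℝ Ω) := (isClosed_stdSimplex ℝ Ω).measurableSet
  have hBfin : μ B ≠ ⊤ := measure_ne_top μ B
  have htpos : (μ B).toReal ≠ 0 := ENNReal.toReal_ne_zero.2 ⟨hB0, hBfin⟩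
  set ρ : Measure (Ω → ℝ) := (μ B)⁻¹ • μ.restrict B with hρ
  haveI : IsProbabilityMeasure ρ := by
    constructor
    rw [hρ, Measure.smul_apply, Measure.restrict_apply MeasurableSet.univ, univ_inter,
      smul_eq_mul, ENNReal.inv_mul_cancel hB0 hBfin]
  have hmem : ∀ᵐ q ∂ρ, q ∈ B := by
    rw [ae_iff]
    have : ρ Bᶜ = 0 := by
      rw [hρ, Measure.smul_apply, Measure.restrict_apply hBm.compl, compl_inter_self]
      simp
    exact this
  have hmems : ∀ᵐ q ∂ρ, q ∈ stdSimplex ℝ Ω := hmem.mono fun q hq => hBs hq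
  have hac : ρ ≪ μ.restrict (stdSimplex ℝ Ω) := by
    intro t ht
    rw [hρ, Measure.smul_apply, smul_eq_mul]
    have h1 : μ.restrict B t ≤ μ.restrict (stdSimplex ℝ Ω) t :=
      Measure.restrict_mono hBs le_rfl t
    rw [ht] at h1
    simp [le_antisymm h1 zero_le]
  have hWm : AEStronglyMeasurable W ρ :=
    ((hWc.aestronglyMeasurable hsm).mono_ac hac)
  have hWint : Integrable W ρ := by
    refine Integrable.mono' (integrable_const C) hWm ?_
    filter_upwards [hmems] with q hq
    simpa [Real.norm_eq_abs] using hWb q hq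
  have hid_int : Integrable (fun q : Ω → ℝ => q) ρ := by
    refine Integrable.mono' (integrable_const 1)
      measurable_id.stronglyMeasurable.aestronglyMeasurable ?_
    filter_upwards [hmems] with q hq
    simpa using stdSimplex_subset_closedBall hq
  refine ⟨∫ q, q ∂ρ, fun T hT hTc hBT =>
    hT.integral_mem hTc (hmem.mono fun q hq => hBT hq) hid_int, ?_, ?_⟩
  · rw [hρ, integral_smul_measure, ENNReal.toReal_inv, smul_smul,
      mul_inv_cancel₀ htpos, one_smul]
  · have hj : ∫ q, W q ∂ρ ≤ W (∫ q, q ∂ρ) :=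
      hWconc.le_map_integral hWc (isClosed_stdSimplex ℝ Ω) hmems hid_int hWint
    have : ∫ q, W q ∂ρ = (μ B).toReal⁻¹ * ∫ q in B, W q ∂μ := by
      rw [hρ, integral_smul_measure, ENNReal.toReal_inv, smul_eq_mul]
    rw [this] at hj
    have := mul_le_mul_of_nonneg_left hj (ENNReal.toReal_nonneg (a := μ B))
    rwa [← mul_assoc, mul_inv_cancel₀ htpos, one_mul] at this

/-- Integrability of a bounded, continuous-on-the-simplex function with respect to a measure
restricted to a subset of the simplex. -/
lemma aux_integrableOn [Fintype Ω] (W : (Ω → ℝ) → ℝ) (C : ℝ)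
    (hWc : ContinuousOn W (stdSimplex ℝ Ω))
    (hWb : ∀ q ∈ stdSimplex ℝ Ω, |W q| ≤ C)
    (μ : Measure (Ω → ℝ)) [IsFiniteMeasure μ]
    (B : Set (Ω → ℝ)) (hBm : MeasurableSet B) (hBs : B ⊆ stdSimplex ℝ Ω) :
    IntegrableOn W B μ := by
  have hsm : MeasurableSet (stdSimplex ℝ Ω) := (isClosed_stdSimplex ℝ Ω).measurableSet
  have hac : μ.restrict B ≪ μ.restrict (stdSimplex ℝ Ω) := by
    intro t ht
    have h1 : μ.restrict B t ≤ μ.restrict (stdSimplex ℝ Ω) t :=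
      Measure.restrict_mono hBs le_rfl t
    rw [ht] at h1
    exact le_antisymm h1 zero_le
  refine Integrable.mono' (integrable_const C)
    ((hWc.aestronglyMeasurable hsm).mono_ac hac) ?_
  filter_upwards [ae_restrict_mem hBm] with q hq
  simpa [Real.norm_eq_abs] using hWb q (hBs hq)

lemma aux_integrableOn_id [Fintype Ω]
    (μ : Measure (Ω → ℝ)) [IsFiniteMeasure μ]
    (B : Set (Ω → ℝ)) (hBm : MeasurableSet B) (hBs : B ⊆ stdSimplex ℝ Ω) :
    IntegrableOn (fun q : Ω → ℝ => q) B μ := by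
  refine Integrable.mono' (integrable_const 1)
    measurable_id.stronglyMeasurable.aestronglyMeasurable ?_
  filter_upwards [ae_restrict_mem hBm] with q hq
  simpa using stdSimplex_subset_closedBall (hBs hq)

/-- Integral of a function against a combination of two Dirac measures carried by the
simplex, evaluated over the simplex. -/
lemma aux_integral_two_dirac [Fintype Ω] (W : (Ω → ℝ) → ℝ)
    (q₁ q₂ : Ω → ℝ) (h₁ : q₁ ∈ stdSimplex ℝ Ω) (h₂ : q₂ ∈ stdSimplex ℝ Ω)
    (a b : ℝ≥0∞) (ha : a ≠ ⊤) (hb : b ≠ ⊤) :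
    ∫ q in stdSimplex ℝ Ω, W q ∂(a • Measure.dirac q₁ + b • Measure.dirac q₂)
      = a.toReal * W q₁ + b.toReal * W q₂ := by
  have hsm : MeasurableSet (stdSimplex ℝ Ω) := (isClosed_stdSimplex ℝ Ω).measurableSet
  set ν : Measure (Ω → ℝ) := a • Measure.dirac q₁ + b • Measure.dirac q₂ with hν
  have hνs : ν.restrict (stdSimplex ℝ Ω) = ν := by
    refine Measure.restrict_eq_self_of_ae_mem (ae_iff.2 ?_)
    have : ν {q | ¬ q ∈ stdSimplex ℝ Ω} = a • Measure.dirac q₁ (stdSimplex ℝ Ω)ᶜ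
        + b • Measure.dirac q₂ (stdSimplex ℝ Ω)ᶜ := rfl
    rw [this, Measure.dirac_apply' _ hsm.compl, Measure.dirac_apply' _ hsm.compl,
      indicator_of_notMem (by simpa using h₁), indicator_of_notMem (by simpa using h₂)]
    simp
  set W' : (Ω → ℝ) → ℝ := fun q => if q = q₁ then W q₁ else if q = q₂ then W q₂ else 0
    with hW'
  have hW'm : Measurable W' :=
    Measurable.ite (measurableSet_eq) measurable_const
      (Measurable.ite (measurableSet_eq) measurable_const measurable_const)
  have hnull : ν ({q₁, q₂} : Set (Ω → ℝ))ᶜ = 0 := by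
    have heq : ν ({q₁, q₂} : Set (Ω → ℝ))ᶜ = a • Measure.dirac q₁ ({q₁, q₂} : Set (Ω → ℝ))ᶜ
        + b • Measure.dirac q₂ ({q₁, q₂} : Set (Ω → ℝ))ᶜ := rfl
    have hm : MeasurableSet ({q₁, q₂} : Set (Ω → ℝ)) :=
      (measurableSet_singleton q₂).insert q₁
    rw [heq, Measure.dirac_apply' _ hm.compl, Measure.dirac_apply' _ hm.compl,
      indicator_of_notMem (by simp), indicator_of_notMem (by simp)]
    simp
  have hsub : {q | ¬ W q = W' q} ⊆ ({q₁, q₂} : Set (Ω → ℝ))ᶜ := by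
    intro q hq hmem
    rcases hmem with h | h
    · exact hq (by simp [hW', h])
    · simp only [mem_singleton_iff] at h
      subst h
      by_cases h' : q = q₁ <;> simp [hW', h'] at hq ⊢
  have hae : W =ᵐ[ν] W' := ae_iff.2 (measure_mono_null hsub hnull)
  have hint : ∀ (c : ℝ≥0∞) (_ : c ≠ ⊤) (x : Ω → ℝ), Integrable W' (c • Measure.dirac x) := by
    intro c hc x
    refine Integrable.smul_measure ?_ hc
    refine ⟨hW'm.stronglyMeasurable.aestronglyMeasurable, ?_⟩
    rw [HasFiniteIntegral, lintegral_dirac' x (by fun_prop)]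
    exact ENNReal.coe_lt_top
  rw [hνs, integral_congr_ae hae, hν, integral_add_measure (hint a ha q₁) (hint b hb q₂),
    integral_smul_measure, integral_smul_measure,
    integral_dirac' W' q₁ hW'm.stronglyMeasurable, integral_dirac' W' q₂ hW'm.stronglyMeasurable]
  have h1 : W' q₁ = W q₁ := by simp [hW']
  have h2 : W' q₂ = W q₂ := by
    by_cases h' : q₂ = q₁ <;> simp [hW', h']
  rw [h1, h2, smul_eq_mul, smul_eq_mul]

/-- outside the investment region, splittings carried by at most two points
suffice: the supremum over all of `S(p)` equals the supremum over two-point splittings. -/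
theorem two_point_splittings_suffice [Fintype Ω] [Nonempty Ω]
    (r : Ω → ℝ) (δ : ℝ) (hδ : δ ∈ Ico (0 : ℝ) 1)
    (φ : (Ω → ℝ) → Ω → ℝ)
    (hφmaps : MapsTo φ (stdSimplex ℝ Ω) (stdSimplex ℝ Ω))
    (hφcont : ContinuousOn φ (stdSimplex ℝ Ω))
    (hφaff : ∀ x ∈ stdSimplex ℝ Ω, ∀ y ∈ stdSimplex ℝ Ω, ∀ t ∈ Icc (0 : ℝ) 1,
      φ (t • x + (1 - t) • y) = t • φ x + (1 - t) • φ y)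
    (V : (Ω → ℝ) → ℝ)
    (hVb : ∃ C, ∀ p ∈ stdSimplex ℝ Ω, |V p| ≤ C)
    (hVcont : ContinuousOn V (stdSimplex ℝ Ω))
    (hVconc : ConcaveOn ℝ (stdSimplex ℝ Ω) V)
    (p : Ω → ℝ) (hp : p ∈ stdSimplex ℝ Ω) (hpJ : p ∉ invest r) :
    sSup (dppPayoff r δ φ V '' Splittings p)
      = sSup (dppPayoff r δ φ V ''
          {μ ∈ Splittings p | ∃ q₁ q₂ : Ω → ℝ, μ {q₁, q₂} = 1}) := by
  obtain ⟨C, hVb⟩ := hVb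
  have hsm : MeasurableSet (stdSimplex ℝ Ω) := (isClosed_stdSimplex ℝ Ω).measurableSet
  have hs_conv : Convex ℝ (stdSimplex ℝ Ω) := convex_stdSimplex ℝ Ω
  -- The investment region is closed, convex, measurable, and contained in the simplex
  have hA_sub : invest r ⊆ stdSimplex ℝ Ω := fun q hq => hq.1
  have hlin : IsLinearMap ℝ (fun q : Ω → ℝ => ∑ ω, q ω * r ω) := by
    constructor
    · intro x y; simp [add_mul, Finset.sum_add_distrib]
    · intro c x; simp [Finset.mul_sum, mul_assoc]
  have hA_conv : Convex ℝ (invest r) :=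
    hs_conv.inter (convex_halfSpace_ge hlin 0)
  have hA_closed : IsClosed (invest r) := by
    have : invest r = stdSimplex ℝ Ω ∩ (fun q : Ω → ℝ => ∑ ω, q ω * r ω) ⁻¹' Ici 0 := rfl
    rw [this]
    exact (isClosed_stdSimplex ℝ Ω).inter (isClosed_Ici.preimage (by fun_prop))
  have hAm : MeasurableSet (invest r) := hA_closed.measurableSet
  -- The composition `W = V ∘ φ`
  set W : (Ω → ℝ) → ℝ := fun q => V (φ q) with hW
  have hWc : ContinuousOn W (stdSimplex ℝ Ω) := hVcont.comp hφcont hφmaps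
  have hWb : ∀ q ∈ stdSimplex ℝ Ω, |W q| ≤ C := fun q hq => hVb _ (hφmaps hq)
  have hWconc : ConcaveOn ℝ (stdSimplex ℝ Ω) W := by
    refine ⟨hs_conv, fun x hx y hy a b ha hb hab => ?_⟩
    have hb' : b = 1 - a := by linarith
    have key : φ (a • x + (1 - a) • y) = a • φ x + (1 - a) • φ y :=
      hφaff x hx y hy a ⟨ha, by linarith⟩
    subst hb'
    calc a • W x + (1 - a) • W y = a • V (φ x) + (1 - a) • V (φ y) := rfl
    _ ≤ V (a • φ x + (1 - a) • φ y) :=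
        hVconc.2 (hφmaps hx) (hφmaps hy) ha hb (by linarith)
    _ = W (a • x + (1 - a) • y) := (congrArg V key).symm
  have hC0 : 0 ≤ C := le_trans (abs_nonneg _) (hVb p hp)
  -- Uniform upper bound for payoffs of splittings
  have hbd : ∀ ν ∈ Splittings p, dppPayoff r δ φ V ν ≤ (1 - δ) + δ * C := by
    rintro ν ⟨hνprob, hνs, -⟩
    have h1 : (ν (invest r)).toReal ≤ 1 := by
      have := prob_le_one (μ := ν) (s := invest r)
      exact ENNReal.toReal_le_of_le_ofReal zero_le_one (by simpa using this)
    have h2 : ∫ q in stdSimplex ℝ Ω, W q ∂ν ≤ C := by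
      have hfin : IsFiniteMeasure (ν.restrict (stdSimplex ℝ Ω)) := by
        constructor
        rw [Measure.restrict_apply MeasurableSet.univ, univ_inter, hνs]
        exact ENNReal.one_lt_top
      have := norm_integral_le_of_norm_le_const (μ := ν.restrict (stdSimplex ℝ Ω))
        (f := W) (C := C) ?_
      · calc ∫ q in stdSimplex ℝ Ω, W q ∂ν ≤ ‖∫ q in stdSimplex ℝ Ω, W q ∂ν‖ :=
            le_abs_self _
        _ ≤ C * ((ν.restrict (stdSimplex ℝ Ω)) univ).toReal := this
        _ = C := by
            rw [Measure.restrict_apply MeasurableSet.univ, univ_inter, hνs]; simp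
      · filter_upwards [ae_restrict_mem hsm] with q hq
        simpa [Real.norm_eq_abs] using hWb q hq
    have hd0 := hδ.1
    have hd1 : (0:ℝ) ≤ 1 - δ := by linarith [hδ.2]
    calc dppPayoff r δ φ V ν = (1 - δ) * (ν (invest r)).toReal
          + δ * ∫ q in stdSimplex ℝ Ω, W q ∂ν := rfl
    _ ≤ (1 - δ) * 1 + δ * C := by
        gcongr
    _ = (1 - δ) + δ * C := by ring
  -- The Dirac measure at p is a two-point splitting
  have hdirac : Measure.dirac p ∈ Splittings p :=
    ⟨by infer_instance, Measure.dirac_apply_of_mem hp,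
      integral_dirac' _ p measurable_id.stronglyMeasurable⟩
  have hdirac2 : Measure.dirac p ∈
      {μ ∈ Splittings p | ∃ q₁ q₂ : Ω → ℝ, μ {q₁, q₂} = 1} :=
    ⟨hdirac, p, p, Measure.dirac_apply_of_mem (by simp)⟩
  have hsubset : {μ ∈ Splittings p | ∃ q₁ q₂ : Ω → ℝ, μ {q₁, q₂} = 1} ⊆ Splittings p :=
    fun μ hμ => hμ.1
  have hbddL : BddAbove (dppPayoff r δ φ V '' Splittings p) := by
    refine ⟨(1 - δ) + δ * C, ?_⟩
    rintro y ⟨ν, hν, rfl⟩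
    exact hbd ν hν
  have hbddR : BddAbove (dppPayoff r δ φ V ''
      {μ ∈ Splittings p | ∃ q₁ q₂ : Ω → ℝ, μ {q₁, q₂} = 1}) :=
    hbddL.mono (image_mono hsubset)
  refine le_antisymm ?_ (csSup_le_csSup hbddL ⟨_, Measure.dirac p, hdirac2, rfl⟩
    (image_mono hsubset))
  refine csSup_le ⟨_, Measure.dirac p, hdirac, rfl⟩ ?_
  rintro y ⟨μ, hμ, rfl⟩
  suffices h : ∃ ν ∈ {μ ∈ Splittings p | ∃ q₁ q₂ : Ω → ℝ, μ {q₁, q₂} = 1},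
      dppPayoff r δ φ V μ ≤ dppPayoff r δ φ V ν by
    obtain ⟨ν, hν, hle⟩ := h
    exact hle.trans (le_csSup hbddR ⟨ν, hν, rfl⟩)
  obtain ⟨hμprob, hμs, hμbar⟩ := hμ
  haveI := hμprob
  have hμcompl : μ (stdSimplex ℝ Ω)ᶜ = 0 := by
    rw [measure_compl hsm (measure_ne_top μ _), hμs]; simp
  have hrs : μ.restrict (stdSimplex ℝ Ω) = μ :=
    Measure.restrict_eq_self_of_ae_mem (ae_iff.2 hμcompl)
  have hd0 := hδ.1
  have hd1 : (0:ℝ) ≤ 1 - δ := by linarith [hδ.2]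
  by_cases hA0 : μ (invest r) = 0
  · -- no mass on the investment region: the Dirac at p dominates
    refine ⟨Measure.dirac p, hdirac2, ?_⟩
    obtain ⟨qb, hqbT, hqb_bar, hqb_j⟩ := aux_restrict W C hWc hWconc hWb μ
      (stdSimplex ℝ Ω) hsm subset_rfl (by rw [hμs]; exact one_ne_zero)
    have hqb_eq : qb = p := by
      have h1 : (μ (stdSimplex ℝ Ω)).toReal • qb = ∫ q in stdSimplex ℝ Ω, q ∂μ := hqb_bar
      rw [hμs, hrs, hμbar] at h1
      simpa using h1
    have hμA : (μ (invest r)).toReal = 0 := by rw [hA0]; simp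
    have hdA : ((Measure.dirac p) (invest r)).toReal = 0 := by
      rw [Measure.dirac_apply' _ hAm, indicator_of_notMem hpJ]; simp
    have hμW : ∫ q in stdSimplex ℝ Ω, W q ∂μ ≤ W p := by
      have := hqb_j
      rw [hμs, hqb_eq] at this
      simpa using this
    have hdW : ∫ q in stdSimplex ℝ Ω, W q ∂(Measure.dirac p) = W p := by
      have := aux_integral_two_dirac W p p hp hp 1 0 one_ne_top zero_ne_top
      simp only [one_smul, zero_smul, add_zero, ENNReal.toReal_one, one_mul,
        ENNReal.toReal_zero, zero_mul] at this
      simpa using this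
    show (1 - δ) * (μ (invest r)).toReal + δ * ∫ q in stdSimplex ℝ Ω, W q ∂μ
        ≤ (1 - δ) * ((Measure.dirac p) (invest r)).toReal
          + δ * ∫ q in stdSimplex ℝ Ω, W q ∂(Measure.dirac p)
    rw [hμA, hdA, hdW]
    gcongr
  · -- positive mass on the investment region
    obtain ⟨q₁, hq₁T, hq₁bar, hq₁j⟩ := aux_restrict W C hWc hWconc hWb μ
      (invest r) hAm hA_sub hA0
    have hq₁A : q₁ ∈ invest r := hq₁T _ hA_conv hA_closed subset_rfl
    have hq₁s : q₁ ∈ stdSimplex ℝ Ω := hA_sub hq₁A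
    set B : Set (Ω → ℝ) := stdSimplex ℝ Ω \ invest r with hB
    have hBm : MeasurableSet B := hsm.diff hAm
    have hBs : B ⊆ stdSimplex ℝ Ω := diff_subset
    have hunion : invest r ∪ B = stdSimplex ℝ Ω := union_diff_cancel hA_sub
    have hdisj : Disjoint (invest r) B := disjoint_sdiff_self_right
    have hab : μ (invest r) + μ B = 1 := by
      rw [← measure_union hdisj hBm, hunion, hμs]
    by_cases hB0 : μ B = 0
    · -- full mass on the investment region: barycenter p would lie in it, contradiction
      exfalso
      have hA1 : μ (invest r) = 1 := by rw [← hab, hB0, add_zero]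
      have hAcompl : μ (invest r)ᶜ = 0 := by
        rw [measure_compl hAm (measure_ne_top μ _), hA1]; simp
      have hrA : μ.restrict (invest r) = μ :=
        Measure.restrict_eq_self_of_ae_mem (ae_iff.2 hAcompl)
      have : (1:ℝ) • q₁ = p := by
        have := hq₁bar
        rwa [hA1, ENNReal.toReal_one, hrA, hμbar] at this
      rw [one_smul] at this
      exact hpJ (this ▸ hq₁A)
    · obtain ⟨q₂, hq₂T, hq₂bar, hq₂j⟩ := aux_restrict W C hWc hWconc hWb μ
        B hBm hBs hB0
      have hq₂s : q₂ ∈ stdSimplex ℝ Ω := hq₂T _ hs_conv (isClosed_stdSimplex ℝ Ω) hBs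
      set a : ℝ≥0∞ := μ (invest r) with ha
      set b : ℝ≥0∞ := μ B with hb
      have haf : a ≠ ⊤ := measure_ne_top μ _
      have hbf : b ≠ ⊤ := measure_ne_top μ _
      set ν : Measure (Ω → ℝ) := a • Measure.dirac q₁ + b • Measure.dirac q₂ with hν
      have hint_dirac : ∀ (c : ℝ≥0∞) (_ : c ≠ ⊤) (x : Ω → ℝ),
          Integrable (fun q : Ω → ℝ => q) (c • Measure.dirac x) := by
        intro c hc x
        refine Integrable.smul_measure ?_ hc
        refine ⟨measurable_id.stronglyMeasurable.aestronglyMeasurable, ?_⟩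
        rw [HasFiniteIntegral, lintegral_dirac' x (by fun_prop)]
        exact ENNReal.coe_lt_top
      haveI hνprob : IsProbabilityMeasure ν := by
        constructor
        have : ν univ = a * Measure.dirac q₁ univ + b * Measure.dirac q₂ univ := rfl
        rw [this]; simp [hab]
      -- ν is a splitting of p
      have hsplit_int : ∫ q in stdSimplex ℝ Ω, (fun q : Ω → ℝ => q) q ∂μ
          = (∫ q in invest r, q ∂μ) + ∫ q in B, q ∂μ := by
        rw [← hunion]
        exact setIntegral_union hdisj hBm
          (aux_integrableOn_id μ _ hAm hA_sub) (aux_integrableOn_id μ _ hBm hBs)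
      have hνbar : ∫ q, q ∂ν = p := by
        rw [hν, integral_add_measure (hint_dirac a haf q₁) (hint_dirac b hbf q₂),
          integral_smul_measure, integral_smul_measure,
          integral_dirac' (fun q : Ω → ℝ => q) q₁ measurable_id.stronglyMeasurable,
          integral_dirac' (fun q : Ω → ℝ => q) q₂ measurable_id.stronglyMeasurable,
          hq₁bar, hq₂bar, ← hsplit_int]
        rw [hrs, hμbar]
      have hνs : ν (stdSimplex ℝ Ω) = 1 := by
        have : ν (stdSimplex ℝ Ω) = a * Measure.dirac q₁ (stdSimplex ℝ Ω)
            + b * Measure.dirac q₂ (stdSimplex ℝ Ω) := rfl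
        rw [this, Measure.dirac_apply_of_mem hq₁s, Measure.dirac_apply_of_mem hq₂s,
          mul_one, mul_one, hab]
      have hν2 : ν {q₁, q₂} = 1 := by
        have : ν {q₁, q₂} = a * Measure.dirac q₁ {q₁, q₂}
            + b * Measure.dirac q₂ {q₁, q₂} := rfl
        rw [this, Measure.dirac_apply_of_mem (mem_insert _ _),
          Measure.dirac_apply_of_mem (show q₂ ∈ ({q₁, q₂} : Set (Ω → ℝ)) by simp),
          mul_one, mul_one, hab]
      refine ⟨ν, ⟨⟨hνprob, hνs, hνbar⟩, q₁, q₂, hν2⟩, ?_⟩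
      -- payoff comparison
      have hνA : a.toReal ≤ (ν (invest r)).toReal := by
        refine ENNReal.toReal_le_toReal haf (measure_ne_top ν _) |>.mpr ?_
        have : ν (invest r) = a * Measure.dirac q₁ (invest r)
            + b * Measure.dirac q₂ (invest r) := rfl
        rw [this, Measure.dirac_apply_of_mem hq₁A, mul_one]
        exact le_add_right le_rfl
      have hνW : ∫ q in stdSimplex ℝ Ω, W q ∂ν = a.toReal * W q₁ + b.toReal * W q₂ :=
        aux_integral_two_dirac W q₁ q₂ hq₁s hq₂s a b haf hbf
      have hμW : ∫ q in stdSimplex ℝ Ω, W q ∂μ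
          = (∫ q in invest r, W q ∂μ) + ∫ q in B, W q ∂μ := by
        rw [← hunion]
        exact setIntegral_union hdisj hBm
          (aux_integrableOn W C hWc hWb μ _ hAm hA_sub) (aux_integrableOn W C hWc hWb μ _ hBm hBs)
      show (1 - δ) * (μ (invest r)).toReal + δ * ∫ q in stdSimplex ℝ Ω, W q ∂μ
          ≤ (1 - δ) * (ν (invest r)).toReal + δ * ∫ q in stdSimplex ℝ Ω, W q ∂ν
      rw [hμW, hνW]
      have h1 : (1 - δ) * a.toReal ≤ (1 - δ) * (ν (invest r)).toReal :=
        mul_le_mul_of_nonneg_left hνA hd1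
      have h2 : (∫ q in invest r, W q ∂μ) + ∫ q in B, W q ∂μ
          ≤ a.toReal * W q₁ + b.toReal * W q₂ := add_le_add hq₁j hq₂j
      have h3 : δ * ((∫ q in invest r, W q ∂μ) + ∫ q in B, W q ∂μ)
          ≤ δ * (a.toReal * W q₁ + b.toReal * W q₂) := mul_le_mul_of_nonneg_left h2 hd0
      have : (1 - δ) * (μ (invest r)).toReal = (1 - δ) * a.toReal := by rw [← ha]
      rw [this]
      linarith

end
end

section
/- For every p ∈ J, the value of the linear program (LP) equals the value of the linear program (LP'): max{ Σ_ω π₁(ω) : (π₁,π₂) ∈ cone(E) × cone(Ω⁻), π₁ + π₂ = p } = max{ Σ_ω π(ω) : π ∈ ℝ^Ω, 0 ≤ π(ω) ≤ p(ω) for all ω ∈ Ω, Σ_ω π(ω)r(ω) ≥ 0 }. -/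
open Set

noncomputable section

variable {Ω : Type*}

/-- The investment frontier `F = {p ∈ Δ(Ω) : ⟨p,r⟩ = 0}`. -/
def frontier' [Fintype Ω] (r : Ω → ℝ) : Set (Ω → ℝ) :=
  {p | p ∈ stdSimplex ℝ Ω ∧ ∑ ω, p ω * r ω = 0}

/-- `cone(A)`: the convex hull of `A ∪ {0}`. -/
def cone' (A : Set (Ω → ℝ)) : Set (Ω → ℝ) :=
  convexHull ℝ (insert 0 A)

/-- The set of unit vectors corresponding to states with negative payoff. -/
def negVertices [DecidableEq Ω] (r : Ω → ℝ) : Set (Ω → ℝ) :=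
  {x | ∃ ω, r ω < 0 ∧ x = Pi.single ω 1}

set_option linter.unusedSectionVars false
section helpers
variable [Fintype Ω] [DecidableEq Ω] {r : Ω → ℝ}

lemma eq_single_of_support {a : Ω} {x : Ω → ℝ} (hx : x ∈ frontier' r)
    (h : ∀ ω, ω ≠ a → x ω = 0) : x = Pi.single a 1 := by
  have hxa : x a = 1 := by
    rw [← hx.1.2, Finset.sum_eq_single a (fun b _ hb => h b hb) (by simp)]
  funext ω
  by_cases hω : ω = a
  · subst hω; simp [hxa]
  · simp [Pi.single_eq_of_ne hω, h ω hω]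

lemma vertex_extreme {a : Ω} (ha : r a = 0) :
    Pi.single a 1 ∈ Set.extremePoints ℝ (frontier' r) := by
  have hmem : Pi.single a 1 ∈ frontier' r := by
    refine ⟨single_mem_stdSimplex ℝ a, ?_⟩
    rw [Finset.sum_eq_single a (fun b _ hb => by simp [Pi.single_eq_of_ne hb])
      (by simp)]
    simp [ha]
  refine mem_extremePoints.2 ⟨hmem, ?_⟩
  rintro x₁ hx₁ x₂ hx₂ ⟨c₁, c₂, hc₁, hc₂, hcs, heq⟩
  have key : ∀ ω, ω ≠ a → x₁ ω = 0 ∧ x₂ ω = 0 := by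
    intro ω hω
    have h0 : c₁ * x₁ ω + c₂ * x₂ ω = 0 := by
      have := congrFun heq ω
      simpa [Pi.single_eq_of_ne hω] using this
    have h1 : 0 ≤ c₁ * x₁ ω := mul_nonneg hc₁.le (hx₁.1.1 ω)
    have h2 : 0 ≤ c₂ * x₂ ω := mul_nonneg hc₂.le (hx₂.1.1 ω)
    have e1 : c₁ * x₁ ω = 0 ∧ c₂ * x₂ ω = 0 := by
      constructor <;> nlinarith
    exact ⟨(mul_eq_zero.1 e1.1).resolve_left hc₁.ne',
           (mul_eq_zero.1 e1.2).resolve_left hc₂.ne'⟩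
  exact ⟨eq_single_of_support hx₁ (fun ω hω => (key ω hω).1),
         eq_single_of_support hx₂ (fun ω hω => (key ω hω).2)⟩

lemma sum_support_pair {a b : Ω} (hab : a ≠ b) (f : Ω → ℝ)
    (h : ∀ ω, ω ≠ a → ω ≠ b → f ω = 0) : ∑ ω, f ω = f a + f b := by
  rw [← Finset.sum_subset (Finset.subset_univ {a, b})
    (fun ω _ hω => by
      simp only [Finset.mem_insert, Finset.mem_singleton, not_or] at hω
      exact h ω hω.1 hω.2)]
  rw [Finset.sum_pair hab]

lemma eq_edge_of_support {a b : Ω} (hra : 0 < r a) (hrb : r b < 0) {x : Ω → ℝ}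
    (hx : x ∈ frontier' r) (h : ∀ ω, ω ≠ a → ω ≠ b → x ω = 0) :
    x = Pi.single a (r b / (r b - r a)) + Pi.single b (1 - r b / (r b - r a)) := by
  have hab : a ≠ b := fun h => by rw [h] at hra; linarith
  have hsum : x a + x b = 1 := by rw [← sum_support_pair hab x h]; exact hx.1.2
  have hdot : x a * r a + x b * r b = 0 := by
    rw [← sum_support_pair hab (fun ω => x ω * r ω)
      (fun ω h1 h2 => by simp [h ω h1 h2])]
    exact hx.2
  have hd : r b - r a ≠ 0 := by linarith
  have hxa : x a = r b / (r b - r a) := by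
    field_simp
    nlinarith [hsum, hdot]
  have hxb : x b = 1 - r b / (r b - r a) := by rw [← hsum, hxa]; ring
  funext ω
  by_cases h1 : ω = a
  · subst h1; simp [Pi.single_apply, hab, hxa]
  · by_cases h2 : ω = b
    · subst h2; simp [Pi.single_apply, Ne.symm hab, hxb]
    · simp [Pi.single_apply, h1, h2, h ω h1 h2]

lemma edge_extreme {a b : Ω} (hra : 0 < r a) (hrb : r b < 0) :
    Pi.single a (r b / (r b - r a)) + Pi.single b (1 - r b / (r b - r a))
      ∈ Set.extremePoints ℝ (frontier' r) := by
  have hab : a ≠ b := fun h => by rw [h] at hra; linarith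
  set l : ℝ := r b / (r b - r a) with hl
  have hd : r b - r a < 0 := by linarith
  have hl0 : 0 < l := div_pos_iff.2 (Or.inr ⟨hrb, hd⟩)
  have hl1 : l < 1 := by rw [hl, div_lt_one_of_neg hd]; linarith
  set v : Ω → ℝ := Pi.single a l + Pi.single b (1 - l) with hv
  have hva : v a = l := by simp [hv, Pi.single_apply, hab]
  have hvb : v b = 1 - l := by simp [hv, Pi.single_apply, Ne.symm hab]
  have hvo : ∀ ω, ω ≠ a → ω ≠ b → v ω = 0 := fun ω h1 h2 => by
    simp [hv, Pi.single_apply, h1, h2]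
  have hmem : v ∈ frontier' r := by
    refine ⟨⟨fun ω => ?_, ?_⟩, ?_⟩
    · by_cases h1 : ω = a
      · subst h1; rw [hva]; linarith
      · by_cases h2 : ω = b
        · subst h2; rw [hvb]; linarith
        · rw [hvo ω h1 h2]
    · rw [sum_support_pair hab v hvo, hva, hvb]; ring
    · rw [sum_support_pair hab (fun ω => v ω * r ω)
        (fun ω h1 h2 => by simp [hvo ω h1 h2]), hva, hvb, hl]
      have hd' : r b - r a ≠ 0 := hd.ne
      field_simp
      ring
  refine mem_extremePoints.2 ⟨hmem, ?_⟩
  rintro x₁ hx₁ x₂ hx₂ ⟨c₁, c₂, hc₁, hc₂, hcs, heq⟩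
  have key : ∀ ω, ω ≠ a → ω ≠ b → x₁ ω = 0 ∧ x₂ ω = 0 := by
    intro ω h1 h2
    have h0 : c₁ * x₁ ω + c₂ * x₂ ω = 0 := by
      have := congrFun heq ω
      simpa [hvo ω h1 h2] using this
    have hn1 : 0 ≤ c₁ * x₁ ω := mul_nonneg hc₁.le (hx₁.1.1 ω)
    have hn2 : 0 ≤ c₂ * x₂ ω := mul_nonneg hc₂.le (hx₂.1.1 ω)
    have e1 : c₁ * x₁ ω = 0 ∧ c₂ * x₂ ω = 0 := by constructor <;> nlinarith
    exact ⟨(mul_eq_zero.1 e1.1).resolve_left hc₁.ne',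
           (mul_eq_zero.1 e1.2).resolve_left hc₂.ne'⟩
  exact ⟨eq_edge_of_support hra hrb hx₁ (fun ω h1 h2 => (key ω h1 h2).1),
         eq_edge_of_support hra hrb hx₂ (fun ω h1 h2 => (key ω h1 h2).2)⟩

lemma zero_support_case {q : Ω → ℝ} (hq : q ∈ frontier' r)
    (h : ∀ ω, q ω ≠ 0 → r ω = 0) :
    q ∈ convexHull ℝ (Set.extremePoints ℝ (frontier' r)) := by
  set t := Finset.univ.filter (fun ω => q ω ≠ 0) with ht
  have hws : ∑ ω ∈ t, q ω = 1 := by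
    rw [ht, Finset.sum_filter_ne_zero]; exact hq.1.2
  have hcm := Finset.centerMass_mem_convexHull (R := ℝ) (s := Set.extremePoints ℝ (frontier' r)) t
    (w := q) (z := fun ω => (Pi.single ω 1 : Ω → ℝ))
    (fun ω _ => hq.1.1 ω) (by rw [hws]; norm_num)
    (fun ω hω => by
      show (Pi.single ω 1 : Ω → ℝ) ∈ _
      refine vertex_extreme (h ω ?_)
      simpa [ht] using hω)
  have hcmeq : t.centerMass q (fun ω => (Pi.single ω 1 : Ω → ℝ)) = q := by
    rw [Finset.centerMass, hws, inv_one, one_smul]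
    rw [Finset.sum_subset (Finset.subset_univ t)
      (fun ω _ hω => by
        have : q ω = 0 := by by_contra hc; exact hω (by simp [ht, hc])
        simp [this])]
    funext ω'
    simp only [Finset.sum_apply, Pi.smul_apply, smul_eq_mul, Pi.single_apply]
    rw [Finset.sum_eq_single ω' (fun b _ hb => by simp [Ne.symm hb]) (by simp)]
    simp
  rwa [hcmeq] at hcm

lemma frontier_subset_hull (r : Ω → ℝ) {q : Ω → ℝ} (hq : q ∈ frontier' r) :
    q ∈ convexHull ℝ (Set.extremePoints ℝ (frontier' r)) := by
  obtain ⟨n, hn⟩ : ∃ n, (Finset.univ.filter (fun ω => q ω ≠ 0 ∧ r ω ≠ 0)).card ≤ n :=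
    ⟨_, le_rfl⟩
  induction n generalizing q with
  | zero =>
    refine zero_support_case hq (fun ω hω => ?_)
    by_contra hrω
    have : ω ∈ Finset.univ.filter (fun ω => q ω ≠ 0 ∧ r ω ≠ 0) := by simp [hω, hrω]
    have := Finset.card_pos.2 ⟨ω, this⟩
    omega
  | succ n ih =>
    set t := Finset.univ.filter (fun ω => q ω ≠ 0 ∧ r ω ≠ 0) with htdef
    by_cases hte : t = ∅
    · refine zero_support_case hq (fun ω hω => ?_)
      by_contra hrω
      have : ω ∈ t := by simp [htdef, hω, hrω]
      simp [hte] at this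
    -- t nonempty: find a with q a > 0, r a > 0 and b with q b > 0, r b < 0
    obtain ⟨ω₀, hω₀⟩ := Finset.nonempty_of_ne_empty hte
    rw [htdef, Finset.mem_filter] at hω₀
    have hq0 : ∀ ω, 0 ≤ q ω := hq.1.1
    have hqpos : ∀ ω, q ω ≠ 0 → 0 < q ω := fun ω h => (hq0 ω).lt_of_ne (Ne.symm h)
    have hb : ∃ b, 0 < q b ∧ r b < 0 := by
      by_contra hcon
      push_neg at hcon
      have hterms : ∀ ω ∈ Finset.univ, 0 ≤ q ω * r ω := by
        intro ω _
        rcases eq_or_ne (q ω) 0 with h|h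
        · simp [h]
        · exact mul_nonneg (hq0 ω) (hcon ω (hqpos ω h))
      have hwit : 0 < q ω₀ * r ω₀ := by
        have h1 := hqpos ω₀ hω₀.2.1
        have h2 := (hcon ω₀ h1).lt_of_ne (Ne.symm hω₀.2.2)
        exact mul_pos h1 h2
      have := Finset.sum_pos' hterms ⟨ω₀, Finset.mem_univ _, hwit⟩
      rw [hq.2] at this; exact lt_irrefl _ this
    have ha : ∃ a, 0 < q a ∧ 0 < r a := by
      by_contra hcon
      push_neg at hcon
      have hterms : ∀ ω ∈ Finset.univ, 0 ≤ -(q ω * r ω) := by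
        intro ω _
        rcases eq_or_ne (q ω) 0 with h|h
        · simp [h]
        · have := hcon ω (hqpos ω h)
          have := mul_nonpos_of_nonneg_of_nonpos (hq0 ω) this
          linarith
      have hwit : 0 < -(q ω₀ * r ω₀) := by
        have h1 := hqpos ω₀ hω₀.2.1
        have h2 : r ω₀ < 0 := (hcon ω₀ h1).lt_of_ne hω₀.2.2
        nlinarith
      have := Finset.sum_pos' hterms ⟨ω₀, Finset.mem_univ _, hwit⟩
      rw [Finset.sum_neg_distrib, hq.2] at this
      simp at this
    obtain ⟨a, hqa, hra⟩ := ha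
    obtain ⟨b, hqb, hrb⟩ := hb
    have hab : a ≠ b := fun h => by rw [h] at hra; linarith
    set l : ℝ := r b / (r b - r a) with hl
    have hd : r b - r a < 0 := by linarith
    have hl0 : 0 < l := div_pos_iff.2 (Or.inr ⟨hrb, hd⟩)
    have hl1 : l < 1 := by rw [hl, div_lt_one_of_neg hd]; linarith
    set v : Ω → ℝ := Pi.single a l + Pi.single b (1 - l) with hv
    have hva : v a = l := by simp [hv, Pi.single_apply, hab]
    have hvb : v b = 1 - l := by simp [hv, Pi.single_apply, Ne.symm hab]
    have hvo : ∀ ω, ω ≠ a → ω ≠ b → v ω = 0 := fun ω h1 h2 => by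
      simp [hv, Pi.single_apply, h1, h2]
    have hv0 : ∀ ω, 0 ≤ v ω := by
      intro ω
      by_cases h1 : ω = a
      · subst h1; rw [hva]; linarith
      · by_cases h2 : ω = b
        · subst h2; rw [hvb]; linarith
        · rw [hvo ω h1 h2]
    have hvsum : ∑ ω, v ω = 1 := by
      rw [sum_support_pair hab v hvo, hva, hvb]; ring
    have hvdot : ∑ ω, v ω * r ω = 0 := by
      rw [sum_support_pair hab (fun ω => v ω * r ω)
        (fun ω h1 h2 => by simp [hvo ω h1 h2]), hva, hvb, hl]
      have hd' : r b - r a ≠ 0 := hd.ne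
      field_simp; ring
    have hvE : v ∈ Set.extremePoints ℝ (frontier' r) := edge_extreme hra hrb
    set c : ℝ := min (q a / l) (q b / (1 - l)) with hc
    have hc0 : 0 < c := lt_min (div_pos hqa hl0) (div_pos hqb (by linarith))
    have hcla : c * l ≤ q a := by
      have := min_le_left (q a / l) (q b / (1 - l))
      calc c * l ≤ (q a / l) * l := by nlinarith
      _ = q a := by field_simp
    have hclb : c * (1 - l) ≤ q b := by
      have := min_le_right (q a / l) (q b / (1 - l))
      have h1l : (0:ℝ) < 1 - l := by linarith
      calc c * (1 - l) ≤ (q b / (1 - l)) * (1 - l) := by nlinarith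
      _ = q b := by field_simp
    have hc1 : c ≤ 1 := by
      by_contra hcon
      push_neg at hcon
      have h1 : l < q a := by nlinarith
      have h2 : 1 - l < q b := by nlinarith
      have h3 : q a + q b ≤ 1 := by
        have h4 := Finset.sum_le_sum_of_subset_of_nonneg (f := q) (Finset.subset_univ {a, b})
          (fun ω _ _ => hq0 ω)
        rw [Finset.sum_pair hab, hq.1.2] at h4
        exact h4
      linarith
    have hqv : ∀ ω, c * v ω ≤ q ω := by
      intro ω
      by_cases h1 : ω = a
      · subst h1; rw [hva]; exact hcla
      · by_cases h2 : ω = b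
        · subst h2; rw [hvb]; exact hclb
        · rw [hvo ω h1 h2, mul_zero]; exact hq0 ω
    rcases eq_or_lt_of_le hc1 with hceq | hclt
    · -- c = 1 : q = v
      have hqeqv : q = v := by
        have hsz : ∑ ω, (q ω - v ω) = 0 := by
          rw [Finset.sum_sub_distrib, hq.1.2, hvsum]; ring
        have hnn : ∀ ω ∈ Finset.univ, 0 ≤ q ω - v ω := by
          intro ω _
          have := hqv ω
          rw [hceq] at this
          linarith [this]
        have := (Finset.sum_eq_zero_iff_of_nonneg hnn).1 hsz
        funext ω
        have := this ω (Finset.mem_univ ω)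
        linarith
      rw [hqeqv]
      exact subset_convexHull ℝ _ hvE
    · -- c < 1
      have h1c : (0:ℝ) < 1 - c := by linarith
      set q' : Ω → ℝ := fun ω => (1 - c)⁻¹ * (q ω - c * v ω) with hq'def
      have hq'apply : ∀ ω, q' ω = (1 - c)⁻¹ * (q ω - c * v ω) := fun ω => rfl
      have e1 : ∑ ω, (q ω - c * v ω) = 1 - c := by
        rw [Finset.sum_sub_distrib, hq.1.2, ← Finset.mul_sum, hvsum]; ring
      have hq'sum : ∑ ω, q' ω = 1 := by
        have e2 : ∑ ω, q' ω = (1 - c)⁻¹ * ∑ ω, (q ω - c * v ω) := by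
          simp only [hq'apply, Finset.mul_sum]
        rw [e2, e1, inv_mul_cancel₀ h1c.ne']
      have hq'dot : ∑ ω, q' ω * r ω = 0 := by
        have e3 : ∑ ω, (q ω - c * v ω) * r ω = 0 := by
          have : ∀ ω, (q ω - c * v ω) * r ω = q ω * r ω - c * (v ω * r ω) := by
            intro ω; ring
          rw [Finset.sum_congr rfl (fun ω _ => this ω), Finset.sum_sub_distrib,
            hq.2, ← Finset.mul_sum, hvdot]
          ring
        have e4 : ∑ ω, q' ω * r ω = (1 - c)⁻¹ * ∑ ω, (q ω - c * v ω) * r ω := by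
          rw [Finset.mul_sum]
          exact Finset.sum_congr rfl (fun ω _ => by rw [hq'apply ω]; ring)
        rw [e4, e3, mul_zero]
      have hq'mem : q' ∈ frontier' r :=
        ⟨⟨fun ω => mul_nonneg (by positivity) (by linarith [hqv ω]), hq'sum⟩, hq'dot⟩
      -- support of q' strictly smaller
      have hsub : Finset.univ.filter (fun ω => q' ω ≠ 0 ∧ r ω ≠ 0) ⊆ t := by
        intro ω hω
        rw [Finset.mem_filter] at hω
        rw [htdef, Finset.mem_filter]
        refine ⟨Finset.mem_univ _, ?_, hω.2.2⟩
        intro hq0ω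
        apply hω.2.1
        have hωa : ω ≠ a := fun h => by rw [h] at hq0ω; linarith
        have hωb : ω ≠ b := fun h => by rw [h] at hq0ω; linarith
        rw [hq'apply ω, hq0ω, hvo ω hωa hωb]
        ring
      have hdrop : ∃ ω₁ ∈ t, q' ω₁ = 0 := by
        rcases min_cases (q a / l) (q b / (1 - l)) with ⟨hmin, _⟩ | ⟨hmin, _⟩
        · refine ⟨a, ?_, ?_⟩
          · rw [htdef, Finset.mem_filter]; exact ⟨Finset.mem_univ _, hqa.ne', hra.ne'⟩
          · rw [hq'apply a, hva, ← hc] at *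
            rw [hmin]
            field_simp
            simp
        · refine ⟨b, ?_, ?_⟩
          · rw [htdef, Finset.mem_filter]; exact ⟨Finset.mem_univ _, hqb.ne', hrb.ne⟩
          · rw [hq'apply b, hvb, ← hc] at *
            rw [hmin]
            have h1l : (1:ℝ) - l ≠ 0 := by linarith
            field_simp
            simp
      obtain ⟨ω₁, hω₁t, hω₁q⟩ := hdrop
      have hssub : Finset.univ.filter (fun ω => q' ω ≠ 0 ∧ r ω ≠ 0) ⊂ t := by
        refine ⟨hsub, fun hback => ?_⟩
        have := hback hω₁t
        rw [Finset.mem_filter] at this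
        exact this.2.1 hω₁q
      have hcard : (Finset.univ.filter (fun ω => q' ω ≠ 0 ∧ r ω ≠ 0)).card ≤ n := by
        have := Finset.card_lt_card hssub
        omega
      have hq'hull := ih hq'mem hcard
      have hdecomp : q = c • v + (1 - c) • q' := by
        funext ω
        simp only [Pi.add_apply, Pi.smul_apply, smul_eq_mul, hq'apply ω]
        field_simp
        ring
      rw [hdecomp]
      exact (convex_convexHull ℝ _) (subset_convexHull ℝ _ hvE) hq'hull
        hc0.le h1c.le (by ring)

lemma smul_mem_cone {A : Set (Ω → ℝ)} {q : Ω → ℝ} {t : ℝ}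
    (hq : q ∈ convexHull ℝ A) (ht0 : 0 ≤ t) (ht1 : t ≤ 1) :
    t • q ∈ cone' A := by
  have h0 : (0 : Ω → ℝ) ∈ cone' A :=
    subset_convexHull ℝ _ (Set.mem_insert _ _)
  have hqA : q ∈ cone' A := convexHull_mono (Set.subset_insert _ _) hq
  have := (convex_convexHull ℝ (insert (0 : Ω → ℝ) A)) h0 hqA
    (by linarith : (0:ℝ) ≤ 1 - t) ht0 (by ring)
  simpa [cone'] using this

lemma mem_coneE {x : Ω → ℝ} (hx0 : ∀ ω, 0 ≤ x ω) (hx1 : ∑ ω, x ω ≤ 1)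
    (hxr : ∑ ω, x ω * r ω = 0) :
    x ∈ cone' (Set.extremePoints ℝ (frontier' r)) := by
  set t := ∑ ω, x ω with htd
  rcases eq_or_lt_of_le (Finset.sum_nonneg (fun ω _ => hx0 ω)) with h0 | hpos
  · have : x = 0 := by
      funext ω
      exact ((Finset.sum_eq_zero_iff_of_nonneg (fun ω _ => hx0 ω)).1 h0.symm ω
        (Finset.mem_univ ω))
    rw [this]
    exact subset_convexHull ℝ _ (Set.mem_insert _ _)
  · set q : Ω → ℝ := t⁻¹ • x with hqd
    have hq : q ∈ frontier' r := by
      refine ⟨⟨fun ω => mul_nonneg (inv_nonneg.2 hpos.le) (hx0 ω), ?_⟩, ?_⟩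
      · simp only [hqd, Pi.smul_apply, smul_eq_mul, ← Finset.mul_sum]
        rw [inv_mul_cancel₀ hpos.ne']
      · simp only [hqd, Pi.smul_apply, smul_eq_mul, mul_assoc, ← Finset.mul_sum]
        rw [hxr, mul_zero]
    have hxq : x = t • q := by
      rw [hqd, smul_smul, mul_inv_cancel₀ hpos.ne', one_smul]
    rw [hxq]
    exact smul_mem_cone (frontier_subset_hull r hq) hpos.le hx1

lemma mem_coneNeg {x : Ω → ℝ} (hx0 : ∀ ω, 0 ≤ x ω) (hx1 : ∑ ω, x ω ≤ 1)
    (hsupp : ∀ ω, x ω ≠ 0 → r ω < 0) :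
    x ∈ cone' (negVertices r) := by
  set t := ∑ ω, x ω with htd
  rcases eq_or_lt_of_le (Finset.sum_nonneg (fun ω _ => hx0 ω)) with h0 | hpos
  · have : x = 0 := by
      funext ω
      exact ((Finset.sum_eq_zero_iff_of_nonneg (fun ω _ => hx0 ω)).1 h0.symm ω
        (Finset.mem_univ ω))
    rw [this]
    exact subset_convexHull ℝ _ (Set.mem_insert _ _)
  · set s := Finset.univ.filter (fun ω => x ω ≠ 0) with hsd
    have hws : ∑ ω ∈ s, x ω = t := by rw [hsd, Finset.sum_filter_ne_zero]
    have hcm := Finset.centerMass_mem_convexHull (R := ℝ) (s := negVertices r) s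
      (w := x) (z := fun ω => (Pi.single ω 1 : Ω → ℝ))
      (fun ω _ => hx0 ω) (by rw [hws]; exact hpos)
      (fun ω hω => by
        show (Pi.single ω 1 : Ω → ℝ) ∈ negVertices r
        refine ⟨ω, hsupp ω ?_, rfl⟩
        simpa [hsd] using hω)
    have hcmeq : s.centerMass x (fun ω => (Pi.single ω 1 : Ω → ℝ)) = t⁻¹ • x := by
      rw [Finset.centerMass, hws]
      congr 1
      rw [Finset.sum_subset (Finset.subset_univ s)
        (fun ω _ hω => by
          have : x ω = 0 := by by_contra hc; exact hω (by simp [hsd, hc])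
          simp [this])]
      funext ω'
      simp only [Finset.sum_apply, Pi.smul_apply, smul_eq_mul, Pi.single_apply]
      rw [Finset.sum_eq_single ω' (fun b _ hb => by simp [Ne.symm hb]) (by simp)]
      simp
    have hxq : x = t • (t⁻¹ • x) := by
      rw [smul_smul, mul_inv_cancel₀ hpos.ne', one_smul]
    rw [hxq, ← hcmeq]
    exact smul_mem_cone hcm hpos.le hx1

lemma coneE_subset :
    cone' (Set.extremePoints ℝ (frontier' r)) ⊆
      {x : Ω → ℝ | (∀ ω, 0 ≤ x ω) ∧ ∑ ω, x ω * r ω = 0} := by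
  apply convexHull_min
  · rintro x (rfl | hx)
    · exact ⟨fun ω => le_refl 0, by simp⟩
    · have := (extremePoints_subset hx)
      exact ⟨this.1.1, this.2⟩
  · rintro x ⟨hx0, hxr⟩ y ⟨hy0, hyr⟩ a b ha hb hab
    refine ⟨fun ω => add_nonneg (mul_nonneg ha (hx0 ω)) (mul_nonneg hb (hy0 ω)), ?_⟩
    have : ∀ ω, (a • x + b • y) ω * r ω = a * (x ω * r ω) + b * (y ω * r ω) := by
      intro ω; simp [Pi.add_apply]; ring
    rw [Finset.sum_congr rfl (fun ω _ => this ω), Finset.sum_add_distrib,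
      ← Finset.mul_sum, ← Finset.mul_sum, hxr, hyr]
    ring

lemma coneNeg_subset :
    cone' (negVertices r) ⊆ {x : Ω → ℝ | ∀ ω, 0 ≤ x ω} := by
  apply convexHull_min
  · rintro x (rfl | ⟨ω, hω, rfl⟩)
    · exact fun ω => le_refl 0
    · intro ω'
      rcases eq_or_ne ω' ω with h | h
      · subst h; simp
      · simp [Pi.single_apply, h]
  · rintro x hx0 y hy0 a b ha hb hab ω
    exact add_nonneg (mul_nonneg ha (hx0 ω)) (mul_nonneg hb (hy0 ω))

lemma construction {p π : Ω → ℝ} (hp : p ∈ stdSimplex ℝ Ω)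
    (hpJ : ∑ ω, p ω * r ω < 0) (hπ : ∀ ω, 0 ≤ π ω ∧ π ω ≤ p ω)
    (hπr : 0 ≤ ∑ ω, π ω * r ω) :
    ∃ π₁ π₂ : Ω → ℝ,
      π₁ ∈ cone' (Set.extremePoints ℝ (frontier' r)) ∧
      π₂ ∈ cone' (negVertices r) ∧ π₁ + π₂ = p ∧ ∑ ω, π ω ≤ ∑ ω, π₁ ω := by
  classical
  set π'' : Ω → ℝ := fun ω => if 0 ≤ r ω then p ω else π ω with hπ''d
  have hπ''le : ∀ ω, π'' ω ≤ p ω := by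
    intro ω; rw [hπ''d]; dsimp only
    split
    · exact le_refl _
    · exact (hπ ω).2
  have hπ''ge : ∀ ω, π ω ≤ π'' ω := by
    intro ω; rw [hπ''d]; dsimp only
    split
    · exact (hπ ω).2
    · exact le_refl _
  have hπ''0 : ∀ ω, 0 ≤ π'' ω := fun ω => le_trans (hπ ω).1 (hπ''ge ω)
  set a : ℝ := ∑ ω, π'' ω * r ω with had
  set b : ℝ := ∑ ω, p ω * r ω with hbd
  have ha0 : 0 ≤ a := by
    refine le_trans hπr (Finset.sum_le_sum (fun ω _ => ?_))
    rw [hπ''d]; dsimp only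
    split_ifs with h
    · exact mul_le_mul_of_nonneg_right (hπ ω).2 h
    · exact le_refl _
  have hab : 0 < a - b := by rw [hbd]; linarith
  set s : ℝ := a / (a - b) with hsd
  have hs0 : 0 ≤ s := div_nonneg ha0 hab.le
  have hs1 : s < 1 := by
    rw [hsd, div_lt_one hab]; rw [hbd] at *; linarith
  set π₁ : Ω → ℝ := fun ω => (1 - s) * π'' ω + s * p ω with hπ₁d
  set π₂ : Ω → ℝ := fun ω => (1 - s) * (p ω - π'' ω) with hπ₂d
  have hπ₁0 : ∀ ω, 0 ≤ π₁ ω := fun ω =>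
    add_nonneg (mul_nonneg (by linarith) (hπ''0 ω))
      (mul_nonneg hs0 (hp.1 ω))
  have hπ₁le : ∀ ω, π₁ ω ≤ p ω := by
    intro ω
    have h1 := hπ''le ω
    rw [hπ₁d]; dsimp only; nlinarith
  have hπ₁sum : ∑ ω, π₁ ω ≤ 1 := by
    rw [← hp.2]
    exact Finset.sum_le_sum (fun ω _ => hπ₁le ω)
  have hπ₁dot : ∑ ω, π₁ ω * r ω = 0 := by
    have e1 : ∀ ω, π₁ ω * r ω = (1 - s) * (π'' ω * r ω) + s * (p ω * r ω) := by
      intro ω; rw [hπ₁d]; dsimp only; ring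
    rw [Finset.sum_congr rfl (fun ω _ => e1 ω), Finset.sum_add_distrib,
      ← Finset.mul_sum, ← Finset.mul_sum, ← had, ← hbd]
    rw [hsd]
    field_simp
    ring
  have hπ₁mem : π₁ ∈ cone' (Set.extremePoints ℝ (frontier' r)) :=
    mem_coneE hπ₁0 hπ₁sum hπ₁dot
  have hπ₂0 : ∀ ω, 0 ≤ π₂ ω := fun ω =>
    mul_nonneg (by linarith) (by linarith [hπ''le ω])
  have hπ₂sum : ∑ ω, π₂ ω ≤ 1 := by
    rw [← hp.2]
    refine Finset.sum_le_sum (fun ω _ => ?_)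
    have h1 := hπ''0 ω
    have h2 := hπ''le ω
    rw [hπ₂d]; dsimp only; nlinarith
  have hπ₂supp : ∀ ω, π₂ ω ≠ 0 → r ω < 0 := by
    intro ω h
    by_contra hcon
    push_neg at hcon
    apply h
    rw [hπ₂d]; dsimp only
    rw [hπ''d]; dsimp only
    rw [if_pos hcon]
    ring
  have hπ₂mem : π₂ ∈ cone' (negVertices r) := mem_coneNeg hπ₂0 hπ₂sum hπ₂supp
  refine ⟨π₁, π₂, hπ₁mem, hπ₂mem, ?_, ?_⟩
  · funext ω
    simp only [Pi.add_apply, hπ₁d, hπ₂d]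
    ring
  · refine Finset.sum_le_sum (fun ω _ => ?_)
    have h1 := hπ''ge ω
    have h2 := hπ''le ω
    rw [hπ₁d]; dsimp only; nlinarith

end helpers

/-- for every `p ∈ J`, the value of the linear program (LP), over pairs
`(π₁,π₂) ∈ cone(E) × cone(Ω⁻)` with `π₁ + π₂ = p` maximizing the mass of `π₁`, equals the
value of the linear program (LP'), over `0 ≤ π ≤ p` with `⟨π,r⟩ ≥ 0` maximizing the mass
of `π`. Here `E` is the set of extreme points of the investment frontier `F`. -/
theorem lp_eq_lp' [Fintype Ω] [Nonempty Ω] [DecidableEq Ω] (r : Ω → ℝ)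
    (hplus : ∃ ω, 0 ≤ r ω) (hminus : ∃ ω, r ω < 0)
    (p : Ω → ℝ) (hp : p ∈ stdSimplex ℝ Ω) (hpJ : ∑ ω, p ω * r ω < 0) :
    sSup {s : ℝ | ∃ π₁ π₂ : Ω → ℝ,
        π₁ ∈ cone' (Set.extremePoints ℝ (frontier' r)) ∧
        π₂ ∈ cone' (negVertices r) ∧
        π₁ + π₂ = p ∧ s = ∑ ω, π₁ ω}
      = sSup {s : ℝ | ∃ π : Ω → ℝ,
          (∀ ω, 0 ≤ π ω ∧ π ω ≤ p ω) ∧ 0 ≤ ∑ ω, π ω * r ω ∧ s = ∑ ω, π ω} := by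
  set L := {s : ℝ | ∃ π₁ π₂ : Ω → ℝ,
        π₁ ∈ cone' (Set.extremePoints ℝ (frontier' r)) ∧
        π₂ ∈ cone' (negVertices r) ∧
        π₁ + π₂ = p ∧ s = ∑ ω, π₁ ω} with hLd
  set R := {s : ℝ | ∃ π : Ω → ℝ,
          (∀ ω, 0 ≤ π ω ∧ π ω ≤ p ω) ∧ 0 ≤ ∑ ω, π ω * r ω ∧ s = ∑ ω, π ω} with hRd
  have hsub : L ⊆ R := by
    rintro s ⟨π₁, π₂, h₁, h₂, hsum, rfl⟩
    have hc1 := coneE_subset h₁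
    have hc2 := coneNeg_subset h₂
    refine ⟨π₁, fun ω => ⟨hc1.1 ω, ?_⟩, by rw [hc1.2], rfl⟩
    have := congrFun hsum ω
    simp only [Pi.add_apply] at this
    have := hc2 ω
    linarith
  have hRbdd : BddAbove R := by
    refine ⟨1, fun s hs => ?_⟩
    obtain ⟨π, hπ, _, rfl⟩ := hs
    rw [← hp.2]
    exact Finset.sum_le_sum (fun ω _ => (hπ ω).2)
  have hLbdd : BddAbove L := hRbdd.mono hsub
  have hzero : (0:ℝ) ∈ R := ⟨0, fun ω => ⟨le_refl _, hp.1 ω⟩, by simp, by simp⟩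
  have hkey : ∀ s ∈ R, ∃ s' ∈ L, s ≤ s' := by
    rintro s ⟨π, hπ, hπr, rfl⟩
    obtain ⟨π₁, π₂, h₁, h₂, hsum, hle⟩ := construction hp hpJ hπ hπr
    exact ⟨∑ ω, π₁ ω, ⟨π₁, π₂, h₁, h₂, hsum, rfl⟩, hle⟩
  have hLne : L.Nonempty := by
    obtain ⟨s', hs', _⟩ := hkey 0 hzero
    exact ⟨s', hs'⟩
  have hRne : R.Nonempty := ⟨0, hzero⟩
  refine le_antisymm (csSup_le_csSup hRbdd hLne hsub) (csSup_le hRne ?_)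
  intro s hs
  obtain ⟨s', hs', hle⟩ := hkey s hs
  exact le_trans hle (le_csSup hLbdd hs')

end
end

section
/- For every p ∈ Δ(Ω) with ⟨p,r⟩ ≤ 0, the vector π*(p) is an optimal solution of the linear program (LP'): π*(p) is feasible (0 ≤ π*(p) ≤ p componentwise and ⟨π*(p),r⟩ = 0 ≥ 0) and its total mass Σ_ω π*(p)(ω) equals the value of (LP'). -/
open Set

noncomputable section

variable {Ω : Type*}

/-- `L_k(p) = Σ_{ω∈Ω⁺} p(ω)r(ω) + Σ_{i≤k} p(ω_i)r(ω_i)`, where `ω_{i+1} = e i` enumerates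
`Ω⁻` by decreasing payoff. -/
def Lfun [Fintype Ω] (r : Ω → ℝ) {K : ℕ} (e : Fin K → Ω) (k : ℕ) (p : Ω → ℝ) : ℝ :=
  ∑ ω ∈ Finset.univ.filter (fun ω => 0 ≤ r ω), p ω * r ω
    + ∑ i ∈ Finset.univ.filter (fun i : Fin K => (i : ℕ) + 1 ≤ k), p (e i) * r (e i)

/-- `k*(p) = min {k ≥ 1 : L_k(p) ≤ 0}`. -/
def kstar [Fintype Ω] (r : Ω → ℝ) {K : ℕ} (e : Fin K → Ω) (p : Ω → ℝ) : ℕ :=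
  sInf {k : ℕ | 1 ≤ k ∧ Lfun r e k p ≤ 0}

/-- The optimal solution `π*(p)` of the program (LP'): it agrees with `p` on `Ω⁺` and on
`ω_i` for `i < k*(p)`, vanishes on `ω_i` for `i > k*(p)`, and equals
`−L_{k*(p)−1}(p)/r(ω_{k*(p)})` at `ω_{k*(p)}`. -/
def piStar [Fintype Ω] [DecidableEq Ω] (r : Ω → ℝ) {K : ℕ} (e : Fin K → Ω) (p : Ω → ℝ) :
    Ω → ℝ :=
  (fun ω => if 0 ≤ r ω then p ω else 0)
    + ∑ i : Fin K,
        (if (i : ℕ) + 1 < kstar r e p then p (e i)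
         else if (i : ℕ) + 1 = kstar r e p then -(Lfun r e (kstar r e p - 1) p) / r (e i)
         else 0) • (Pi.single (e i) 1 : Ω → ℝ)

/-- The weight `a_I` of the greedy splitting: the total mass of `π*(p)`. -/
def aI [Fintype Ω] [DecidableEq Ω] (r : Ω → ℝ) {K : ℕ} (e : Fin K → Ω) (p : Ω → ℝ) : ℝ :=
  ∑ ω, piStar r e p ω

/-- The posterior `q_I` of the greedy splitting: the normalization of `π*(p)`. -/
def qI [Fintype Ω] [DecidableEq Ω] (r : Ω → ℝ) {K : ℕ} (e : Fin K → Ω) (p : Ω → ℝ) :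
    Ω → ℝ :=
  (aI r e p)⁻¹ • piStar r e p

/-- The posterior `q_J` of the greedy splitting: the normalization of `p − π*(p)`. -/
def qJ [Fintype Ω] [DecidableEq Ω] (r : Ω → ℝ) {K : ℕ} (e : Fin K → Ω) (p : Ω → ℝ) :
    Ω → ℝ :=
  (1 - aI r e p)⁻¹ • (p - piStar r e p)

section Aux

variable [Fintype Ω] [DecidableEq Ω] {K : ℕ} (r : Ω → ℝ) (e : Fin K → Ω)

lemma sum_split_aux (he_inj : Function.Injective e)
    (he_range : ∀ ω, r ω < 0 ↔ ω ∈ Set.range e) (f : Ω → ℝ) :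
    ∑ ω, f ω = ∑ ω ∈ Finset.univ.filter (fun ω => 0 ≤ r ω), f ω + ∑ i : Fin K, f (e i) := by
  classical
  rw [← Finset.sum_filter_add_sum_filter_not Finset.univ (fun ω => 0 ≤ r ω) f]
  congr 1
  have himg : ∑ i : Fin K, f (e i) = ∑ ω ∈ Finset.univ.image e, f ω :=
    (Finset.sum_image (fun i _ j _ h => he_inj h)).symm
  rw [himg]
  congr 1
  ext ω
  simp only [Finset.mem_filter, Finset.mem_univ, true_and, Finset.mem_image, not_le]
  constructor
  · intro h
    obtain ⟨i, hi⟩ := (he_range ω).mp h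
    exact ⟨i, hi⟩
  · rintro ⟨i, rfl⟩
    exact (he_range _).mpr ⟨i, rfl⟩

lemma Lfun_succ_aux (p : Ω → ℝ) (m : ℕ) (hm : m < K) :
    Lfun r e (m + 1) p = Lfun r e m p + p (e ⟨m, hm⟩) * r (e ⟨m, hm⟩) := by
  unfold Lfun
  have h : (Finset.univ.filter fun i : Fin K => (i : ℕ) + 1 ≤ m + 1)
      = insert ⟨m, hm⟩ (Finset.univ.filter fun i : Fin K => (i : ℕ) + 1 ≤ m) := by
    ext i
    simp only [Finset.mem_filter, Finset.mem_univ, true_and, Finset.mem_insert, Fin.ext_iff]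
    omega
  rw [h, Finset.sum_insert (by simp)]
  ring

lemma piStar_apply_pos_aux (he_range : ∀ ω, r ω < 0 ↔ ω ∈ Set.range e)
    (p : Ω → ℝ) {ω : Ω} (hw : 0 ≤ r ω) :
    piStar r e p ω = p ω := by
  unfold piStar
  simp only [Pi.add_apply, Finset.sum_apply, Pi.smul_apply, smul_eq_mul]
  rw [if_pos hw]
  have h : ∀ i : Fin K, (Pi.single (e i) 1 : Ω → ℝ) ω = 0 := by
    intro i
    have hne : ω ≠ e i := fun h => absurd hw (not_le.mpr ((he_range ω).mpr ⟨i, h.symm⟩))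
    exact Pi.single_eq_of_ne hne 1
  simp [h]

lemma piStar_apply_neg_aux (he_inj : Function.Injective e)
    (he_range : ∀ ω, r ω < 0 ↔ ω ∈ Set.range e) (p : Ω → ℝ) (i : Fin K) :
    piStar r e p (e i)
      = (if (i : ℕ) + 1 < kstar r e p then p (e i)
         else if (i : ℕ) + 1 = kstar r e p then -(Lfun r e (kstar r e p - 1) p) / r (e i)
         else 0) := by
  have hrei : r (e i) < 0 := (he_range (e i)).mpr ⟨i, rfl⟩
  unfold piStar
  simp only [Pi.add_apply, Finset.sum_apply, Pi.smul_apply, smul_eq_mul]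
  rw [if_neg (not_le.mpr hrei)]
  rw [Finset.sum_eq_single i]
  · simp
  · intro j _ hj
    rw [Pi.single_eq_of_ne (fun h => hj (he_inj h.symm)), mul_zero]
  · simp

end Aux

/-- for `p ∈ Δ(Ω)` with `⟨p,r⟩ ≤ 0`, the vector `π*(p)` is an optimal solution
of the linear program (LP'): it is feasible (`0 ≤ π*(p) ≤ p` and `⟨π*(p),r⟩ = 0`), and its
total mass is maximal among all feasible vectors, i.e. equals the value of (LP'). -/
theorem piStar_optimal [Fintype Ω] [DecidableEq Ω] {K : ℕ}
    (r : Ω → ℝ) (e : Fin K → Ω)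
    (hK : 0 < K) (hplus : ∃ ω, 0 ≤ r ω)
    (he_inj : Function.Injective e)
    (he_range : ∀ ω, r ω < 0 ↔ ω ∈ Set.range e)
    (he_anti : Antitone fun i => r (e i))
    (p : Ω → ℝ) (hp : p ∈ stdSimplex ℝ Ω) (hpr : ∑ ω, p ω * r ω ≤ 0) :
    (∀ ω, 0 ≤ piStar r e p ω) ∧
    (∀ ω, piStar r e p ω ≤ p ω) ∧
    (∑ ω, piStar r e p ω * r ω = 0) ∧
    (∀ π : Ω → ℝ, (∀ ω, 0 ≤ π ω) → (∀ ω, π ω ≤ p ω) → 0 ≤ ∑ ω, π ω * r ω →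
      ∑ ω, π ω ≤ ∑ ω, piStar r e p ω) := by
  classical
  set k := kstar r e p with hkdef
  clear_value k
  have hks : sInf {k : ℕ | 1 ≤ k ∧ Lfun r e k p ≤ 0} = k := by rw [hkdef]; rfl
  -- K is in the defining set of kstar
  have hLK : Lfun r e K p = ∑ ω, p ω * r ω := by
    rw [sum_split_aux r e he_inj he_range (fun ω => p ω * r ω)]
    unfold Lfun
    congr 1
    apply Finset.sum_congr _ (fun _ _ => rfl)
    ext i
    simp [Nat.succ_le_of_lt i.isLt]
  have hSK : K ∈ {k : ℕ | 1 ≤ k ∧ Lfun r e k p ≤ 0} := ⟨hK, by rw [hLK]; exact hpr⟩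
  have hkmem : k ∈ {k : ℕ | 1 ≤ k ∧ Lfun r e k p ≤ 0} := hks ▸ Nat.sInf_mem ⟨K, hSK⟩
  have hk1 : 1 ≤ k := hkmem.1
  have hkL : Lfun r e k p ≤ 0 := hkmem.2
  have hkK : k ≤ K := hks ▸ Nat.sInf_le hSK
  have hL0 : 0 ≤ Lfun r e 0 p := by
    unfold Lfun
    have h2 : (Finset.univ.filter fun i : Fin K => (i : ℕ) + 1 ≤ 0) = ∅ := by
      ext i; simp
    rw [h2, Finset.sum_empty, add_zero]
    apply Finset.sum_nonneg
    intro ω hω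
    simp only [Finset.mem_filter] at hω
    exact mul_nonneg (hp.1 ω) hω.2
  have hLk1 : 0 ≤ Lfun r e (k - 1) p := by
    rcases Nat.lt_or_ge 1 k with h2 | h2
    · have hnot : k - 1 ∉ {k : ℕ | 1 ≤ k ∧ Lfun r e k p ≤ 0} :=
        Nat.notMem_of_lt_sInf (by omega)
      simp only [Set.mem_setOf_eq, not_and, not_le] at hnot
      exact (hnot (by omega)).le
    · have : k = 1 := le_antisymm h2 hk1
      rw [this]; simpa using hL0
  have hi0lt : k - 1 < K := by omega
  set i₀ : Fin K := ⟨k - 1, hi0lt⟩ with hi₀def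
  have hi₀val : (i₀ : ℕ) = k - 1 := rfl
  have hρ : r (e i₀) < 0 := (he_range (e i₀)).mpr ⟨i₀, rfl⟩
  have hLrec : Lfun r e k p = Lfun r e (k - 1) p + p (e i₀) * r (e i₀) := by
    have := Lfun_succ_aux r e p (k - 1) hi0lt
    rwa [show k - 1 + 1 = k from by omega] at this
  -- Part 1: nonnegativity
  have h1 : ∀ ω, 0 ≤ piStar r e p ω := by
    intro ω
    by_cases hw : 0 ≤ r ω
    · rw [piStar_apply_pos_aux r e he_range p hw]; exact hp.1 ω
    · obtain ⟨i, rfl⟩ := (he_range ω).mp (not_le.mp hw)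
      have hrei : r (e i) < 0 := (he_range (e i)).mpr ⟨i, rfl⟩
      rw [piStar_apply_neg_aux r e he_inj he_range p i, ← hkdef]
      split_ifs with h2 h3
      · exact hp.1 _
      · rw [div_nonneg_iff]
        right
        constructor <;> linarith
      · exact le_refl 0
  -- Part 2: ≤ p
  have h2 : ∀ ω, piStar r e p ω ≤ p ω := by
    intro ω
    by_cases hw : 0 ≤ r ω
    · rw [piStar_apply_pos_aux r e he_range p hw]
    · obtain ⟨i, rfl⟩ := (he_range ω).mp (not_le.mp hw)
      rw [piStar_apply_neg_aux r e he_inj he_range p i, ← hkdef]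
      split_ifs with ha hb
      · exact le_refl _
      · have hii : i = i₀ := by
          apply Fin.ext; simp only [hi₀def]; omega
        subst hii
        rw [div_le_iff_of_neg hρ]
        linarith [hLrec, hkL]
      · exact hp.1 _
  -- Part 3: ⟨π*, r⟩ = 0
  have h3 : ∑ ω, piStar r e p ω * r ω = 0 := by
    rw [sum_split_aux r e he_inj he_range (fun ω => piStar r e p ω * r ω)]
    have hposeq : ∑ ω ∈ Finset.univ.filter (fun ω => 0 ≤ r ω), piStar r e p ω * r ω
        = ∑ ω ∈ Finset.univ.filter (fun ω => 0 ≤ r ω), p ω * r ω := by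
      apply Finset.sum_congr rfl
      intro ω hω
      simp only [Finset.mem_filter] at hω
      rw [piStar_apply_pos_aux r e he_range p hω.2]
    have hnegeq : ∑ i : Fin K, piStar r e p (e i) * r (e i)
        = ∑ i ∈ Finset.univ.filter (fun i : Fin K => (i : ℕ) + 1 ≤ k - 1),
            p (e i) * r (e i) - Lfun r e (k - 1) p := by
      have hvan : ∑ i ∈ Finset.univ.filter (fun i : Fin K => (i : ℕ) + 1 ≤ k),
          piStar r e p (e i) * r (e i) = ∑ i : Fin K, piStar r e p (e i) * r (e i) := by
        apply Finset.sum_filter_of_ne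
        intro i _ hne
        by_contra hgt
        apply hne
        rw [piStar_apply_neg_aux r e he_inj he_range p i, ← hkdef]
        rw [if_neg (by omega), if_neg (by omega), zero_mul]
      rw [← hvan]
      have hins : (Finset.univ.filter fun i : Fin K => (i : ℕ) + 1 ≤ k)
          = insert i₀ (Finset.univ.filter fun i : Fin K => (i : ℕ) + 1 ≤ k - 1) := by
        ext i
        simp only [Finset.mem_filter, Finset.mem_univ, true_and, Finset.mem_insert,
          Fin.ext_iff, hi₀val]
        omega
      rw [hins, Finset.sum_insert (by
        simp only [Finset.mem_filter, Finset.mem_univ, true_and, hi₀val]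
        omega)]
      have hterm : piStar r e p (e i₀) * r (e i₀) = -Lfun r e (k - 1) p := by
        rw [piStar_apply_neg_aux r e he_inj he_range p i₀, ← hkdef]
        rw [if_neg (by rw [hi₀val]; omega), if_pos (by rw [hi₀val]; omega)]
        rw [div_mul_cancel₀ _ hρ.ne]
      rw [hterm]
      have hrest : ∀ i ∈ Finset.univ.filter (fun i : Fin K => (i : ℕ) + 1 ≤ k - 1),
          piStar r e p (e i) * r (e i) = p (e i) * r (e i) := by
        intro i hi
        simp only [Finset.mem_filter] at hi
        rw [piStar_apply_neg_aux r e he_inj he_range p i, ← hkdef, if_pos (by omega)]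
      rw [Finset.sum_congr rfl hrest]
      ring
    rw [hposeq, hnegeq]
    have : Lfun r e (k - 1) p
        = ∑ ω ∈ Finset.univ.filter (fun ω => 0 ≤ r ω), p ω * r ω
          + ∑ i ∈ Finset.univ.filter (fun i : Fin K => (i : ℕ) + 1 ≤ k - 1),
              p (e i) * r (e i) := rfl
    rw [this]
    ring
  refine ⟨h1, h2, h3, ?_⟩
  -- Part 4: optimality
  intro π hπ0 hπp hπr
  set ρ := r (e i₀) with hρdef
  have key : ∀ ω, π ω * (1 - r ω / ρ) ≤ piStar r e p ω * (1 - r ω / ρ) := by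
    intro ω
    by_cases hw : 0 ≤ r ω
    · rw [piStar_apply_pos_aux r e he_range p hw]
      have hc : 0 ≤ 1 - r ω / ρ := by
        have : r ω / ρ ≤ 0 := div_nonpos_of_nonneg_of_nonpos hw hρ.le
        linarith
      exact mul_le_mul_of_nonneg_right (hπp ω) hc
    · obtain ⟨i, rfl⟩ := (he_range ω).mp (not_le.mp hw)
      rcases lt_trichotomy ((i : ℕ) + 1) k with hlt | heq | hgt
      · have hπs : piStar r e p (e i) = p (e i) := by
          rw [piStar_apply_neg_aux r e he_inj he_range p i, ← hkdef, if_pos hlt]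
        have hle : ρ ≤ r (e i) := he_anti (show i ≤ i₀ by
          rw [Fin.le_def, hi₀val]; omega)
        have hc : 0 ≤ 1 - r (e i) / ρ := by
          have : r (e i) / ρ ≤ 1 := by rw [div_le_iff_of_neg hρ]; linarith
          linarith
        rw [hπs]
        exact mul_le_mul_of_nonneg_right (hπp _) hc
      · have hii : i = i₀ := by apply Fin.ext; rw [hi₀val]; omega
        subst hii
        rw [← hρdef, div_self hρ.ne, sub_self, mul_zero, mul_zero]
      · have hπs : piStar r e p (e i) = 0 := by
          rw [piStar_apply_neg_aux r e he_inj he_range p i, ← hkdef,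
            if_neg (by omega), if_neg (by omega)]
        have hle : r (e i) ≤ ρ := he_anti (show i₀ ≤ i by
          rw [Fin.le_def, hi₀val]; omega)
        have hc : 1 - r (e i) / ρ ≤ 0 := by
          have : 1 ≤ r (e i) / ρ := by rw [le_div_iff_of_neg hρ]; linarith
          linarith
        rw [hπs, zero_mul]
        exact mul_nonpos_of_nonneg_of_nonpos (hπ0 _) hc
  have expand : ∀ f : Ω → ℝ,
      ∑ ω, f ω * (1 - r ω / ρ) = ∑ ω, f ω - (∑ ω, f ω * r ω) / ρ := by
    intro f
    rw [Finset.sum_div, ← Finset.sum_sub_distrib]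
    apply Finset.sum_congr rfl
    intro ω _
    ring
  calc ∑ ω, π ω ≤ ∑ ω, π ω * (1 - r ω / ρ) := by
        rw [expand π]
        have : (∑ ω, π ω * r ω) / ρ ≤ 0 :=
          div_nonpos_of_nonneg_of_nonpos hπr hρ.le
        linarith
    _ ≤ ∑ ω, piStar r e p ω * (1 - r ω / ρ) :=
        Finset.sum_le_sum (fun ω _ => key ω)
    _ = ∑ ω, piStar r e p ω := by rw [expand, h3, zero_div, sub_zero]

end
end

section
/- Assume no two states in Ω⁻ yield the same payoff (r(ω) ≠ r(ω′) for all distinct ω, ω′ ∈ Ω⁻). Then for every p ∈ J: (i) π*(p) is the unique optimal solution of the program (LP'); (ii) in the greedy splitting p = a_I q_I + a_J q_J one has a_J > 0 and q_J ∈ Δ(Ω⁻) (q_J is supported on Ω⁻), and if a_I > 0 then q_I lies on the investment frontier F. -/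
open Set

noncomputable section

variable {Ω : Type*}

/-- if no two states in `Ω⁻` yield the same payoff, then for every `p ∈ J`:
(i) `π*(p)` is the unique optimal solution of (LP'); (ii) in the greedy splitting
`p = a_I q_I + a_J q_J` one has `a_J > 0` (i.e. `a_I < 1`), `q_J` is a probability vector
supported on `Ω⁻`, and if `a_I > 0` then `q_I` lies on the investment frontier `F`. -/
theorem greedy_splitting_structure [Fintype Ω] [DecidableEq Ω] {K : ℕ}
    (r : Ω → ℝ) (e : Fin K → Ω)
    (hK : 0 < K) (hplus : ∃ ω, 0 ≤ r ω)
    (he_inj : Function.Injective e)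
    (he_range : ∀ ω, r ω < 0 ↔ ω ∈ Set.range e)
    (he_anti : Antitone fun i => r (e i))
    (hdistinct : ∀ ω ω', r ω < 0 → r ω' < 0 → ω ≠ ω' → r ω ≠ r ω')
    (p : Ω → ℝ) (hp : p ∈ stdSimplex ℝ Ω) (hpJ : ∑ ω, p ω * r ω < 0) :
    -- (i) π*(p) is feasible and is the unique optimal solution of (LP')
    ((∀ ω, 0 ≤ piStar r e p ω) ∧ (∀ ω, piStar r e p ω ≤ p ω) ∧
      0 ≤ ∑ ω, piStar r e p ω * r ω ∧
      (∀ π : Ω → ℝ, (∀ ω, 0 ≤ π ω) → (∀ ω, π ω ≤ p ω) → 0 ≤ ∑ ω, π ω * r ω →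
        ∑ ω, π ω ≤ ∑ ω, piStar r e p ω) ∧
      (∀ π : Ω → ℝ, (∀ ω, 0 ≤ π ω) → (∀ ω, π ω ≤ p ω) → 0 ≤ ∑ ω, π ω * r ω →
        ∑ ω, π ω = ∑ ω, piStar r e p ω → π = piStar r e p)) ∧
    -- (ii) structure of the greedy splitting
    (aI r e p < 1 ∧
      p = aI r e p • qI r e p + (1 - aI r e p) • qJ r e p ∧
      qJ r e p ∈ stdSimplex ℝ Ω ∧ (∀ ω, 0 ≤ r ω → qJ r e p ω = 0) ∧
      (0 < aI r e p →
        qI r e p ∈ stdSimplex ℝ Ω ∧ ∑ ω, qI r e p ω * r ω = 0)) := by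
  obtain ⟨hp0, hp1⟩ := hp
  -- strict antitonicity
  have hrneg : ∀ j : Fin K, r (e j) < 0 := fun j => (he_range (e j)).mpr ⟨j, rfl⟩
  have hstrict : ∀ i j : Fin K, i < j → r (e j) < r (e i) := by
    intro i j hij
    refine lt_of_le_of_ne (he_anti hij.le) ?_
    exact hdistinct (e j) (e i) (hrneg j) (hrneg i) (fun h => hij.ne' (he_inj h))
  -- sum decomposition over Ω⁺ and the range of e
  have hsum_split : ∀ f : Ω → ℝ,
      ∑ ω, f ω = ∑ ω ∈ Finset.univ.filter (fun ω => 0 ≤ r ω), f ω + ∑ i, f (e i) := by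
    intro f
    have h1 : ∑ i, f (e i)
        = ∑ ω ∈ Finset.univ.filter (fun ω => ¬ 0 ≤ r ω), f ω := by
      refine Finset.sum_bij (fun i _ => e i) ?_ ?_ ?_ ?_
      · intro i _
        simp only [Finset.mem_filter, Finset.mem_univ, true_and, not_le]
        exact hrneg i
      · intro i _ j _ h; exact he_inj h
      · intro ω hω
        simp only [Finset.mem_filter, Finset.mem_univ, true_and, not_le] at hω
        obtain ⟨i, hi⟩ := (he_range ω).mp hω
        exact ⟨i, Finset.mem_univ i, hi⟩
      · intro i _; rfl
    rw [h1, Finset.sum_filter_add_sum_filter_not]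
  -- basic facts about kstar
  have hL_K : Lfun r e K p = ∑ ω, p ω * r ω := by
    rw [hsum_split (fun ω => p ω * r ω)]
    unfold Lfun
    congr 1
    rw [Finset.filter_true_of_mem]
    intro i _
    exact Nat.succ_le_of_lt i.isLt
  have hKmem : K ∈ {n : ℕ | 1 ≤ n ∧ Lfun r e n p ≤ 0} := ⟨hK, by rw [hL_K]; exact hpJ.le⟩
  set k := kstar r e p with hk_def
  have hk_mem : k ∈ {n : ℕ | 1 ≤ n ∧ Lfun r e n p ≤ 0} := Nat.sInf_mem ⟨K, hKmem⟩
  have hk1 : 1 ≤ k := hk_mem.1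
  have hLk : Lfun r e k p ≤ 0 := hk_mem.2
  have hkK : k ≤ K := Nat.sInf_le hKmem
  have hmlt : k - 1 < K := by omega
  set m : Fin K := ⟨k - 1, hmlt⟩ with hm_def
  have hmval : (m : ℕ) = k - 1 := rfl
  have hρ : r (e m) < 0 := hrneg m
  have hρ0 : r (e m) ≠ 0 := hρ.ne
  have hL0 : 0 ≤ Lfun r e (k - 1) p := by
    rcases eq_or_lt_of_le hk1 with h1 | h1
    · have h0 : Lfun r e (k - 1) p
          = ∑ ω ∈ Finset.univ.filter (fun ω => 0 ≤ r ω), p ω * r ω := by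
        unfold Lfun
        rw [← h1]
        simp
      rw [h0]
      refine Finset.sum_nonneg fun ω hω => ?_
      simp only [Finset.mem_filter] at hω
      exact mul_nonneg (hp0 ω) hω.2
    · have hnm := Nat.notMem_of_lt_sInf (show k - 1 < k by omega)
      simp only [Set.mem_setOf_eq, not_and, not_le] at hnm
      exact (hnm (by omega)).le
  have hLstep : Lfun r e k p = Lfun r e (k - 1) p + p (e m) * r (e m) := by
    have hfil : Finset.univ.filter (fun i : Fin K => (i : ℕ) + 1 ≤ k)
        = insert m (Finset.univ.filter (fun i : Fin K => (i : ℕ) + 1 ≤ k - 1)) := by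
      ext j
      simp only [Finset.mem_filter, Finset.mem_univ, true_and, Finset.mem_insert,
        Fin.ext_iff, hmval]
      omega
    have hmnot : m ∉ Finset.univ.filter (fun i : Fin K => (i : ℕ) + 1 ≤ k - 1) := by
      simp only [Finset.mem_filter, Finset.mem_univ, true_and, hmval]
      omega
    unfold Lfun
    rw [hfil, Finset.sum_insert hmnot]
    ring
  set t := -(Lfun r e (k - 1) p) / r (e m) with ht_def
  have ht0 : 0 ≤ t := div_nonneg_iff.mpr (Or.inr ⟨by linarith, hρ.le⟩)
  have htp : t ≤ p (e m) := by
    rw [ht_def, div_le_iff_of_neg hρ]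
    linarith
  have htρ : t * r (e m) = -(Lfun r e (k - 1) p) := div_mul_cancel₀ _ hρ0
  -- evaluation of piStar
  have hπpos : ∀ ω, 0 ≤ r ω → piStar r e p ω = p ω := by
    intro ω hω
    have hne : ∀ i : Fin K, ω ≠ e i := by
      intro i h
      exact absurd ((he_range ω).mpr ⟨i, h.symm⟩) (not_lt.mpr hω)
    simp only [piStar, Pi.add_apply, if_pos hω, Finset.sum_apply, Pi.smul_apply,
      Pi.single_apply, smul_eq_mul]
    rw [Finset.sum_eq_zero, add_zero]
    intro i _
    rw [if_neg (hne i), mul_zero]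
  have hπe : ∀ j : Fin K, piStar r e p (e j) =
      (if (j : ℕ) + 1 < k then p (e j)
       else if (j : ℕ) + 1 = k then -(Lfun r e (k - 1) p) / r (e j) else 0) := by
    intro j
    simp only [piStar, Pi.add_apply, if_neg (not_le.mpr (hrneg j)), Finset.sum_apply,
      Pi.smul_apply, Pi.single_apply, smul_eq_mul, zero_add, ← hk_def]
    rw [Finset.sum_eq_single j]
    · simp
    · intro i _ hij
      rw [if_neg (show ¬ e j = e i from fun h => hij (he_inj h.symm)), mul_zero]
    · intro h; exact absurd (Finset.mem_univ j) h
  have hπ_lt : ∀ j : Fin K, (j : ℕ) + 1 < k → piStar r e p (e j) = p (e j) := by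
    intro j hj; rw [hπe j, if_pos hj]
  have hπ_gt : ∀ j : Fin K, k < (j : ℕ) + 1 → piStar r e p (e j) = 0 := by
    intro j hj; rw [hπe j, if_neg (by omega), if_neg (by omega)]
  have hπ_eq : piStar r e p (e m) = t := by
    rw [hπe m, if_neg (by omega), if_pos (by omega), ht_def]
  -- case analysis on ω
  have hcases : ∀ ω, 0 ≤ r ω ∨ ∃ j, ω = e j := by
    intro ω
    rcases le_or_gt 0 (r ω) with h | h
    · exact Or.inl h
    · obtain ⟨j, hj⟩ := (he_range ω).mp h
      exact Or.inr ⟨j, hj.symm⟩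
  -- feasibility
  have hfeas0 : ∀ ω, 0 ≤ piStar r e p ω := by
    intro ω
    rcases hcases ω with h | ⟨j, rfl⟩
    · rw [hπpos ω h]; exact hp0 ω
    · rw [hπe j]
      split_ifs with h1 h2
      · exact hp0 _
      · exact div_nonneg_iff.mpr (Or.inr ⟨by linarith, (hrneg j).le⟩)
      · exact le_refl 0
  have hfeas1 : ∀ ω, piStar r e p ω ≤ p ω := by
    intro ω
    rcases hcases ω with h | ⟨j, rfl⟩
    · rw [hπpos ω h]
    · rw [hπe j]
      split_ifs with h1 h2
      · exact le_refl _
      · have hjm : j = m := Fin.ext (by omega)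
        subst hjm
        exact htp
      · exact hp0 _
  -- decomposition of ⟨q, r⟩ for functions matching piStar off e m
  have hdecomp : ∀ q : Ω → ℝ, (∀ ω, 0 ≤ r ω → q ω = p ω) →
      (∀ j : Fin K, (j : ℕ) + 1 < k → q (e j) = p (e j)) →
      (∀ j : Fin K, k < (j : ℕ) + 1 → q (e j) = 0) →
      ∑ ω, q ω * r ω = Lfun r e (k - 1) p + q (e m) * r (e m) := by
    intro q h1 h2 h3
    rw [hsum_split (fun ω => q ω * r ω)]
    have hfirst : ∑ ω ∈ Finset.univ.filter (fun ω => 0 ≤ r ω), q ω * r ω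
        = ∑ ω ∈ Finset.univ.filter (fun ω => 0 ≤ r ω), p ω * r ω := by
      refine Finset.sum_congr rfl fun ω hω => ?_
      simp only [Finset.mem_filter] at hω
      rw [h1 ω hω.2]
    have hsecond : ∑ i : Fin K, q (e i) * r (e i)
        = (∑ i ∈ Finset.univ.filter (fun i : Fin K => (i : ℕ) + 1 ≤ k - 1),
            p (e i) * r (e i)) + q (e m) * r (e m) := by
      rw [← Finset.sum_filter_add_sum_filter_not Finset.univ
        (fun i : Fin K => (i : ℕ) + 1 ≤ k - 1)]
      congr 1
      · refine Finset.sum_congr rfl fun i hi => ?_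
        simp only [Finset.mem_filter, Finset.mem_univ, true_and] at hi
        rw [h2 i (by omega)]
      · rw [Finset.sum_eq_single m]
        · intro i hi him
          simp only [Finset.mem_filter, Finset.mem_univ, true_and, not_le] at hi
          have : k < (i : ℕ) + 1 := by
            rcases Nat.lt_or_ge k ((i : ℕ) + 1) with h | h
            · exact h
            · exact absurd (Fin.ext (by omega) : i = m) him
          rw [h3 i this, zero_mul]
        · intro h
          simp only [Finset.mem_filter, Finset.mem_univ, true_and, not_le, not_lt] at h
          omega
    rw [hfirst, hsecond]
    unfold Lfun
    ring
  have hsum_r : ∑ ω, piStar r e p ω * r ω = 0 := by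
    rw [hdecomp _ hπpos hπ_lt hπ_gt, hπ_eq, htρ]
    ring
  -- facts about aI
  have haI0 : 0 ≤ aI r e p := Finset.sum_nonneg fun ω _ => hfeas0 ω
  have haI1 : aI r e p < 1 := by
    have h1 : aI r e p ≤ 1 := by
      rw [aI, ← hp1]; exact Finset.sum_le_sum fun ω _ => hfeas1 ω
    rcases h1.lt_or_eq with h | h
    · exact h
    · exfalso
      have heq : ∀ ω ∈ Finset.univ, piStar r e p ω = p ω :=
        (Finset.sum_eq_sum_iff_of_le fun ω _ => hfeas1 ω).mp (by rw [← aI, h, hp1])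
      have : ∑ ω, p ω * r ω = 0 := by
        rw [← hsum_r]
        exact Finset.sum_congr rfl fun ω _ => by rw [heq ω (Finset.mem_univ ω)]
      linarith
  -- the dual certificate g ω = 1 - r ω / r (e m)
  have key_id : ∀ π : Ω → ℝ,
      ∑ ω, π ω * (1 - r ω / r (e m)) = ∑ ω, π ω - (∑ ω, π ω * r ω) / r (e m) := by
    intro π
    have h : ∀ ω, π ω * (1 - r ω / r (e m)) = π ω - (π ω * r ω) / r (e m) := by
      intro ω; ring
    simp_rw [h]
    rw [Finset.sum_sub_distrib, Finset.sum_div]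
  have hg_pos : ∀ ω, 0 ≤ r ω → 0 < 1 - r ω / r (e m) := by
    intro ω h
    have : r ω / r (e m) ≤ 0 := div_nonpos_iff.mpr (Or.inl ⟨h, hρ.le⟩)
    linarith
  have hg_lt : ∀ j : Fin K, (j : ℕ) + 1 < k → 0 < 1 - r (e j) / r (e m) := by
    intro j hj
    have hjm : j < m := by rw [Fin.lt_def]; omega
    have h1 := hstrict j m hjm
    have h2 : r (e j) / r (e m) < 1 := by
      rw [div_lt_iff_of_neg hρ]; linarith
    linarith
  have hg_m : 1 - r (e m) / r (e m) = 0 := by rw [div_self hρ0]; ring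
  have hg_gt : ∀ j : Fin K, k < (j : ℕ) + 1 → 1 - r (e j) / r (e m) < 0 := by
    intro j hj
    have hmj : m < j := by rw [Fin.lt_def]; omega
    have h1 := hstrict m j hmj
    have h2 : (1 : ℝ) < r (e j) / r (e m) := by
      rw [lt_div_iff_of_neg hρ]; linarith
    linarith
  have hdual : ∀ ω, piStar r e p ω * (1 - r ω / r (e m))
      = p ω * max (1 - r ω / r (e m)) 0 := by
    intro ω
    rcases hcases ω with h | ⟨j, rfl⟩
    · rw [hπpos ω h, max_eq_left (hg_pos ω h).le]
    · rcases lt_trichotomy ((j : ℕ) + 1) k with h1 | h1 | h1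
      · rw [hπ_lt j h1, max_eq_left (hg_lt j h1).le]
      · have hjm : j = m := Fin.ext (by omega)
        subst hjm
        rw [hg_m]
        simp
      · rw [hπ_gt j h1, max_eq_right (hg_gt j h1).le, zero_mul, mul_zero]
  have hD : aI r e p = ∑ ω, p ω * max (1 - r ω / r (e m)) 0 := by
    have h1 := key_id (piStar r e p)
    rw [hsum_r, zero_div, sub_zero] at h1
    calc aI r e p = ∑ ω, piStar r e p ω := rfl
      _ = ∑ ω, piStar r e p ω * (1 - r ω / r (e m)) := h1.symm
      _ = ∑ ω, p ω * max (1 - r ω / r (e m)) 0 :=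
          Finset.sum_congr rfl fun ω _ => hdual ω
  -- optimality
  have hopt : ∀ π : Ω → ℝ, (∀ ω, 0 ≤ π ω) → (∀ ω, π ω ≤ p ω) → 0 ≤ ∑ ω, π ω * r ω →
      ∑ ω, π ω ≤ ∑ ω, piStar r e p ω := by
    intro π h0 h1 h2
    have e1 := key_id π
    have hS : (∑ ω, π ω * r ω) / r (e m) ≤ 0 :=
      div_nonpos_iff.mpr (Or.inl ⟨h2, hρ.le⟩)
    have e3 : ∑ ω, π ω * (1 - r ω / r (e m))
        ≤ ∑ ω, π ω * max (1 - r ω / r (e m)) 0 :=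
      Finset.sum_le_sum fun ω _ => mul_le_mul_of_nonneg_left (le_max_left _ _) (h0 ω)
    have e4 : ∑ ω, π ω * max (1 - r ω / r (e m)) 0
        ≤ ∑ ω, p ω * max (1 - r ω / r (e m)) 0 :=
      Finset.sum_le_sum fun ω _ => mul_le_mul_of_nonneg_right (h1 ω) (le_max_right _ _)
    have : ∑ ω, π ω ≤ aI r e p := by rw [hD]; linarith
    exact this
  -- uniqueness
  have huniq : ∀ π : Ω → ℝ, (∀ ω, 0 ≤ π ω) → (∀ ω, π ω ≤ p ω) → 0 ≤ ∑ ω, π ω * r ω →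
      ∑ ω, π ω = ∑ ω, piStar r e p ω → π = piStar r e p := by
    intro π h0 h1 h2 hsum
    have hsum' : ∑ ω, π ω = ∑ ω, p ω * max (1 - r ω / r (e m)) 0 := by
      rw [hsum, ← hD]; rfl
    have e1 := key_id π
    have hS : (∑ ω, π ω * r ω) / r (e m) ≤ 0 :=
      div_nonpos_iff.mpr (Or.inl ⟨h2, hρ.le⟩)
    have e3 : ∑ ω, π ω * (1 - r ω / r (e m))
        ≤ ∑ ω, π ω * max (1 - r ω / r (e m)) 0 :=
      Finset.sum_le_sum fun ω _ => mul_le_mul_of_nonneg_left (le_max_left _ _) (h0 ω)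
    have e4 : ∑ ω, π ω * max (1 - r ω / r (e m)) 0
        ≤ ∑ ω, p ω * max (1 - r ω / r (e m)) 0 :=
      Finset.sum_le_sum fun ω _ => mul_le_mul_of_nonneg_right (h1 ω) (le_max_right _ _)
    have hq1 : ∑ ω, π ω * (1 - r ω / r (e m))
        = ∑ ω, π ω * max (1 - r ω / r (e m)) 0 := le_antisymm e3 (by linarith)
    have hq2 : ∑ ω, π ω * max (1 - r ω / r (e m)) 0
        = ∑ ω, p ω * max (1 - r ω / r (e m)) 0 := le_antisymm e4 (by linarith)
    have hterm2 : ∀ ω, π ω * max (1 - r ω / r (e m)) 0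
        = p ω * max (1 - r ω / r (e m)) 0 := by
      intro ω
      exact (Finset.sum_eq_sum_iff_of_le fun ω _ =>
        mul_le_mul_of_nonneg_right (h1 ω) (le_max_right _ _)).mp hq2 ω (Finset.mem_univ ω)
    have hterm1 : ∀ ω, π ω * (1 - r ω / r (e m))
        = π ω * max (1 - r ω / r (e m)) 0 := by
      intro ω
      exact (Finset.sum_eq_sum_iff_of_le fun ω _ =>
        mul_le_mul_of_nonneg_left (le_max_left _ _) (h0 ω)).mp hq1 ω (Finset.mem_univ ω)
    have hval_pos : ∀ ω, 0 < 1 - r ω / r (e m) → π ω = p ω := by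
      intro ω hg
      have h := hterm2 ω
      rw [max_eq_left hg.le] at h
      exact mul_right_cancel₀ hg.ne' h
    have hval_neg : ∀ ω, 1 - r ω / r (e m) < 0 → π ω = 0 := by
      intro ω hg
      have h := hterm1 ω
      rw [max_eq_right hg.le, mul_zero] at h
      exact (mul_eq_zero.mp h).resolve_right hg.ne
    have hSr : ∑ ω, π ω * r ω = 0 := by
      have hz : (∑ ω, π ω * r ω) / r (e m) = 0 := by linarith
      rcases div_eq_zero_iff.mp hz with h | h
      · exact h
      · exact absurd h hρ0
    have hdm := hdecomp π (fun ω h => hval_pos ω (hg_pos ω h))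
      (fun j hj => hval_pos _ (hg_lt j hj)) (fun j hj => hval_neg _ (hg_gt j hj))
    rw [hSr] at hdm
    have hπm : π (e m) = t := by
      rw [ht_def, eq_div_iff hρ0]
      linarith
    funext ω
    rcases hcases ω with h | ⟨j, rfl⟩
    · rw [hπpos ω h, hval_pos ω (hg_pos ω h)]
    · rcases lt_trichotomy ((j : ℕ) + 1) k with h1 | h1 | h1
      · rw [hπ_lt j h1, hval_pos _ (hg_lt j h1)]
      · have hjm : j = m := Fin.ext (by omega)
        subst hjm
        rw [hπ_eq, hπm]
      · rw [hπ_gt j h1, hval_neg _ (hg_gt j h1)]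
  -- part (ii)
  have h1aI : (1 : ℝ) - aI r e p ≠ 0 := by
    have : 0 < 1 - aI r e p := by linarith
    exact this.ne'
  have hJsmul : (1 - aI r e p) • qJ r e p = p - piStar r e p := by
    rw [qJ, smul_smul, mul_inv_cancel₀ h1aI, one_smul]
  have hsplit : p = aI r e p • qI r e p + (1 - aI r e p) • qJ r e p := by
    rcases eq_or_lt_of_le haI0 with h0 | h0
    · have hz : piStar r e p = 0 := by
        funext ω
        exact (Finset.sum_eq_zero_iff_of_nonneg fun ω _ => hfeas0 ω).mp h0.symm
          ω (Finset.mem_univ ω)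
      rw [hJsmul, ← h0, zero_smul, zero_add, hz, sub_zero]
    · have hIsmul : aI r e p • qI r e p = piStar r e p := by
        rw [qI, smul_smul, mul_inv_cancel₀ h0.ne', one_smul]
      rw [hIsmul, hJsmul]
      abel
  have hqJmem : qJ r e p ∈ stdSimplex ℝ Ω := by
    constructor
    · intro ω
      simp only [qJ, Pi.smul_apply, Pi.sub_apply, smul_eq_mul]
      exact mul_nonneg (inv_nonneg.mpr (by linarith)) (by linarith [hfeas1 ω])
    · simp only [qJ, Pi.smul_apply, Pi.sub_apply, smul_eq_mul]
      rw [← Finset.mul_sum, Finset.sum_sub_distrib, hp1]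
      rw [show ∑ ω, piStar r e p ω = aI r e p from rfl]
      exact inv_mul_cancel₀ h1aI
  have hqJ0 : ∀ ω, 0 ≤ r ω → qJ r e p ω = 0 := by
    intro ω h
    simp only [qJ, Pi.smul_apply, Pi.sub_apply, smul_eq_mul]
    rw [hπpos ω h, sub_self, mul_zero]
  have hqI : 0 < aI r e p →
      qI r e p ∈ stdSimplex ℝ Ω ∧ ∑ ω, qI r e p ω * r ω = 0 := by
    intro h0
    refine ⟨⟨fun ω => ?_, ?_⟩, ?_⟩
    · simp only [qI, Pi.smul_apply, smul_eq_mul]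
      exact mul_nonneg (inv_nonneg.mpr h0.le) (hfeas0 ω)
    · simp only [qI, Pi.smul_apply, smul_eq_mul]
      rw [← Finset.mul_sum, show ∑ ω, piStar r e p ω = aI r e p from rfl]
      exact inv_mul_cancel₀ h0.ne'
    · simp only [qI, Pi.smul_apply, smul_eq_mul]
      have h : ∀ ω, (aI r e p)⁻¹ * piStar r e p ω * r ω
          = (aI r e p)⁻¹ * (piStar r e p ω * r ω) := fun ω => by ring
      simp_rw [h]
      rw [← Finset.mul_sum, hsum_r, mul_zero]
  exact ⟨⟨hfeas0, hfeas1, hsum_r.ge, hopt, huniq⟩, haI1, hsplit, hqJmem, hqJ0, hqI⟩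

end
end

section
/- For every 1 ≤ k ≤ K and every p ∈ Ō(k), the greedy splitting p = a_I q_I + a_J q_J stays in Ō(k): if a_I > 0 then q_I ∈ Ō(k), and if a_J > 0 then q_J ∈ Ō(k). -/
open Set

set_option linter.unusedSectionVars false
set_option linter.unusedVariables false

noncomputable section

variable {Ω : Type*}

/-- The set `Ō(k) = {p ∈ Δ(Ω) : L_{k−1}(p) ≥ 0 ≥ L_k(p)}`. -/
def Obar [Fintype Ω] (r : Ω → ℝ) {K : ℕ} (e : Fin K → Ω) (k : ℕ) : Set (Ω → ℝ) :=
  {p | p ∈ stdSimplex ℝ Ω ∧ 0 ≤ Lfun r e (k - 1) p ∧ Lfun r e k p ≤ 0}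

section Aux
variable [Fintype Ω] [DecidableEq Ω] {K : ℕ} (r : Ω → ℝ) (e : Fin K → Ω)

def coeff (p : Ω → ℝ) (i : Fin K) : ℝ :=
  if (i : ℕ) + 1 < kstar r e p then p (e i)
  else if (i : ℕ) + 1 = kstar r e p then -(Lfun r e (kstar r e p - 1) p) / r (e i)
  else 0

lemma Lfun_eq_base_add (j : ℕ) (p : Ω → ℝ) :
    Lfun r e j p = Lfun r e 0 p
      + ∑ i ∈ Finset.univ.filter (fun i : Fin K => (i : ℕ) + 1 ≤ j), p (e i) * r (e i) := by
  simp [Lfun]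

lemma Lfun_smul (c : ℝ) (j : ℕ) (p : Ω → ℝ) :
    Lfun r e j (c • p) = c * Lfun r e j p := by
  simp [Lfun, Finset.mul_sum, mul_add, mul_assoc]

lemma Lfun_sub (j : ℕ) (p q : Ω → ℝ) :
    Lfun r e j (p - q) = Lfun r e j p - Lfun r e j q := by
  simp only [Lfun, Pi.sub_apply, sub_mul, Finset.sum_sub_distrib]
  ring

lemma Lfun_anti (p : Ω → ℝ) (hp : ∀ ω, 0 ≤ p ω) (hre : ∀ i, r (e i) < 0)
    {j j' : ℕ} (h : j ≤ j') : Lfun r e j' p ≤ Lfun r e j p := by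
  rw [Lfun_eq_base_add r e j, Lfun_eq_base_add r e j']
  refine add_le_add le_rfl ?_
  have hsub : Finset.univ.filter (fun i : Fin K => (i : ℕ) + 1 ≤ j)
      ⊆ Finset.univ.filter (fun i : Fin K => (i : ℕ) + 1 ≤ j') := by
    intro i hi
    simp only [Finset.mem_filter, Finset.mem_univ, true_and] at hi ⊢
    omega
  rw [← Finset.sum_sdiff hsub]
  have : ∑ i ∈ Finset.univ.filter (fun i : Fin K => (i : ℕ) + 1 ≤ j')
        \ Finset.univ.filter (fun i : Fin K => (i : ℕ) + 1 ≤ j), p (e i) * r (e i) ≤ 0 := by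
    apply Finset.sum_nonpos
    intro i _
    exact mul_nonpos_of_nonneg_of_nonpos (hp (e i)) (hre i).le
  linarith

lemma Lfun_succ_fin (i : Fin K) (p : Ω → ℝ) :
    Lfun r e ((i : ℕ) + 1) p = Lfun r e (i : ℕ) p + p (e i) * r (e i) := by
  rw [Lfun_eq_base_add r e ((i:ℕ)+1), Lfun_eq_base_add r e (i:ℕ)]
  have hfil : Finset.univ.filter (fun i' : Fin K => (i' : ℕ) + 1 ≤ (i : ℕ) + 1)
      = insert i (Finset.univ.filter (fun i' : Fin K => (i' : ℕ) + 1 ≤ (i : ℕ))) := by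
    ext i'
    simp only [Finset.mem_filter, Finset.mem_univ, true_and, Finset.mem_insert]
    constructor
    · intro h
      rcases Nat.lt_or_ge (i' : ℕ) (i : ℕ) with h' | h'
      · exact Or.inr (by omega)
      · exact Or.inl (Fin.ext (by omega))
    · rintro (rfl | h) <;> omega
  rw [hfil, Finset.sum_insert (by simp)]
  ring

lemma piStar_eq (p : Ω → ℝ) :
    piStar r e p = (fun ω => if 0 ≤ r ω then p ω else 0)
      + ∑ i : Fin K, coeff r e p i • (Pi.single (e i) 1 : Ω → ℝ) := rfl

lemma piStar_apply_of_pos (hre : ∀ i, r (e i) < 0) (p : Ω → ℝ) {ω : Ω} (hω : 0 ≤ r ω) :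
    piStar r e p ω = p ω := by
  rw [piStar_eq]
  simp only [Pi.add_apply, Finset.sum_apply, Pi.smul_apply, Pi.single_apply, smul_eq_mul]
  rw [if_pos hω, Finset.sum_eq_zero, add_zero]
  intro i _
  rw [if_neg, mul_zero]
  intro h
  rw [h] at hω
  exact absurd hω (not_le.mpr (hre i))

lemma piStar_apply_e (he_inj : Function.Injective e) (hre : ∀ i, r (e i) < 0)
    (p : Ω → ℝ) (i0 : Fin K) : piStar r e p (e i0) = coeff r e p i0 := by
  rw [piStar_eq]
  simp only [Pi.add_apply, Finset.sum_apply, Pi.smul_apply, Pi.single_apply, smul_eq_mul]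
  rw [if_neg (not_le.mpr (hre i0)), zero_add]
  rw [Finset.sum_eq_single i0]
  · simp
  · intro i _ hne
    rw [if_neg, mul_zero]
    exact fun h => hne (he_inj h.symm)
  · simp

lemma Lfun_piStar (he_inj : Function.Injective e) (hre : ∀ i, r (e i) < 0)
    (j : ℕ) (p : Ω → ℝ) :
    Lfun r e j (piStar r e p) = Lfun r e 0 p
      + ∑ i ∈ Finset.univ.filter (fun i : Fin K => (i : ℕ) + 1 ≤ j),
          coeff r e p i * r (e i) := by
  have h0 : Lfun r e 0 p = ∑ ω ∈ Finset.univ.filter (fun ω => 0 ≤ r ω), p ω * r ω := by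
    simp [Lfun]
  rw [Lfun, h0]
  congr 1
  · apply Finset.sum_congr rfl
    intro ω hω
    rw [piStar_apply_of_pos r e hre p (Finset.mem_filter.mp hω).2]
  · apply Finset.sum_congr rfl
    intro i _
    rw [piStar_apply_e r e he_inj hre p i]

lemma Lfun_piStar_zero (he_inj : Function.Injective e) (hre : ∀ i, r (e i) < 0)
    (p : Ω → ℝ) (hm1 : 1 ≤ kstar r e p) (hmK : kstar r e p ≤ K)
    {j : ℕ} (hj : kstar r e p ≤ j) :
    Lfun r e j (piStar r e p) = 0 := by
  set m := kstar r e p with hm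
  rw [Lfun_piStar r e he_inj hre j p]
  have hsum : ∑ i ∈ Finset.univ.filter (fun i : Fin K => (i : ℕ) + 1 ≤ j),
        coeff r e p i * r (e i)
      = ∑ i : Fin K, ((if (i : ℕ) + 1 ≤ m - 1 then p (e i) * r (e i) else 0)
          + (if (i : ℕ) + 1 = m then -(Lfun r e (m - 1) p) else 0)) := by
    rw [Finset.sum_filter]
    apply Finset.sum_congr rfl
    intro i _
    simp only [coeff, ← hm]
    rcases lt_trichotomy ((i : ℕ) + 1) m with h | h | h
    · rw [if_pos (show (i : ℕ) + 1 ≤ j by omega), if_pos h,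
        if_pos (show (i : ℕ) + 1 ≤ m - 1 by omega), if_neg (show ¬((i : ℕ) + 1 = m) by omega),
        add_zero]
    · rw [if_pos (show (i : ℕ) + 1 ≤ j by omega), if_neg (show ¬((i : ℕ) + 1 < m) by omega),
        if_pos h, if_neg (show ¬((i : ℕ) + 1 ≤ m - 1) by omega), if_pos h, zero_add,
        div_mul_cancel₀ _ (hre i).ne]
    · rw [if_neg (show ¬((i : ℕ) + 1 < m) by omega), if_neg (show ¬((i : ℕ) + 1 = m) by omega),
        if_neg (show ¬((i : ℕ) + 1 ≤ m - 1) by omega), if_neg (show ¬((i : ℕ) + 1 = m) by omega)]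
      simp
  rw [hsum, Finset.sum_add_distrib]
  have h1 : ∑ i : Fin K, (if (i : ℕ) + 1 ≤ m - 1 then p (e i) * r (e i) else 0)
      = Lfun r e (m - 1) p - Lfun r e 0 p := by
    rw [← Finset.sum_filter, Lfun_eq_base_add r e (m - 1) p]
    ring
  have h2 : ∑ i : Fin K, (if (i : ℕ) + 1 = m then -(Lfun r e (m - 1) p) else 0)
      = -(Lfun r e (m - 1) p) := by
    rw [Finset.sum_eq_single (⟨m - 1, by omega⟩ : Fin K)]
    · rw [if_pos (by simp; omega)]
    · intro i _ hne
      rw [if_neg]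
      intro h
      exact hne (Fin.ext (by simp; omega))
    · simp
  rw [h1, h2]
  ring

lemma Lfun_piStar_pred (he_inj : Function.Injective e) (hre : ∀ i, r (e i) < 0)
    (p : Ω → ℝ) :
    Lfun r e (kstar r e p - 1) (piStar r e p) = Lfun r e (kstar r e p - 1) p := by
  set m := kstar r e p with hm
  rw [Lfun_piStar r e he_inj hre (m - 1) p, Lfun_eq_base_add r e (m - 1) p]
  congr 1
  apply Finset.sum_congr rfl
  intro i hi
  simp only [Finset.mem_filter, Finset.mem_univ, true_and] at hi
  simp only [coeff, ← hm]
  rw [if_pos (show (i : ℕ) + 1 < m by omega)]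

lemma coeff_nonneg (hre : ∀ i, r (e i) < 0) (p : Ω → ℝ) (hp0 : ∀ ω, 0 ≤ p ω)
    (hLm1 : 0 ≤ Lfun r e (kstar r e p - 1) p) (i : Fin K) : 0 ≤ coeff r e p i := by
  unfold coeff
  split_ifs with h1 h2
  · exact hp0 _
  · exact div_nonneg_of_nonpos (by linarith) (hre i).le
  · exact le_refl 0

lemma coeff_le (p : Ω → ℝ) (hre : ∀ i, r (e i) < 0) (hp0 : ∀ ω, 0 ≤ p ω)
    (hLm : Lfun r e (kstar r e p) p ≤ 0) (i : Fin K) : coeff r e p i ≤ p (e i) := by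
  unfold coeff
  split_ifs with h1 h2
  · exact le_refl _
  · rw [div_le_iff_of_neg (hre i)]
    have hsucc := Lfun_succ_fin r e i p
    have hi : (i : ℕ) = kstar r e p - 1 := by omega
    rw [h2, hi] at hsucc
    linarith
  · exact hp0 _

end Aux

/-- each set `Ō(k)` is stable under the greedy splitting: if `p ∈ Ō(k)` then
the posteriors `q_I` and `q_J` of the greedy splitting at `p` (whenever their weights are
positive) again belong to `Ō(k)`. -/
theorem Obar_stable_under_greedy [Fintype Ω] [DecidableEq Ω] {K : ℕ}
    (r : Ω → ℝ) (e : Fin K → Ω)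
    (hK : 0 < K) (hplus : ∃ ω, 0 ≤ r ω)
    (he_inj : Function.Injective e)
    (he_range : ∀ ω, r ω < 0 ↔ ω ∈ Set.range e)
    (he_anti : Antitone fun i => r (e i))
    (k : ℕ) (hk1 : 1 ≤ k) (hkK : k ≤ K)
    (p : Ω → ℝ) (hp : p ∈ Obar r e k) :
    (0 < aI r e p → qI r e p ∈ Obar r e k) ∧
    (aI r e p < 1 → qJ r e p ∈ Obar r e k) := by
  obtain ⟨hpsimp, hLk1, hLk⟩ := hp
  obtain ⟨hp0, hp1⟩ := hpsimp
  have hre : ∀ i, r (e i) < 0 := fun i => (he_range (e i)).mpr ⟨i, rfl⟩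
  have hk_mem : k ∈ {n : ℕ | 1 ≤ n ∧ Lfun r e n p ≤ 0} := ⟨hk1, hLk⟩
  have hm_mem : kstar r e p ∈ {n : ℕ | 1 ≤ n ∧ Lfun r e n p ≤ 0} := Nat.sInf_mem ⟨k, hk_mem⟩
  have hm1 : 1 ≤ kstar r e p := hm_mem.1
  have hLm : Lfun r e (kstar r e p) p ≤ 0 := hm_mem.2
  have hmk : kstar r e p ≤ k := Nat.sInf_le hk_mem
  have hmK : kstar r e p ≤ K := le_trans hmk hkK
  have hLm1 : 0 ≤ Lfun r e (kstar r e p - 1) p :=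
    le_trans hLk1 (Lfun_anti r e p hp0 hre (by omega))
  have hπ_nonneg : ∀ ω, 0 ≤ piStar r e p ω := by
    intro ω
    by_cases hω : 0 ≤ r ω
    · rw [piStar_apply_of_pos r e hre p hω]; exact hp0 ω
    · obtain ⟨i, rfl⟩ := (he_range ω).mp (not_le.mp hω)
      rw [piStar_apply_e r e he_inj hre p i]
      exact coeff_nonneg r e hre p hp0 hLm1 i
  have hπ_le : ∀ ω, piStar r e p ω ≤ p ω := by
    intro ω
    by_cases hω : 0 ≤ r ω
    · rw [piStar_apply_of_pos r e hre p hω]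
    · obtain ⟨i, rfl⟩ := (he_range ω).mp (not_le.mp hω)
      rw [piStar_apply_e r e he_inj hre p i]
      exact coeff_le r e p hre hp0 hLm i
  have hπk : Lfun r e k (piStar r e p) = 0 :=
    Lfun_piStar_zero r e he_inj hre p hm1 hmK hmk
  have hπk1 : 0 ≤ Lfun r e (k - 1) (piStar r e p) := by
    rcases eq_or_lt_of_le hmk with h | h
    · rw [show k - 1 = kstar r e p - 1 by omega, Lfun_piStar_pred r e he_inj hre p]
      exact hLm1
    · rw [Lfun_piStar_zero r e he_inj hre p hm1 hmK (by omega : kstar r e p ≤ k - 1)]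
  have hπk1' : Lfun r e (k - 1) (piStar r e p) ≤ Lfun r e (k - 1) p := by
    rcases eq_or_lt_of_le hmk with h | h
    · rw [show k - 1 = kstar r e p - 1 by omega, Lfun_piStar_pred r e he_inj hre p]
    · rw [Lfun_piStar_zero r e he_inj hre p hm1 hmK (by omega : kstar r e p ≤ k - 1)]
      exact hLk1
  have hsum_sub : ∑ ω, (p - piStar r e p) ω = 1 - aI r e p := by
    simp only [Pi.sub_apply, Finset.sum_sub_distrib, hp1, aI]
  constructor
  · intro haI
    refine ⟨⟨fun ω => ?_, ?_⟩, ?_, ?_⟩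
    · simp only [qI, Pi.smul_apply, smul_eq_mul]
      exact mul_nonneg (inv_nonneg.mpr haI.le) (hπ_nonneg ω)
    · simp only [qI, Pi.smul_apply, smul_eq_mul, ← Finset.mul_sum]
      rw [show ∑ ω, piStar r e p ω = aI r e p from rfl, inv_mul_cancel₀ haI.ne']
    · rw [qI, Lfun_smul]
      exact mul_nonneg (inv_nonneg.mpr haI.le) hπk1
    · rw [qI, Lfun_smul, hπk, mul_zero]
  · intro haI
    have h1a : 0 < 1 - aI r e p := by linarith
    refine ⟨⟨fun ω => ?_, ?_⟩, ?_, ?_⟩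
    · simp only [qJ, Pi.smul_apply, smul_eq_mul, Pi.sub_apply]
      exact mul_nonneg (inv_nonneg.mpr h1a.le) (by linarith [hπ_le ω])
    · simp only [qJ, Pi.smul_apply, smul_eq_mul, ← Finset.mul_sum]
      rw [hsum_sub, inv_mul_cancel₀ h1a.ne']
    · rw [qJ, Lfun_smul, Lfun_sub]
      exact mul_nonneg (inv_nonneg.mpr h1a.le) (by linarith)
    · rw [qJ, Lfun_smul, Lfun_sub, hπk]
      exact mul_nonpos_of_nonneg_of_nonpos (inv_nonneg.mpr h1a.le) (by linarith)

end
end
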